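/- arXiv:math/0111140 — 4 statements merged into one kernel-verified Lean document; each statement's English description precedes it below -/
import Mathlib

section
/- Fix e ≥ 2, k, and 0 ≤ α ≤ e. Let λ, ν be partitions of length at most k. Then ν/λ is a disjoint union of m e-ribbons, each of whose heads is either in the first row of ν or lies directly below a cell of λ (i.e., λ →_{m:e} ν), if and only if λ⁺ →_{m:e+1} ν⁺. Moreover, in that case spin_e(ν/λ) = spin_{e+1}(ν⁺/λ⁺). -/
open Finset

/-- A partition: a weakly decreasing, eventually-zero sequence of naturals.
`parts i` is the `(i+1)`-st part (0-indexed). -/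
structure Partition' where
  parts : ℕ → ℕ
  antitone : ∀ ⦃i j : ℕ⦄, i ≤ j → parts j ≤ parts i
  eventually_zero : ∃ N, ∀ i, N ≤ i → parts i = 0

namespace Partition'

/-- The length of a partition: the number of nonzero parts. -/
noncomputable def length (l : Partition') : ℕ :=
  sInf {N | ∀ i, N ≤ i → l.parts i = 0}

/-- The size `|λ|` of a partition: the sum of its parts. -/
noncomputable def size (l : Partition') : ℕ :=
  ∑ i ∈ Finset.range l.length, l.parts i

/-- The beta-numbers of `l` with respect to `k` beads: `λ_i + k - i` for `i = 1, …, k`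
(here 0-indexed: bead for row `i+1` sits at `parts i + (k - 1 - i)`). -/
def betaSet (l : Partition') (k : ℕ) : Finset ℕ :=
  (Finset.range k).image fun i => l.parts i + (k - 1 - i)

/-- Dominance order: `l ⊵ m`. -/
def Dominates (l m : Partition') : Prop :=
  ∀ j, ∑ i ∈ Finset.range j, m.parts i ≤ ∑ i ∈ Finset.range j, l.parts i

/-- Inserting an empty runner before runner `α` into an `e`-abacus: a bead at
position `m*e + r` moves to `m*(e+1) + r` if `r < α` and to `m*(e+1) + r + 1` otherwise. -/
def insRunner (e α p : ℕ) : ℕ :=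
  (p / e) * (e + 1) + p % e + (if p % e < α then 0 else 1)

/-- `lp` is the partition `λ⁺` obtained from `l` by inserting an empty runner at
position `α` into its `e`-abacus with `k` beads. -/
def IsPlus (e α k : ℕ) (l lp : Partition') : Prop :=
  lp.length ≤ k ∧ lp.betaSet k = (l.betaSet k).image (insRunner e α)

/-- A partition is `d`-regular if no `d` of its nonzero parts are equal. -/
def Regular (d : ℕ) (l : Partition') : Prop :=
  ¬ ∃ i, l.parts i ≠ 0 ∧ l.parts (i + (d - 1)) = l.parts i

/-- The Young diagram of a partition, as a set of (row, column) cells, 0-indexed. -/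
def cells (l : Partition') : Set (ℕ × ℕ) := {x | x.2 < l.parts x.1}

/-- `c 0, c 1, …, c (e-1)` are the successive cells of a ribbon: each next cell is
directly below, or directly to the left of, the previous cell. -/
def RibbonSteps (e : ℕ) (c : ℕ → ℕ × ℕ) : Prop :=
  ∀ i, i + 1 < e →
    (c (i + 1) = ((c i).1 + 1, (c i).2)) ∨
    ((c i).2 = (c (i + 1)).2 + 1 ∧ (c (i + 1)).1 = (c i).1)

/-- `R` is an `e`-ribbon with cell enumeration `c` (head `c 0`). -/
def IsRibbonC (e : ℕ) (c : ℕ → ℕ × ℕ) (R : Set (ℕ × ℕ)) : Prop :=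
  R = c '' (Set.Iio e) ∧ Set.InjOn c (Set.Iio e) ∧ RibbonSteps e c

/-- The spin of an `e`-ribbon: the number of vertical steps. -/
def spinOf (e : ℕ) (c : ℕ → ℕ × ℕ) : ℕ :=
  ((Finset.range (e - 1)).filter fun i => (c (i + 1)).1 = (c i).1 + 1).card

/-- The head of the ribbon lies in row 1 or directly below a cell of `l`. -/
def HeadOK (l : Partition') (c : ℕ → ℕ × ℕ) : Prop :=
  (c 0).1 = 0 ∨ ((c 0).1 - 1, (c 0).2) ∈ cells l

/-- `l` is obtained from `n` by removing a single rim hook (ribbon) of length `e`. -/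
def RemoveRibbon (e : ℕ) (n l : Partition') : Prop :=
  cells l ⊆ cells n ∧ ∃ c, IsRibbonC e c (cells n \ cells l)

/-- `κ` is the `e`-core of `l`: obtained by repeatedly removing `e`-rim-hooks,
and no further `e`-rim-hook can be removed. -/
def IsECoreOf (e : ℕ) (κ l : Partition') : Prop :=
  Relation.ReflTransGen (RemoveRibbon e) l κ ∧ ¬ ∃ m, RemoveRibbon e κ m

/-- `l` has `e`-weight `w`: `|l| = |e-core of l| + w * e`. -/
def EWeight (e : ℕ) (l : Partition') (w : ℕ) : Prop :=
  ∃ κ, IsECoreOf e κ l ∧ l.size = κ.size + w * e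

/-- `λ →_{m:e} ν` with total spin `s`: `[ν] \ [λ]` is a disjoint union of `m`
`e`-ribbons, each of whose heads lies in row 1 or directly below a cell of `λ`,
the sum of whose spins is `s`. -/
def HAddSpin (e m s : ℕ) (l n : Partition') : Prop :=
  cells l ⊆ cells n ∧
  ∃ (R : Fin m → Set (ℕ × ℕ)) (c : Fin m → ℕ → ℕ × ℕ),
    ((cells n \ cells l) = ⋃ i, R i) ∧
    (Pairwise fun i j => Disjoint (R i) (R j)) ∧
    (∀ i, IsRibbonC e (c i) (R i) ∧ HeadOK l (c i)) ∧
    s = ∑ i, spinOf e (c i)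

/-- `λ →_{m:e} ν`. -/
def HAdd (e m : ℕ) (l n : Partition') : Prop := ∃ s, HAddSpin e m s l n

/-- `x` is an addable node of `l`. -/
def Addable (l : Partition') (x : ℕ × ℕ) : Prop :=
  x ∉ cells l ∧ ∃ n : Partition', cells n = insert x (cells l)

/-- `x` is a removable node of `l`. -/
def Removable (l : Partition') (x : ℕ × ℕ) : Prop :=
  x ∈ cells l ∧ ∃ n : Partition', cells n = cells l \ {x}

/-- The `e`-residue of a node `(c,d)`: `d - c mod e`. -/
def res (e : ℕ) (x : ℕ × ℕ) : ZMod e := (x.2 : ZMod e) - (x.1 : ZMod e)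

/-- `N_i(λ,ν) = #{addable i-nodes of λ above x} - #{removable i-nodes of λ above x}`,
where `i = res e x` and `y` is above `x` iff `y.1 < x.1`. -/
noncomputable def Nnum (e : ℕ) (l : Partition') (x : ℕ × ℕ) : ℤ :=
  ({y | Addable l y ∧ res e y = res e x ∧ y.1 < x.1}.ncard : ℤ) -
  ({y | Removable l y ∧ res e y = res e x ∧ y.1 < x.1}.ncard : ℤ)

end Partition'

namespace Statement12

open Partition' Finset

/-- Number of elements of `B` above `p`. -/
def absG (B : Finset ℕ) (p : ℕ) : ℕ := (B.filter fun x => p < x).card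

def betaFun (l : Partition') (k i : ℕ) : ℕ := l.parts i + (k - 1 - i)

lemma mem_cells {l : Partition'} {x : ℕ × ℕ} : x ∈ cells l ↔ x.2 < l.parts x.1 := Iff.rfl

lemma parts_eq_zero_of_length_le (l : Partition') {i : ℕ} (h : l.length ≤ i) :
    l.parts i = 0 := by
  have hne : {N | ∀ j, N ≤ j → l.parts j = 0}.Nonempty := l.eventually_zero
  have hmem : l.length ∈ {N | ∀ j, N ≤ j → l.parts j = 0} := Nat.sInf_mem hne
  exact hmem i h

lemma length_le_of_mem {l : Partition'} {N : ℕ} (h : ∀ j, N ≤ j → l.parts j = 0) :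
    l.length ≤ N := Nat.sInf_le h

lemma row_lt_of_mem_cells {l : Partition'} {x : ℕ × ℕ} (hx : x ∈ cells l) :
    x.1 < l.length := by
  by_contra h
  have h0 := parts_eq_zero_of_length_le l (not_lt.1 h)
  rw [mem_cells, h0] at hx; omega

lemma length_le_of_parts_le {l n : Partition'} (h : ∀ i, l.parts i ≤ n.parts i) :
    l.length ≤ n.length :=
  length_le_of_mem fun j hj => by
    have := parts_eq_zero_of_length_le n hj
    have := h j; omega

lemma beta_anti (l : Partition') (k : ℕ) {i j : ℕ} (hij : i ≤ j) (hj : j < k) :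
    betaFun l k j ≤ betaFun l k i := by
  have := l.antitone hij
  unfold betaFun; omega

lemma beta_strict (l : Partition') (k : ℕ) {i j : ℕ} (hij : i < j) (hj : j < k) :
    betaFun l k j < betaFun l k i := by
  have := l.antitone (le_of_lt hij)
  unfold betaFun; omega

lemma beta_injOn (l : Partition') (k : ℕ) :
    Set.InjOn (betaFun l k) (Finset.range k) := by
  intro a ha b hb hab
  simp only [coe_range, Set.mem_Iio] at ha hb
  rcases lt_trichotomy a b with h | h | h
  · exact absurd hab (Nat.ne_of_gt (beta_strict l k h hb))
  · exact h
  · exact absurd hab (Nat.ne_of_lt (beta_strict l k h ha))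

lemma betaSet_eq (l : Partition') (k : ℕ) :
    betaSet l k = (Finset.range k).image (betaFun l k) := rfl

lemma card_betaSet (l : Partition') (k : ℕ) : (betaSet l k).card = k := by
  rw [betaSet_eq, Finset.card_image_of_injOn (beta_injOn l k), Finset.card_range]

lemma absG_betaSet (l : Partition') (k p : ℕ) :
    absG (betaSet l k) p = ((Finset.range k).filter fun i => p < betaFun l k i).card := by
  rw [absG, betaSet_eq, Finset.filter_image,
    Finset.card_image_of_injOn ((beta_injOn l k).mono (by
      intro x hx; simp only [coe_filter, Set.mem_setOf_eq, Finset.mem_coe, coe_range,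
        Set.mem_Iio] at hx ⊢
      exact Finset.mem_range.mp hx.1))]

lemma lt_absG_iff {l : Partition'} {k i p : ℕ} (hi : i < k) :
    i < absG (betaSet l k) p ↔ p < betaFun l k i := by
  rw [absG_betaSet]
  constructor
  · intro h
    by_contra hp
    push_neg at hp
    have hsub : ((Finset.range k).filter fun t => p < betaFun l k t) ⊆ Finset.range i := by
      intro t ht
      simp only [Finset.mem_filter, Finset.mem_range] at ht ⊢
      by_contra htt
      push_neg at htt
      have h1 : betaFun l k t ≤ betaFun l k i := beta_anti l k htt ht.1
      have h2 : p < betaFun l k t := ht.2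
      omega
    have := Finset.card_le_card hsub
    rw [Finset.card_range] at this; omega
  · intro h
    have hsub : Finset.range (i + 1) ⊆ (Finset.range k).filter fun t => p < betaFun l k t := by
      intro t ht
      simp only [Finset.mem_range] at ht
      simp only [Finset.mem_filter, Finset.mem_range]
      exact ⟨by omega, lt_of_lt_of_le h (beta_anti l k (by omega) hi)⟩
    have := Finset.card_le_card hsub
    rw [Finset.card_range] at this; omega

lemma mem_cells_iff_absG {l : Partition'} {k i j : ℕ} (hi : i < k) :
    (i, j) ∈ cells l ↔ i < absG (betaSet l k) (j + (k - 1 - i)) := by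
  have hrfl : (i, j) ∈ cells l ↔ j < l.parts i := Iff.rfl
  rw [hrfl, lt_absG_iff hi, betaFun]
  constructor <;> intro h <;> omega

lemma parts_le_of_cells_subset {l n : Partition'} (h : cells l ⊆ cells n) (i : ℕ) :
    l.parts i ≤ n.parts i := by
  by_contra hc
  push_neg at hc
  have h1 : (i, n.parts i) ∈ cells l := hc
  have h2 : n.parts i < n.parts i := h h1
  exact absurd h2 (lt_irrefl _)

lemma cells_subset_of_parts_le {l n : Partition'} (h : ∀ i, l.parts i ≤ n.parts i) :
    cells l ⊆ cells n := by
  intro x hx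
  rw [mem_cells] at hx ⊢
  exact lt_of_lt_of_le hx (h x.1)

lemma cells_eq_of_betaSet_eq {l n : Partition'} {k : ℕ} (hl : l.length ≤ k)
    (hn : n.length ≤ k) (h : betaSet l k = betaSet n k) : cells l = cells n := by
  ext ⟨i, j⟩
  by_cases hi : i < k
  · rw [mem_cells_iff_absG (k := k) hi, mem_cells_iff_absG (k := k) hi, h]
  · have h1 := parts_eq_zero_of_length_le l (le_trans hl (not_lt.1 hi))
    have h2 := parts_eq_zero_of_length_le n (le_trans hn (not_lt.1 hi))
    rw [mem_cells, mem_cells]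
    simp only [h1, h2]

lemma betaSet_eq_of_cells_eq {l n : Partition'} (k : ℕ) (h : cells l = cells n) :
    betaSet l k = betaSet n k := by
  have hp : ∀ i, l.parts i = n.parts i := fun i =>
    le_antisymm (parts_le_of_cells_subset (le_of_eq h) i)
      (parts_le_of_cells_subset (le_of_eq h.symm) i)
  rw [betaSet_eq, betaSet_eq]
  apply Finset.image_congr
  intro x _
  rw [betaFun, betaFun, hp]

lemma cells_finite (l : Partition') : (cells l).Finite := by
  apply Set.Finite.subset (Set.Finite.prod (Set.finite_Iio l.length)
    (Set.finite_Iio (l.parts 0 + 1)))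
  intro x hx
  constructor
  · exact row_lt_of_mem_cells hx
  · have h1 : x.2 < l.parts x.1 := hx
    have h2 := l.antitone (Nat.zero_le x.1)
    simp only [Set.mem_Iio]; omega

end Statement12
namespace Statement12

open Partition' Finset

section OfBeta

variable {B : Finset ℕ} {k : ℕ}

/-- the `i`-th smallest element of `B` (ascending). -/
noncomputable def nthAsc (B : Finset ℕ) (k : ℕ) (hB : B.card = k) (i : ℕ) (hi : i < k) : ℕ :=
  (B.orderIsoOfFin hB ⟨i, hi⟩ : ℕ)

lemma nthAsc_mem (hB : B.card = k) (i : ℕ) (hi : i < k) : nthAsc B k hB i hi ∈ B :=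
  (B.orderIsoOfFin hB ⟨i, hi⟩).2

lemma nthAsc_strictMono (hB : B.card = k) {i j : ℕ} (hi : i < k) (hj : j < k) (hij : i < j) :
    nthAsc B k hB i hi < nthAsc B k hB j hj := by
  have := (B.orderIsoOfFin hB).strictMono (show (⟨i, hi⟩ : Fin k) < ⟨j, hj⟩ from hij)
  exact this

lemma nthAsc_gap (hB : B.card = k) :
    ∀ (b : ℕ) (hb : b < k) (a : ℕ) (ha : a ≤ b),
      nthAsc B k hB a (lt_of_le_of_lt ha hb) + (b - a) ≤ nthAsc B k hB b hb := by
  intro b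
  induction b with
  | zero => intro hb a ha; interval_cases a; simp
  | succ b ih =>
    intro hb a ha
    rcases Nat.eq_or_lt_of_le ha with h | h
    · subst h; simp
    · have hb' : b < k := by omega
      have h1 := ih hb' a (by omega)
      have h2 := nthAsc_strictMono hB hb' hb (Nat.lt_succ_self b)
      omega

lemma nthAsc_ge (hB : B.card = k) (i : ℕ) (hi : i < k) : i ≤ nthAsc B k hB i hi := by
  have := nthAsc_gap hB i hi 0 (Nat.zero_le i)
  omega

/-- The partition whose beta-set (with `k` beads) is `B`. -/
noncomputable def ofBeta (B : Finset ℕ) (k : ℕ) (hB : B.card = k) : Partition' where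
  parts := fun i => if hi : i < k then nthAsc B k hB (k - 1 - i) (by omega) - (k - 1 - i) else 0
  antitone := by
    intro i j hij
    by_cases hj : j < k
    · have hi : i < k := by omega
      rw [dif_pos hi, dif_pos hj]
      have := nthAsc_gap hB (k - 1 - i) (by omega) (k - 1 - j) (by omega)
      omega
    · rw [dif_neg hj]; omega
  eventually_zero := ⟨k, fun i hi => dif_neg (by omega)⟩

lemma ofBeta_parts (hB : B.card = k) (i : ℕ) (hi : i < k) :
    (ofBeta B k hB).parts i = nthAsc B k hB (k - 1 - i) (by omega) - (k - 1 - i) := dif_pos hi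

lemma ofBeta_length (hB : B.card = k) : (ofBeta B k hB).length ≤ k :=
  length_le_of_mem fun j hj => dif_neg (by omega)

lemma ofBeta_betaSet (hB : B.card = k) : betaSet (ofBeta B k hB) k = B := by
  apply Finset.eq_of_subset_of_card_le
  · intro x hx
    rw [betaSet_eq, Finset.mem_image] at hx
    obtain ⟨i, hi, rfl⟩ := hx
    rw [Finset.mem_range] at hi
    have hge := nthAsc_ge hB (k - 1 - i) (by omega)
    rw [betaFun, ofBeta_parts hB i hi]
    have : nthAsc B k hB (k - 1 - i) (by omega) - (k - 1 - i) + (k - 1 - i)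
        = nthAsc B k hB (k - 1 - i) (by omega) := by omega
    rw [this]
    exact nthAsc_mem hB _ _
  · rw [hB, card_betaSet]

end OfBeta

section Counting

variable {B C : Finset ℕ} {p q b e x : ℕ}

lemma filter_ge_zero (B : Finset ℕ) : (B.filter fun x => 0 ≤ x) = B := by
  apply Finset.filter_true_of_mem; intro x _; omega

lemma filter_ge_eq_pred (B : Finset ℕ) (hp : 1 ≤ p) :
    (B.filter fun x => p ≤ x) = B.filter fun x => p - 1 < x := by
  apply Finset.filter_congr; intro x _; constructor <;> intro h <;> omega

lemma card_filter_ge (B : Finset ℕ) (p : ℕ) :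
    (B.filter fun x => p ≤ x).card = absG B p + (if p ∈ B then 1 else 0) := by
  classical
  by_cases h : p ∈ B
  · rw [if_pos h]
    have : (B.filter fun x => p ≤ x) = insert p (B.filter fun x => p < x) := by
      ext x
      simp only [Finset.mem_filter, Finset.mem_insert]
      constructor
      · rintro ⟨hxB, hx⟩
        rcases Nat.eq_or_lt_of_le hx with h' | h'
        · exact Or.inl h'.symm
        · exact Or.inr ⟨hxB, h'⟩
      · rintro (rfl | ⟨hxB, hx⟩)
        · exact ⟨h, le_refl _⟩
        · exact ⟨hxB, le_of_lt hx⟩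
    rw [this, Finset.card_insert_of_notMem (by simp)]
    rfl
  · rw [if_neg h, add_zero]
    apply congrArg
    apply Finset.filter_congr
    intro x hx
    constructor
    · intro h'
      by_cases hpx : x = p
      · subst hpx; exact absurd hx h
      · omega
    · intro h'; omega

lemma absG_succ (B : Finset ℕ) (x : ℕ) :
    absG B x = absG B (x + 1) + (if x + 1 ∈ B then 1 else 0) := by
  have h1 := card_filter_ge B (x + 1)
  rw [filter_ge_eq_pred B (by omega)] at h1
  simpa [absG] using h1

lemma card_eq_absG_zero (B : Finset ℕ) :
    B.card = absG B 0 + (if 0 ∈ B then 1 else 0) := by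
  have h1 := card_filter_ge B 0
  rw [filter_ge_zero] at h1
  exact h1

lemma absG_le_card (B : Finset ℕ) (p : ℕ) : absG B p ≤ B.card := Finset.card_filter_le _ _

lemma absG_ge (B : Finset ℕ) (p : ℕ) : B.card ≤ absG B p + (p + 1) := by
  classical
  have hsplit : B.card = absG B p + (B.filter fun x => x ≤ p).card := by
    rw [absG, ← Finset.card_union_of_disjoint]
    · apply congrArg
      ext x
      simp only [Finset.mem_union, Finset.mem_filter]
      constructor
      · intro hx
        by_cases h : p < x
        · exact Or.inl ⟨hx, h⟩
        · exact Or.inr ⟨hx, by omega⟩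
      · rintro (⟨hx, _⟩ | ⟨hx, _⟩) <;> exact hx
    · rw [Finset.disjoint_filter]
      intro x _ hx
      omega
  have hle : (B.filter fun x => x ≤ p).card ≤ p + 1 := by
    have : (B.filter fun x => x ≤ p) ⊆ Finset.range (p + 1) := by
      intro x hx
      rw [Finset.mem_filter] at hx
      rw [Finset.mem_range]
      omega
    have := Finset.card_le_card this
    simpa using this
  omega

/-- moving a bead from `b` to `b+e`. -/
def moveF (e b : ℕ) (C : Finset ℕ) : Finset ℕ := insert (b + e) (C.erase b)

lemma absG_insert (h : x ∉ B) (p : ℕ) :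
    absG (insert x B) p = absG B p + (if p < x then 1 else 0) := by
  classical
  rw [absG, Finset.filter_insert]
  split_ifs with h'
  · rw [Finset.card_insert_of_notMem (by simp [h])]; rfl
  · rfl

lemma absG_erase_mem (h : b ∈ B) (p : ℕ) :
    absG B p = absG (B.erase b) p + (if p < b then 1 else 0) := by
  classical
  have : B = insert b (B.erase b) := (Finset.insert_erase h).symm
  conv_lhs => rw [this]
  rw [absG_insert (Finset.notMem_erase b B) p]

lemma card_moveF (he : 1 ≤ e) (hb : b ∈ C) (hbe : b + e ∉ C) :
    (moveF e b C).card = C.card := by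
  rw [moveF, Finset.card_insert_of_notMem (by
    simp only [Finset.mem_erase]
    rintro ⟨-, h⟩
    exact hbe h), Finset.card_erase_of_mem hb]
  have := Finset.card_pos.mpr ⟨b, hb⟩
  omega

lemma absG_moveF (he : 1 ≤ e) (hb : b ∈ C) (hbe : b + e ∉ C) (p : ℕ) :
    absG (moveF e b C) p = absG C p + (if b ≤ p ∧ p < b + e then 1 else 0) := by
  classical
  rw [moveF, absG_insert (by simp only [Finset.mem_erase]; rintro ⟨-, h⟩; exact hbe h) p]
  have h2 := absG_erase_mem hb p
  split_ifs at * <;> omega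

lemma absG_moveF_above (he : 1 ≤ e) (hb : b ∈ C) (hbe : b + e ∉ C) :
    absG (moveF e b C) (b + e) = absG C (b + e) := by
  rw [absG_moveF he hb hbe]
  simp

/-- Recovering a single bead move from the counting function. -/
lemma recover (he : 1 ≤ e) (hcard : B.card = C.card)
    (h : ∀ p, absG C p = absG B p + (if q ≤ p ∧ p < q + e then 1 else 0)) :
    q ∈ B ∧ q + e ∉ B ∧ C = moveF e q B := by
  classical
  have key : ∀ x, ((if x ∈ C then 1 else 0) + (if q ≤ x ∧ x < q + e then 1 else 0) : ℕ)
      = (if x ∈ B then 1 else 0) + (if q < x ∧ x ≤ q + e then 1 else 0) := by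
    intro x
    cases x with
    | zero =>
      have hC0 := card_eq_absG_zero C
      have hB0 := card_eq_absG_zero B
      have h0 := h 0
      split_ifs at * <;> omega
    | succ x =>
      have hC1 := absG_succ C x
      have hB1 := absG_succ B x
      have hx := h x
      have hx1 := h (x + 1)
      split_ifs at * <;> omega
  have hqB : q ∈ B ∧ q ∉ C := by
    have kq := key q
    have c1 : q ≤ q ∧ q < q + e := ⟨le_refl _, by omega⟩
    have c2 : ¬(q < q ∧ q ≤ q + e) := by omega
    rw [if_pos c1, if_neg c2] at kq
    by_cases h1 : q ∈ B <;> by_cases h2 : q ∈ C <;> simp [h1, h2] at kq ⊢ <;> omega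
  have hqeC : q + e ∈ C ∧ q + e ∉ B := by
    have kq := key (q + e)
    have c1 : ¬(q ≤ q + e ∧ q + e < q + e) := by omega
    have c2 : q < q + e ∧ q + e ≤ q + e := ⟨by omega, le_refl _⟩
    rw [if_neg c1, if_pos c2] at kq
    by_cases h1 : q + e ∈ B <;> by_cases h2 : q + e ∈ C <;> simp [h1, h2] at kq ⊢ <;> omega
  refine ⟨hqB.1, hqeC.2, ?_⟩
  ext x
  by_cases hx1 : x = q
  · rw [hx1]
    have hm : q ∉ moveF e q B := by
      simp only [moveF, Finset.mem_insert, Finset.mem_erase]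
      rintro (h' | ⟨h', -⟩) <;> omega
    simp [hqB.2, hm]
  · by_cases hx2 : x = q + e
    · rw [hx2]
      have hm : q + e ∈ moveF e q B := by simp [moveF]
      simp [hm, hqeC.1]
    · have kx := key x
      have c1 : (q ≤ x ∧ x < q + e) ↔ (q < x ∧ x ≤ q + e) := by omega
      simp only [moveF, Finset.mem_insert, Finset.mem_erase]
      by_cases h1 : x ∈ B <;> by_cases h2 : x ∈ C <;>
        simp only [h1, h2, if_true, if_false] at kx <;>
        simp [hx1, hx2, h1, h2] <;> split_ifs at kx <;> omega

end Counting

end Statement12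
namespace Statement12

open Partition' Finset

lemma absG_split (B : Finset ℕ) (p : ℕ) :
    B.card = absG B p + (B.filter fun x => x ≤ p).card := by
  classical
  rw [absG, ← Finset.card_union_of_disjoint (by
    rw [Finset.disjoint_filter]
    intro x _ hx
    omega)]
  apply congrArg
  ext x
  simp only [Finset.mem_union, Finset.mem_filter]
  constructor
  · intro hx
    by_cases h : p < x
    · exact Or.inl ⟨hx, h⟩
    · exact Or.inr ⟨hx, by omega⟩
  · rintro (⟨hx, _⟩ | ⟨hx, _⟩) <;> exact hx

lemma absG_ge' {B : Finset ℕ} {y p : ℕ} (hy : y ∉ B) (hyp : y ≤ p) :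
    B.card ≤ absG B p + p := by
  classical
  have hsplit := absG_split B p
  have hle : (B.filter fun x => x ≤ p).card ≤ p := by
    have hsub : (B.filter fun x => x ≤ p) ⊆ (Finset.range (p + 1)).erase y := by
      intro x hx
      rw [Finset.mem_filter] at hx
      rw [Finset.mem_erase, Finset.mem_range]
      exact ⟨fun h => hy (h ▸ hx.1), by omega⟩
    have := Finset.card_le_card hsub
    rw [Finset.card_erase_of_mem (by rw [Finset.mem_range]; omega), Finset.card_range] at this
    omega
  omega

/-- The canonical enumeration of the ribbon added by moving a bead up to position `t+1`. -/
def ribbonC (D : Finset ℕ) (k t : ℕ) : ℕ → ℕ × ℕ :=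
  fun j => (absG D (t - j) - 1, (t - j) + absG D (t - j) - k)

section SingleRibbon

variable {k e b : ℕ} {u n : Partition'}

lemma move_to_ribbon (he : 1 ≤ e) (hu : u.length ≤ k) (hn : n.length ≤ k)
    (hb : b ∈ betaSet u k) (hbe : b + e ∉ betaSet u k)
    (hBn : betaSet n k = moveF e b (betaSet u k)) :
    cells u ⊆ cells n ∧
      IsRibbonC e (ribbonC (betaSet n k) k (b + e - 1)) (cells n \ cells u) ∧
      spinOf e (ribbonC (betaSet n k) k (b + e - 1))
        = ((betaSet u k).filter fun x => b < x ∧ x < b + e).card ∧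
      ∀ l : Partition', absG (betaSet n k) (b + e) ≤ absG (betaSet l k) (b + e) →
        HeadOK l (ribbonC (betaSet n k) k (b + e - 1)) := by
  classical
  set D := betaSet n k with hD
  set t := b + e - 1 with ht
  have habs : ∀ p, absG D p
      = absG (betaSet u k) p + (if b ≤ p ∧ p < b + e then 1 else 0) := by
    intro p; rw [hBn]; exact absG_moveF he hb hbe p
  have hcard : (betaSet u k).card = k := card_betaSet u k
  have hcardD : D.card = k := card_betaSet n k
  have hbeD : b + e ∈ D := by rw [hBn]; exact Finset.mem_insert_self _ _
  have hbD : b ∉ D := by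
    rw [hBn]
    simp only [moveF, Finset.mem_insert, Finset.mem_erase]
    rintro (h | ⟨h, -⟩) <;> omega
  have hg1 : ∀ p, p < b + e → 1 ≤ absG D p := by
    intro p hp
    exact Finset.card_pos.mpr ⟨b + e, Finset.mem_filter.mpr ⟨hbeD, hp⟩⟩
  have hgk : ∀ p, absG D p ≤ k := fun p => le_trans (absG_le_card _ _) (le_of_eq hcardD)
  have hg2 : ∀ p, b ≤ p → k ≤ absG D p + p := by
    intro p hp
    have := absG_ge' hbD hp
    omega
  -- membership facts for the candidate cells
  have hcell : ∀ p, b ≤ p → p < b + e →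
      ((absG D p - 1, p + absG D p - k) ∈ cells n ∧
       (absG D p - 1, p + absG D p - k) ∉ cells u ∧
       (p + absG D p - k) + (k - 1 - (absG D p - 1)) = p) := by
    intro p hp1 hp2
    have g1 := hg1 p hp2
    have g2 := hg2 p hp1
    have g3 := hgk p
    have hrowk : absG D p - 1 < k := by omega
    have hpos : (p + absG D p - k) + (k - 1 - (absG D p - 1)) = p := by omega
    refine ⟨?_, ?_, hpos⟩
    · rw [mem_cells_iff_absG hrowk, hpos, ← hD]
      omega
    · rw [mem_cells_iff_absG hrowk, hpos]
      have := habs p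
      rw [if_pos ⟨hp1, hp2⟩] at this
      omega
  have hsub : cells u ⊆ cells n := by
    rintro ⟨i, j⟩ hx
    have hik : i < k := lt_of_lt_of_le (row_lt_of_mem_cells hx) hu
    rw [mem_cells_iff_absG hik] at hx ⊢
    have := habs (j + (k - 1 - i))
    rw [← hD]
    split_ifs at this <;> omega
  -- image identification
  have himg : cells n \ cells u = ribbonC D k t '' Set.Iio e := by
    ext x
    constructor
    · rintro ⟨hxn, hxu⟩
      obtain ⟨i, j⟩ := x
      have hik : i < k := lt_of_lt_of_le (row_lt_of_mem_cells hxn) hn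
      rw [mem_cells_iff_absG hik] at hxn hxu
      rw [← hD] at hxn
      have hχ := habs (j + (k - 1 - i))
      have hp1 : b ≤ j + (k - 1 - i) ∧ j + (k - 1 - i) < b + e := by
        by_contra hcon
        rw [if_neg hcon] at hχ
        omega
      refine ⟨t - (j + (k - 1 - i)), by simp only [Set.mem_Iio]; omega, ?_⟩
      have hidx : t - (t - (j + (k - 1 - i))) = j + (k - 1 - i) := by omega
      rw [if_pos hp1] at hχ
      have hrow : i = absG D (j + (k - 1 - i)) - 1 := by omega
      show ribbonC D k t _ = (i, j)
      simp only [ribbonC]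
      rw [hidx]
      have : (j + (k - 1 - i)) + absG D (j + (k - 1 - i)) - k = j := by omega
      rw [this, ← hrow]
    · rintro ⟨j, hj, rfl⟩
      simp only [Set.mem_Iio] at hj
      have hp1 : b ≤ t - j := by omega
      have hp2 : t - j < b + e := by omega
      have := hcell (t - j) hp1 hp2
      exact ⟨this.1, this.2.1⟩
  -- injectivity
  have hinj : Set.InjOn (ribbonC D k t) (Set.Iio e) := by
    intro x hx y hy hxy
    simp only [Set.mem_Iio] at hx hy
    have h1 := (hcell (t - x) (by omega) (by omega)).2.2
    have h2 := (hcell (t - y) (by omega) (by omega)).2.2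
    simp only [ribbonC, Prod.mk.injEq] at hxy
    obtain ⟨e2, e1⟩ := hxy
    omega
  -- steps
  have hstepmem : ∀ i, i + 1 < e → absG D (t - i - 1) =
      absG D (t - i) + (if t - i ∈ D then 1 else 0) := by
    intro i hi
    have := absG_succ D (t - i - 1)
    have hti : t - i - 1 + 1 = t - i := by omega
    rw [hti] at this
    exact this
  have hsteps : RibbonSteps e (ribbonC D k t) := by
    intro i hi
    have hts : t - (i + 1) = t - i - 1 := by omega
    have hmm := hstepmem i hi
    have g1 := hg1 (t - i) (by omega)
    have g1' := hg1 (t - i - 1) (by omega)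
    have g2 := hg2 (t - i - 1) (by omega)
    have g3 := hgk (t - i)
    have g3' := hgk (t - i - 1)
    by_cases hmem : t - i ∈ D
    · left
      rw [if_pos hmem] at hmm
      simp only [ribbonC, hts, Prod.mk.injEq]
      omega
    · right
      rw [if_neg hmem] at hmm
      simp only [ribbonC, hts]
      omega
  -- spin
  have hspin : spinOf e (ribbonC D k t)
      = ((betaSet u k).filter fun x => b < x ∧ x < b + e).card := by
    rw [spinOf]
    have hcongr : (Finset.range (e - 1)).filter
          (fun i => (ribbonC D k t (i + 1)).1 = (ribbonC D k t i).1 + 1)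
        = (Finset.range (e - 1)).filter (fun i => t - i ∈ D) := by
      apply Finset.filter_congr
      intro i hi
      rw [Finset.mem_range] at hi
      have hie : i + 1 < e := by omega
      have hts : t - (i + 1) = t - i - 1 := by omega
      have hmm := hstepmem i hie
      have g1 := hg1 (t - i) (by omega)
      have g3 := hgk (t - i)
      constructor
      · intro hdown
        simp only [ribbonC, hts] at hdown
        by_contra hmem
        rw [if_neg hmem] at hmm
        omega
      · intro hmem
        rw [if_pos hmem] at hmm
        simp only [ribbonC, hts]
        omega
    rw [hcongr]
    have hDu : (D.filter fun x => b < x ∧ x < b + e)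
        = (betaSet u k).filter fun x => b < x ∧ x < b + e := by
      ext x
      simp only [Finset.mem_filter, hBn, moveF, Finset.mem_insert, Finset.mem_erase]
      constructor
      · rintro ⟨h1 | ⟨h1, h2⟩, h3⟩
        · omega
        · exact ⟨h2, h3⟩
      · rintro ⟨h1, h2⟩
        exact ⟨Or.inr ⟨by omega, h1⟩, h2⟩
    rw [← hDu]
    apply Finset.card_nbij' (fun i => t - i) (fun x => t - x)
    · intro a ha
      beta_reduce
      rw [Finset.mem_coe, Finset.mem_filter, Finset.mem_range] at ha
      rw [Finset.mem_coe, Finset.mem_filter]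
      exact ⟨ha.2, by omega, by omega⟩
    · intro x hx
      beta_reduce
      rw [Finset.mem_coe, Finset.mem_filter] at hx
      rw [Finset.mem_coe, Finset.mem_filter, Finset.mem_range]
      refine ⟨by omega, ?_⟩
      have hx' : t - (t - x) = x := by omega
      rw [hx']
      exact hx.1
    · intro a ha
      beta_reduce
      rw [Finset.mem_coe, Finset.mem_filter, Finset.mem_range] at ha
      omega
    · intro x hx
      beta_reduce
      rw [Finset.mem_coe, Finset.mem_filter] at hx
      omega
  refine ⟨hsub, ⟨himg, hinj, hsteps⟩, hspin, ?_⟩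
  -- head condition
  intro l hl
  have htop : absG D t = absG D (b + e) + 1 := by
    have := absG_succ D t
    have ht1 : t + 1 = b + e := by omega
    rw [ht1, if_pos hbeD] at this
    omega
  by_cases h0 : absG D (b + e) = 0
  · left
    simp only [ribbonC, Nat.sub_zero]
    omega
  · right
    have g2 := hg2 t (by omega)
    have g3 := hgk t
    have hrow : (ribbonC D k t 0).1 - 1 < k := by
      simp only [ribbonC, Nat.sub_zero]; omega
    rw [mem_cells_iff_absG hrow]
    have hposhead : (ribbonC D k t 0).2 + (k - 1 - ((ribbonC D k t 0).1 - 1)) = b + e := by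
      simp only [ribbonC, Nat.sub_zero]; omega
    rw [hposhead]
    simp only [ribbonC, Nat.sub_zero]
    omega

end SingleRibbon

end Statement12
namespace Statement12

open Partition' Finset

/-- diagonal position of a cell. -/
def posOf (k : ℕ) (x : ℕ × ℕ) : ℕ := x.2 + (k - 1 - x.1)

lemma mem_cells_iff_pos {l : Partition'} {k : ℕ} {x : ℕ × ℕ} (hx : x.1 < k) :
    x ∈ cells l ↔ x.1 < absG (betaSet l k) (posOf k x) := by
  obtain ⟨i, j⟩ := x
  exact mem_cells_iff_absG hx

section RibbonToMove

variable {k e : ℕ} {u n : Partition'}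

lemma ribbon_to_move (he : 1 ≤ e) (hu : u.length ≤ k) (hn : n.length ≤ k)
    (hsub : cells u ⊆ cells n) {c : ℕ → ℕ × ℕ}
    (hc : IsRibbonC e c (cells n \ cells u)) :
    ∃ b, b ∈ betaSet u k ∧ b + e ∉ betaSet u k ∧
      betaSet n k = moveF e b (betaSet u k) ∧
      spinOf e c = ((betaSet u k).filter fun x => b < x ∧ x < b + e).card ∧
      ∀ l : Partition', HeadOK l c →
        absG (betaSet n k) (b + e) ≤ absG (betaSet l k) (b + e) := by
  classical
  obtain ⟨himg, hinj, hsteps⟩ := hc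
  have hcells : ∀ j, j < e → c j ∈ cells n \ cells u := by
    intro j hj
    rw [himg]
    exact ⟨j, hj, rfl⟩
  have hrowk : ∀ j, j < e → (c j).1 < k := fun j hj =>
    lt_of_lt_of_le (row_lt_of_mem_cells (hcells j hj).1) hn
  have hk : 1 ≤ k := by
    have := hrowk 0 (by omega)
    omega
  -- positions decrease by one along the ribbon
  have hstep_pos : ∀ j, j + 1 < e → posOf k (c (j + 1)) + 1 = posOf k (c j) := by
    intro j hj
    have hr1 := hrowk (j + 1) (by omega)
    rcases hsteps j hj with hd | ⟨h1, h2⟩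
    · rw [hd] at hr1 ⊢
      simp only [posOf] at *
      omega
    · simp only [posOf]
      omega
  have hpos_lin : ∀ j, j < e → posOf k (c j) + j = posOf k (c 0) := by
    intro j
    induction j with
    | zero => intro _; rfl
    | succ j ih =>
      intro hj
      have h1 := hstep_pos j hj
      have h2 := ih (by omega)
      omega
  set h0 := posOf k (c 0) with hh0
  have he0 : e - 1 ≤ h0 := by
    have := hpos_lin (e - 1) (by omega)
    omega
  set q := h0 + 1 - e with hq
  have hqe : q + e = h0 + 1 := by omega
  have hβmono : ∀ i, i < k → betaFun u k i ≤ betaFun n k i := by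
    intro i _
    have := parts_le_of_cells_subset hsub i
    rw [betaFun, betaFun]
    omega
  have hgele : ∀ p, absG (betaSet u k) p ≤ absG (betaSet n k) p := by
    intro p
    rcases Nat.eq_zero_or_pos (absG (betaSet u k) p) with h | h
    · omega
    · have hle := absG_le_card (betaSet u k) p
      rw [card_betaSet] at hle
      have hik : absG (betaSet u k) p - 1 < k := by omega
      have h1 : p < betaFun u k (absG (betaSet u k) p - 1) :=
        (lt_absG_iff hik).mp (by omega)
      have h2 : absG (betaSet u k) p - 1 < absG (betaSet n k) p :=
        (lt_absG_iff hik).mpr (lt_of_lt_of_le h1 (hβmono _ hik))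
      omega
  have hgkn : ∀ p, absG (betaSet n k) p ≤ k := fun p => by
    have := absG_le_card (betaSet n k) p
    rw [card_betaSet] at this
    exact this
  -- construct a skew cell at position p with prescribed row
  have hcellmk : ∀ p i', i' < k → absG (betaSet u k) p ≤ i' → i' < absG (betaSet n k) p →
      (i', p - (k - 1 - i')) ∈ cells n \ cells u ∧ posOf k (i', p - (k - 1 - i')) = p := by
    intro p i' hik hu' hn'
    have hβu : betaFun u k i' ≤ p := by
      by_contra h
      push_neg at h
      have := (lt_absG_iff hik).mpr h
      omega
    have hβlow : k - 1 - i' ≤ betaFun u k i' := by rw [betaFun]; omega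
    have hpos : posOf k (i', p - (k - 1 - i')) = p := by
      simp only [posOf]
      omega
    refine ⟨⟨?_, ?_⟩, hpos⟩
    · rw [mem_cells_iff_pos (show ((i' : ℕ), p - (k - 1 - i')).1 < k from hik), hpos]
      exact hn'
    · rw [mem_cells_iff_pos (show ((i' : ℕ), p - (k - 1 - i')).1 < k from hik), hpos]
      omega
  -- every skew cell is a ribbon cell, with position in [q, h0]
  have hposindex : ∀ x : ℕ × ℕ, x ∈ cells n \ cells u →
      x = c (h0 - posOf k x) ∧ q ≤ posOf k x ∧ posOf k x ≤ h0 := by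
    intro x hx
    rw [himg] at hx
    obtain ⟨j, hj, rfl⟩ := hx
    simp only [Set.mem_Iio] at hj
    have := hpos_lin j hj
    have hidx : h0 - posOf k (c j) = j := by omega
    rw [hidx]
    exact ⟨rfl, by omega, by omega⟩
  -- the counting relation
  have hchi : ∀ p, absG (betaSet n k) p
      = absG (betaSet u k) p + (if q ≤ p ∧ p < q + e then 1 else 0) := by
    intro p
    by_cases hrange : q ≤ p ∧ p < q + e
    · rw [if_pos hrange]
      set j := h0 - p with hj
      have hje : j < e := by omega
      have hcj := hcells j hje
      have hpj : posOf k (c j) = p := by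
        have := hpos_lin j hje
        omega
      have hik := hrowk j hje
      have hmemn : (c j).1 < absG (betaSet n k) p := by
        have := (mem_cells_iff_pos hik).mp hcj.1
        rw [hpj] at this
        exact this
      have hmemu : absG (betaSet u k) p ≤ (c j).1 := by
        have := hcj.2
        rw [mem_cells_iff_pos hik, hpj] at this
        omega
      -- at most one skew cell per position
      by_contra hcon
      have h2 : absG (betaSet u k) p + 1 < absG (betaSet n k) p := by omega
      have hx1 := hcellmk p (absG (betaSet u k) p) (by have := hgkn p; omega) (le_refl _) (by omega)
      have hx2 := hcellmk p (absG (betaSet u k) p + 1) (by have := hgkn p; omega) (by omega) (by omega)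
      have hi1 := hposindex _ hx1.1
      have hi2 := hposindex _ hx2.1
      rw [hx1.2] at hi1
      rw [hx2.2] at hi2
      have : ((absG (betaSet u k) p : ℕ), p - (k - 1 - absG (betaSet u k) p))
          = (absG (betaSet u k) p + 1, p - (k - 1 - (absG (betaSet u k) p + 1))) := by
        rw [hi1.1, hi2.1]
      have := congrArg Prod.fst this
      simp only at this
      omega
    · rw [if_neg hrange]
      have hle := hgele p
      rcases Nat.eq_or_lt_of_le hle with h | h
      · omega
      · exfalso
        have hx1 := hcellmk p (absG (betaSet u k) p) (by have := hgkn p; omega) (le_refl _) h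
        have hi1 := hposindex _ hx1.1
        rw [hx1.2] at hi1
        omega
  have hcard : (betaSet u k).card = (betaSet n k).card := by
    rw [card_betaSet, card_betaSet]
  obtain ⟨hqmem, hqemem, hBn⟩ := recover he hcard hchi
  have hqeBn : q + e ∈ betaSet n k := by
    rw [hBn]
    exact Finset.mem_insert_self _ _
  -- row formula for ribbon cells
  have hrowf : ∀ j, j < e → (c j).1 + 1 = absG (betaSet n k) (h0 - j) := by
    intro j hj
    have hcj := hcells j hj
    have hpj : posOf k (c j) = h0 - j := by
      have := hpos_lin j hj
      omega
    have hik := hrowk j hj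
    have h1 := (mem_cells_iff_pos hik).mp hcj.1
    have h2 := hcj.2
    rw [mem_cells_iff_pos hik] at h2
    rw [hpj] at h1
    rw [hpj] at h2
    have h3 := hchi (h0 - j)
    rw [if_pos (by omega : q ≤ h0 - j ∧ h0 - j < q + e)] at h3
    omega
  -- spin
  have hspin : spinOf e c = ((betaSet u k).filter fun x => q < x ∧ x < q + e).card := by
    rw [spinOf]
    have hcongr : (Finset.range (e - 1)).filter (fun j => (c (j + 1)).1 = (c j).1 + 1)
        = (Finset.range (e - 1)).filter fun j => h0 - j ∈ betaSet n k := by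
      apply Finset.filter_congr
      intro j hj
      rw [Finset.mem_range] at hj
      have r1 := hrowf j (by omega)
      have r2 := hrowf (j + 1) (by omega)
      have hst : h0 - (j + 1) = h0 - j - 1 := by omega
      rw [hst] at r2
      have habs := absG_succ (betaSet n k) (h0 - j - 1)
      have hge1 : 1 ≤ h0 - j := by omega
      have hpl : h0 - j - 1 + 1 = h0 - j := by omega
      rw [hpl] at habs
      constructor
      · intro hdown
        by_contra hmem
        rw [if_neg hmem] at habs
        omega
      · intro hmem
        rw [if_pos hmem] at habs
        omega
    rw [hcongr]
    have hDu : ((betaSet n k).filter fun x => q < x ∧ x < q + e)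
        = (betaSet u k).filter fun x => q < x ∧ x < q + e := by
      ext x
      simp only [Finset.mem_filter, hBn, moveF, Finset.mem_insert, Finset.mem_erase]
      constructor
      · rintro ⟨h1 | ⟨h1, h2⟩, h3⟩
        · omega
        · exact ⟨h2, h3⟩
      · rintro ⟨h1, h2⟩
        exact ⟨Or.inr ⟨by omega, h1⟩, h2⟩
    rw [← hDu]
    apply Finset.card_nbij' (fun j => h0 - j) (fun x => h0 - x)
    · intro a ha
      beta_reduce
      rw [Finset.mem_coe, Finset.mem_filter, Finset.mem_range] at ha
      rw [Finset.mem_coe, Finset.mem_filter]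
      exact ⟨ha.2, by omega, by omega⟩
    · intro x hx
      beta_reduce
      rw [Finset.mem_coe, Finset.mem_filter] at hx
      rw [Finset.mem_coe, Finset.mem_filter, Finset.mem_range]
      refine ⟨by omega, ?_⟩
      have hx' : h0 - (h0 - x) = x := by omega
      rw [hx']
      exact hx.1
    · intro a ha
      beta_reduce
      rw [Finset.mem_coe, Finset.mem_filter, Finset.mem_range] at ha
      omega
    · intro x hx
      beta_reduce
      rw [Finset.mem_coe, Finset.mem_filter] at hx
      omega
  -- head row value
  have hhead0 : (c 0).1 = absG (betaSet n k) (q + e) := by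
    have r := hrowf 0 (by omega)
    have habs := absG_succ (betaSet n k) h0
    rw [show h0 + 1 = q + e by omega, if_pos hqeBn] at habs
    simp only [Nat.sub_zero] at r
    omega
  refine ⟨q, hqmem, hqemem, hBn, hspin, ?_⟩
  intro l hho
  rcases hho with h | hmem
  · rw [← hhead0, h]
    exact Nat.zero_le _
  · by_cases ht0 : (c 0).1 = 0
    · rw [← hhead0, ht0]
      exact Nat.zero_le _
    · have hik : (c 0).1 - 1 < k := by
        have := hrowk 0 (by omega)
        omega
      rw [mem_cells_iff_pos hik] at hmem
      have hposval : posOf k ((c 0).1 - 1, (c 0).2) = q + e := by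
        have hc0 : (c 0).2 + (k - 1 - (c 0).1) = h0 := rfl
        have := hrowk 0 (by omega)
        simp only [posOf]
        omega
      rw [hposval] at hmem
      omega

end RibbonToMove

end Statement12
namespace Statement12

open Partition' Finset

/-- diagonal (content) of a cell, as an integer. -/
def dg (x : ℕ × ℕ) : ℤ := (x.2 : ℤ) - (x.1 : ℤ)

lemma dg_ribbon {e : ℕ} {c : ℕ → ℕ × ℕ} (hsteps : RibbonSteps e c) :
    ∀ j, j < e → dg (c j) + j = dg (c 0) := by
  intro j
  induction j with
  | zero => intro _; simp
  | succ j ih =>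
    intro hj
    have h1 := ih (by omega)
    have h2 : dg (c (j + 1)) + 1 = dg (c j) := by
      rcases hsteps j hj with hd | ⟨hc1, hc2⟩
      · rw [hd]
        simp only [dg]
        push_cast
        ring
      · simp only [dg]
        omega
    push_cast
    omega

lemma cell_eq_of_row_dg {x y : ℕ × ℕ} (h1 : x.1 = y.1) (h2 : dg x = dg y) : x = y := by
  have h3 : x.2 = y.2 := by
    simp only [dg] at h2
    omega
  exact Prod.ext h1 h3

lemma diag_not_mem {l : Partition'} {x : ℕ × ℕ} (hx : x ∉ cells l) {r2 c2 : ℕ}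
    (hr : x.1 ≤ r2) (hd : (c2 : ℤ) - (r2 : ℤ) = (x.2 : ℤ) - (x.1 : ℤ)) :
    (r2, c2) ∉ cells l := by
  intro hmem
  have h1 : c2 < l.parts r2 := hmem
  have h2 : l.parts r2 ≤ l.parts x.1 := l.antitone hr
  have h3 : ¬ (x.2 < l.parts x.1) := hx
  omega

section Parallel

variable {e : ℕ} {l n : Partition'} {c c' : ℕ → ℕ × ℕ} {R R' : Set (ℕ × ℕ)}

lemma parallel_contra (hR : IsRibbonC e c R) (hR' : IsRibbonC e c' R')
    (hdisj : Disjoint R R')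
    (hRn : R ⊆ cells n \ cells l) (hR'n : R' ⊆ cells n \ cells l)
    (hho : HeadOK l c') (hle : dg (c' 0) ≤ dg (c 0))
    {a₀ b₀ : ℕ} (ha₀e : a₀ < e) (hb₀e : b₀ < e)
    (halign : (b₀ : ℤ) - (a₀ : ℤ) = dg (c 0) - dg (c' 0))
    (hstart : (c b₀).1 < (c' a₀).1) : False := by
  obtain ⟨hRim, hRinj, hsteps⟩ := hR
  obtain ⟨hR'im, hR'inj, hsteps'⟩ := hR'
  have hba : a₀ ≤ b₀ := by omega
  have hinv : ∀ t, t ≤ a₀ → (c (b₀ - t)).1 < (c' (a₀ - t)).1 := by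
    intro t
    induction t with
    | zero => intro _; simpa using hstart
    | succ t ih =>
      intro ht
      have iht := ih (by omega)
      have ha : a₀ - t = (a₀ - (t + 1)) + 1 := by omega
      have hb : b₀ - t = (b₀ - (t + 1)) + 1 := by omega
      rw [ha, hb] at iht
      have hs := hsteps (b₀ - (t + 1)) (by omega)
      have hs' := hsteps' (a₀ - (t + 1)) (by omega)
      by_contra hcon
      push_neg at hcon
      have hA1 : (c (b₀ - (t + 1) + 1)).1 = (c (b₀ - (t + 1))).1 + 1
          ∨ (c (b₀ - (t + 1) + 1)).1 = (c (b₀ - (t + 1))).1 := by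
        rcases hs with hd | ⟨h1, h2⟩
        · left; rw [hd]
        · right; rw [h2]
      have hB1 : (c' (a₀ - (t + 1) + 1)).1 = (c' (a₀ - (t + 1))).1 + 1
          ∨ (c' (a₀ - (t + 1) + 1)).1 = (c' (a₀ - (t + 1))).1 := by
        rcases hs' with hd | ⟨h1, h2⟩
        · left; rw [hd]
        · right; rw [h2]
      rcases hA1 with h | h <;> rcases hB1 with h' | h'
      · omega
      · omega
      · -- rows must be equal: same cell, contradicting disjointness
        have hrow : (c (b₀ - (t + 1))).1 = (c' (a₀ - (t + 1))).1 := by omega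
        have hd1 := dg_ribbon hsteps (b₀ - (t + 1)) (by omega)
        have hd2 := dg_ribbon hsteps' (a₀ - (t + 1)) (by omega)
        have hdg : dg (c (b₀ - (t + 1))) = dg (c' (a₀ - (t + 1))) := by omega
        have hcell := cell_eq_of_row_dg hrow hdg
        have hm1 : c (b₀ - (t + 1)) ∈ R := by
          rw [hRim]; exact ⟨b₀ - (t + 1), by simp only [Set.mem_Iio]; omega, rfl⟩
        have hm2 : c' (a₀ - (t + 1)) ∈ R' := by
          rw [hR'im]; exact ⟨a₀ - (t + 1), by simp only [Set.mem_Iio]; omega, rfl⟩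
        exact Set.disjoint_left.mp hdisj hm1 (hcell ▸ hm2)
      · omega
  have hw := hinv a₀ (le_refl _)
  rw [Nat.sub_self] at hw
  have hwe : b₀ - a₀ < e := by omega
  have hdgw : dg (c (b₀ - a₀)) = dg (c' 0) := by
    have := dg_ribbon hsteps (b₀ - a₀) hwe
    omega
  have hwmem : c (b₀ - a₀) ∈ R := by
    rw [hRim]; exact ⟨b₀ - a₀, by simp only [Set.mem_Iio]; omega, rfl⟩
  have hwskew := hRn hwmem
  rcases hho with h0 | hcl
  · omega
  · have hcol : (c (b₀ - a₀)).2 + 1 ≤ (c' 0).2 := by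
      simp only [dg] at hdgw
      omega
    have hclv : (c' 0).2 < l.parts ((c' 0).1 - 1) := hcl
    have hstep1 : ((c' 0).1 - 1, (c' 0).2 - 1) ∈ cells l := by
      show ((c' 0).2 - 1) < l.parts ((c' 0).1 - 1)
      omega
    refine diag_not_mem hwskew.2 (show (c (b₀ - a₀)).1 ≤ (c' 0).1 - 1 by omega) ?_ hstep1
    simp only [dg] at hdgw
    omega

end Parallel

lemma exists_partition_of_closed {n : Partition'} {X : Set (ℕ × ℕ)} (hXn : X ⊆ cells n)
    (hleft : ∀ i j, (i, j + 1) ∈ X → (i, j) ∈ X)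
    (hup : ∀ i j, (i + 1, j) ∈ X → (i, j) ∈ X) :
    ∃ u : Partition', cells u = X ∧ ∀ i, u.parts i ≤ n.parts i := by
  classical
  have hfin : X.Finite := (cells_finite n).subset hXn
  set Xf := hfin.toFinset with hXf
  have hmemXf : ∀ x : ℕ × ℕ, x ∈ Xf ↔ x ∈ X := fun x => hfin.mem_toFinset
  set pf : ℕ → ℕ := fun i => (Xf.filter fun x => x.1 = i).sup fun x => x.2 + 1 with hpf
  have hchainL : ∀ d i j, (i, j + d) ∈ X → (i, j) ∈ X := by
    intro d
    induction d with
    | zero => intro i j h; exact h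
    | succ d ih =>
      intro i j h
      have : (i, j + d) ∈ X := hleft i (j + d) (by
        have : j + (d + 1) = (j + d) + 1 := by omega
        rw [← this]; exact h)
      exact ih i j this
  have hchainU : ∀ d i j, (i + d, j) ∈ X → (i, j) ∈ X := by
    intro d
    induction d with
    | zero => intro i j h; exact h
    | succ d ih =>
      intro i j h
      have : (i + d, j) ∈ X := hup (i + d) j (by
        have : i + (d + 1) = (i + d) + 1 := by omega
        rw [← this]; exact h)
      exact ih i j this
  have hle_sup : ∀ i j, (i, j) ∈ X → j + 1 ≤ pf i := by
    intro i j h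
    exact Finset.le_sup (s := Xf.filter fun x => x.1 = i) (f := fun x : ℕ × ℕ => x.2 + 1)
      (Finset.mem_filter.mpr ⟨(hmemXf _).mpr h, rfl⟩)
  have hmem_of_lt : ∀ i j, j < pf i → (i, j) ∈ X := by
    intro i j h
    rw [hpf] at h
    obtain ⟨x, hx, hxj⟩ := Finset.lt_sup_iff.mp h
    rw [Finset.mem_filter] at hx
    have hxX := (hmemXf _).mp hx.1
    have hx1 : x = (i, x.2) := by
      rw [← hx.2]
    rw [hx1] at hxX
    have : (i, j + (x.2 - j)) ∈ X := by
      have : j + (x.2 - j) = x.2 := by omega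
      rw [this]; exact hxX
    exact hchainL _ _ _ this
  have hanti : ∀ ⦃i j : ℕ⦄, i ≤ j → pf j ≤ pf i := by
    intro i j hij
    apply Finset.sup_le
    intro x hx
    rw [Finset.mem_filter] at hx
    have hxX := (hmemXf _).mp hx.1
    have hx1 : x = (j, x.2) := by rw [← hx.2]
    rw [hx1] at hxX
    have : (i + (j - i), x.2) ∈ X := by
      have : i + (j - i) = j := by omega
      rw [this]; exact hxX
    exact hle_sup i x.2 (hchainU _ _ _ this)
  have hev : ∀ i, n.length ≤ i → pf i = 0 := by
    intro i hi
    have : pf i ≤ 0 := by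
      apply Finset.sup_le
      intro x hx
      rw [Finset.mem_filter] at hx
      have hxX := (hmemXf _).mp hx.1
      have := row_lt_of_mem_cells (hXn hxX)
      omega
    omega
  refine ⟨⟨pf, hanti, ⟨n.length, hev⟩⟩, ?_, ?_⟩
  · ext ⟨i, j⟩
    constructor
    · intro h
      exact hmem_of_lt i j h
    · intro h
      exact hle_sup i j h
  · intro i
    apply Finset.sup_le
    intro x hx
    rw [Finset.mem_filter] at hx
    have hxX := hXn ((hmemXf _).mp hx.1)
    have : x.2 < n.parts x.1 := hxX
    rw [hx.2] at this
    omega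

end Statement12
namespace Statement12

open Partition' Finset

lemma peel {e k m : ℕ} {l n : Partition'} (he : 1 ≤ e)
    (hln : cells l ⊆ cells n)
    (R : Fin (m + 1) → Set (ℕ × ℕ)) (c : Fin (m + 1) → ℕ → ℕ × ℕ)
    (hU : cells n \ cells l = ⋃ i, R i)
    (hdisj : Pairwise fun i j => Disjoint (R i) (R j))
    (hrib : ∀ i, IsRibbonC e (c i) (R i) ∧ HeadOK l (c i)) :
    ∃ (i₀ : Fin (m + 1)) (u : Partition'),
      (∀ i, u.parts i ≤ n.parts i) ∧
      cells l ⊆ cells u ∧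
      cells u ⊆ cells n ∧
      cells n \ cells u = R i₀ ∧
      cells u \ cells l = ⋃ j : Fin m, R (i₀.succAbove j) := by
  classical
  obtain ⟨i₀, -, hmax⟩ := Finset.exists_max_image (Finset.univ : Finset (Fin (m + 1)))
    (fun i => dg (c i 0)) ⟨0, Finset.mem_univ 0⟩
  have hmax' : ∀ i, dg (c i 0) ≤ dg (c i₀ 0) := fun i => hmax i (Finset.mem_univ i)
  have hRsub : ∀ i, R i ⊆ cells n \ cells l := fun i => by
    rw [hU]; exact Set.subset_iUnion R i
  have hdgf : ∀ (i : Fin (m + 1)) (j : ℕ), j < e → dg (c i j) + j = dg (c i 0) :=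
    fun i => dg_ribbon (hrib i).1.2.2
  -- common skeleton: a cell adjacent to R i₀, in [n]∖R i₀, leads to another ribbon
  have hfind : ∀ y : ℕ × ℕ, y ∈ cells n → y ∉ cells l → y ∉ R i₀ →
      ∃ (i₁ : Fin (m + 1)) (j₁ : ℕ), i₁ ≠ i₀ ∧ j₁ < e ∧ c i₁ j₁ = y := by
    intro y hy hyl hyR
    have : y ∈ ⋃ i, R i := by rw [← hU]; exact ⟨hy, hyl⟩
    obtain ⟨i₁, hi₁⟩ := Set.mem_iUnion.mp this
    have hne : i₁ ≠ i₀ := by rintro rfl; exact hyR hi₁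
    rw [(hrib i₁).1.1] at hi₁
    obtain ⟨j₁, hj₁, hyj₁⟩ := hi₁
    exact ⟨i₁, j₁, hne, hj₁, hyj₁⟩
  -- Claim A : right-closure of R i₀
  have hA : ∀ x ∈ R i₀, (x.1, x.2 + 1) ∈ cells n → (x.1, x.2 + 1) ∈ R i₀ := by
    intro x hx hy
    by_contra hyR
    have hxskew := hRsub i₀ hx
    have hyl : (x.1, x.2 + 1) ∉ cells l := by
      intro hmem
      have h1 : x.2 + 1 < l.parts x.1 := hmem
      exact hxskew.2 (show x.2 < l.parts x.1 by omega)
    obtain ⟨i₁, j₁, hne, hj₁e, hyj₁⟩ := hfind _ hy hyl hyR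
    obtain ⟨j, hje, hxj⟩ : ∃ j, j < e ∧ c i₀ j = x := by
      have := hx
      rw [(hrib i₀).1.1] at this
      obtain ⟨j, hj, hxj⟩ := this
      exact ⟨j, hj, hxj⟩
    have hdgy : dg (x.1, x.2 + 1) = dg x + 1 := by
      simp only [dg]; push_cast; ring
    have hd1 := hdgf i₁ j₁ hj₁e
    rw [hyj₁] at hd1
    have hd0 := hdgf i₀ j hje
    rw [hxj] at hd0
    rcases Nat.eq_zero_or_pos j with hj0 | hjpos
    · -- head of the maximal ribbon: no cell to its upper-right
      subst hj0
      have := hmax' i₁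
      omega
    · have hstep := (hrib i₀).1.2.2 (j - 1) (by omega)
      rw [show j - 1 + 1 = j by omega, hxj] at hstep
      rcases hstep with hd | ⟨h1, h2⟩
      · -- vertical step: parallel ribbons contradiction
        have hz1 : x.1 = (c i₀ (j - 1)).1 + 1 := congrArg Prod.fst hd
        refine parallel_contra (hrib i₀).1 (hrib i₁).1 (hdisj hne.symm)
          (hRsub i₀) (hRsub i₁) (hrib i₁).2 (hmax' i₁) hj₁e
          (show j - 1 < e by omega) ?_ ?_
        · have := hdgf i₀ (j - 1) (by omega)
          omega
        · rw [hyj₁]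
          omega
      · -- horizontal step: the cell to the right is in R i₀ after all
        apply hyR
        rw [(hrib i₀).1.1]
        refine ⟨j - 1, by simp only [Set.mem_Iio]; omega, ?_⟩
        have : c i₀ (j - 1) = (x.1, x.2 + 1) := by
          apply Prod.ext
          · omega
          · omega
        exact this
  -- Claim B : down-closure of R i₀
  have hB : ∀ x ∈ R i₀, (x.1 + 1, x.2) ∈ cells n → (x.1 + 1, x.2) ∈ R i₀ := by
    intro x hx hy
    by_contra hyR
    have hxskew := hRsub i₀ hx
    have hyl : (x.1 + 1, x.2) ∉ cells l := by
      intro hmem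
      have h1 : x.2 < l.parts (x.1 + 1) := hmem
      have h2 := l.antitone (show x.1 ≤ x.1 + 1 by omega)
      exact hxskew.2 (show x.2 < l.parts x.1 by omega)
    obtain ⟨i₁, j₁, hne, hj₁e, hyj₁⟩ := hfind _ hy hyl hyR
    obtain ⟨j, hje, hxj⟩ : ∃ j, j < e ∧ c i₀ j = x := by
      have := hx
      rw [(hrib i₀).1.1] at this
      obtain ⟨j, hj, hxj⟩ := this
      exact ⟨j, hj, hxj⟩
    have hd1 := hdgf i₁ j₁ hj₁e
    rw [hyj₁] at hd1
    have hd0 := hdgf i₀ j hje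
    rw [hxj] at hd0
    have hdgy : dg (x.1 + 1, x.2) + 1 = dg x := by
      simp only [dg]; push_cast; ring
    by_cases hj1 : j + 1 < e
    · have hstep := (hrib i₀).1.2.2 j hj1
      rw [hxj] at hstep
      rcases hstep with hd | ⟨h1, h2⟩
      · exact hyR (by
          rw [(hrib i₀).1.1]
          exact ⟨j + 1, by simp only [Set.mem_Iio]; omega, hd⟩)
      · refine parallel_contra (hrib i₀).1 (hrib i₁).1 (hdisj hne.symm)
          (hRsub i₀) (hRsub i₁) (hrib i₁).2 (hmax' i₁) hj₁e
          (show j + 1 < e from hj1) ?_ ?_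
        · have := hdgf i₀ (j + 1) hj1
          omega
        · rw [hyj₁]
          show (c i₀ (j + 1)).1 < x.1 + 1
          omega
    · -- x is the tail of R i₀
      rcases Nat.eq_zero_or_pos j₁ with hj₁0 | hj₁pos
      · -- y is the head of R i₁ : head condition violated
        subst hj₁0
        rcases (hrib i₁).2 with h0 | hcl
        · rw [hyj₁] at h0
          simp only at h0
          omega
        · rw [hyj₁] at hcl
          have hxx : ((x.1 + 1, x.2).1 - 1, (x.1 + 1, x.2).2) = x := by
            apply Prod.ext
            · simp only; omega
            · rfl
          rw [hxx] at hcl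
          exact hxskew.2 hcl
      · have hstep' := (hrib i₁).1.2.2 (j₁ - 1) (by omega)
        rw [show j₁ - 1 + 1 = j₁ by omega, hyj₁] at hstep'
        rcases hstep' with hd | ⟨h1, h2⟩
        · -- the cell above y is x, but belongs to R i₁
          have hcx : c i₁ (j₁ - 1) = x := by
            have ha := congrArg Prod.fst hd
            have hb := congrArg Prod.snd hd
            simp only at ha hb
            apply Prod.ext
            · omega
            · omega
          have hm1 : c i₁ (j₁ - 1) ∈ R i₁ := by
            rw [(hrib i₁).1.1]
            exact ⟨j₁ - 1, by simp only [Set.mem_Iio]; omega, rfl⟩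
          rw [hcx] at hm1
          exact Set.disjoint_left.mp (hdisj hne.symm) hx hm1
        · have hdd := hdgf i₁ (j₁ - 1) (by omega)
          have h1' : (c i₁ (j₁ - 1)).2 = x.2 + 1 := h1
          have h2' : x.1 + 1 = (c i₁ (j₁ - 1)).1 := h2
          have hcij : (c i₀ j).1 = x.1 := by rw [hxj]
          have hdw : dg (c i₁ (j₁ - 1)) = dg x := by
            simp only [dg]
            omega
          refine parallel_contra (hrib i₀).1 (hrib i₁).1 (hdisj hne.symm)
            (hRsub i₀) (hRsub i₁) (hrib i₁).2 (hmax' i₁)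
            (show j₁ - 1 < e by omega) (show j < e from hje) ?_ ?_
          · omega
          · omega
  -- build the peeled partition
  have hRn : R i₀ ⊆ cells n := fun x hx => (hRsub i₀ hx).1
  obtain ⟨u, hucells, huparts⟩ := exists_partition_of_closed
    (X := cells n \ R i₀) Set.diff_subset
    (by
      intro i j hmem
      refine ⟨?_, ?_⟩
      · have h1 : (j : ℕ) + 1 < n.parts i := hmem.1
        exact (show j < n.parts i by omega)
      · intro hR0
        exact hmem.2 (hA (i, j) hR0 hmem.1))
    (by
      intro i j hmem
      refine ⟨?_, ?_⟩
      · have h1 : (j : ℕ) < n.parts (i + 1) := hmem.1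
        have h2 := n.antitone (show i ≤ i + 1 by omega)
        exact (show j < n.parts i by omega)
      · intro hR0
        exact hmem.2 (hB (i, j) hR0 hmem.1))
  refine ⟨i₀, u, huparts, ?_, ?_, ?_, ?_⟩
  · intro x hx
    rw [hucells]
    exact ⟨hln hx, fun hR0 => (hRsub i₀ hR0).2 hx⟩
  · rw [hucells]
    exact Set.diff_subset
  · rw [hucells]
    exact Set.diff_diff_cancel_left hRn
  · rw [hucells, Set.diff_diff_comm, hU]
    ext x
    simp only [Set.mem_diff, Set.mem_iUnion]
    constructor
    · rintro ⟨⟨i, hi⟩, hx0⟩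
      have hne : i ≠ i₀ := by rintro rfl; exact hx0 hi
      obtain ⟨j, hj⟩ := Fin.exists_succAbove_eq hne
      exact ⟨j, hj ▸ hi⟩
    · rintro ⟨j, hj⟩
      refine ⟨⟨i₀.succAbove j, hj⟩, ?_⟩
      exact fun hx0 => Set.disjoint_left.mp (hdisj (Fin.succAbove_ne i₀ j)) hj hx0

end Statement12
namespace Statement12

open Partition' Finset

/-- A sequence of single-bead upward moves from `B`, with the head condition
recorded relative to `B₀`, total number `m` and total spin `s`. -/
inductive PMove (e : ℕ) (B₀ B : Finset ℕ) : Finset ℕ → ℕ → ℕ → Prop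
  | refl : PMove e B₀ B B 0 0
  | step {C : Finset ℕ} {m s b : ℕ} (h : PMove e B₀ B C m s)
      (hb : b ∈ C) (hbe : b + e ∉ C)
      (hhead : absG C (b + e) ≤ absG B₀ (b + e)) :
      PMove e B₀ B (moveF e b C) (m + 1) (s + (C.filter fun x => b < x ∧ x < b + e).card)

lemma PMove.card_eq {e : ℕ} {B₀ B C : Finset ℕ} {m s : ℕ} (he : 1 ≤ e)
    (h : PMove e B₀ B C m s) : C.card = B.card := by
  induction h with
  | refl => rfl
  | step h hb hbe hhead ih => rw [card_moveF he hb hbe]; exact ih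

section Transfer

variable {f : ℕ → ℕ} {e α : ℕ}

lemma absG_image (hmono : StrictMono f) (X : Finset ℕ) (y : ℕ) :
    absG (X.image f) (f y) = absG X y := by
  classical
  rw [absG, Finset.filter_image, Finset.card_image_of_injective _ hmono.injective, absG]
  apply congrArg
  apply Finset.filter_congr
  intro x _
  exact ⟨fun h => hmono.lt_iff_lt.mp h, fun h => hmono.lt_iff_lt.mpr h⟩

lemma filter_Ioo_image (hmono : StrictMono f)
    (hadd : ∀ x, f (x + e) = f x + (e + 1)) (X : Finset ℕ) (b : ℕ) :
    ((X.image f).filter fun x => f b < x ∧ x < f b + (e + 1)).card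
      = (X.filter fun x => b < x ∧ x < b + e).card := by
  classical
  rw [Finset.filter_image, Finset.card_image_of_injective _ hmono.injective]
  apply congrArg
  apply Finset.filter_congr
  intro x _
  rw [← hadd b]
  constructor
  · rintro ⟨h1, h2⟩
    exact ⟨hmono.lt_iff_lt.mp h1, hmono.lt_iff_lt.mp h2⟩
  · rintro ⟨h1, h2⟩
    exact ⟨hmono.lt_iff_lt.mpr h1, hmono.lt_iff_lt.mpr h2⟩

lemma image_moveF (hinj : Function.Injective f)
    (hadd : ∀ x, f (x + e) = f x + (e + 1)) (b : ℕ) (C : Finset ℕ) :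
    (moveF e b C).image f = moveF (e + 1) (f b) (C.image f) := by
  classical
  rw [moveF, moveF, Finset.image_insert, Finset.image_erase hinj, hadd]

lemma PMove.map (hmono : StrictMono f) (hadd : ∀ x, f (x + e) = f x + (e + 1))
    {B₀ B C : Finset ℕ} {m s : ℕ} (h : PMove e B₀ B C m s) :
    PMove (e + 1) (B₀.image f) (B.image f) (C.image f) m s := by
  induction h with
  | refl => exact .refl
  | @step C m s b h hb hbe hhead ih =>
    have hb' : f b ∈ C.image f := Finset.mem_image_of_mem f hb
    have hbe' : f b + (e + 1) ∉ C.image f := by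
      rw [← hadd b]
      intro hmem
      obtain ⟨x, hx, hfx⟩ := Finset.mem_image.mp hmem
      exact hbe (hmono.injective hfx ▸ hx)
    have hhead' : absG (C.image f) (f b + (e + 1)) ≤ absG (B₀.image f) (f b + (e + 1)) := by
      rw [← hadd b, absG_image hmono, absG_image hmono]
      exact hhead
    have hstep := PMove.step ih hb' hbe' hhead'
    rw [filter_Ioo_image hmono hadd, ← image_moveF hmono.injective hadd] at hstep
    exact hstep

lemma PMove.unmap (hmono : StrictMono f) (hadd : ∀ x, f (x + e) = f x + (e + 1))
    {B₀ B D : Finset ℕ} {m s : ℕ}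
    (h : PMove (e + 1) (B₀.image f) (B.image f) D m s) :
    ∃ C, D = C.image f ∧ PMove e B₀ B C m s := by
  generalize hB1 : B.image f = B1 at h
  generalize hB2 : B₀.image f = B2 at h
  induction h with
  | refl => exact ⟨B, hB1.symm, .refl⟩
  | @step C m s b h hb hbe hhead ih =>
    obtain ⟨C', rfl, hP⟩ := ih
    obtain ⟨c, hc, rfl⟩ := Finset.mem_image.mp hb
    refine ⟨moveF e c C', (image_moveF hmono.injective hadd c C').symm, ?_⟩
    have hbe' : c + e ∉ C' := by
      intro hmem
      apply hbe
      rw [← hadd c]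
      exact Finset.mem_image_of_mem f hmem
    have hhead' : absG C' (c + e) ≤ absG B₀ (c + e) := by
      rw [← hB2, ← hadd c, absG_image hmono, absG_image hmono] at hhead
      exact hhead
    have hstep := PMove.step hP hc hbe' hhead'
    have hspin := filter_Ioo_image hmono hadd C' c
    rw [← hspin] at hstep
    exact hstep

end Transfer

lemma insRunner_strictMono (e α : ℕ) (he : 1 ≤ e) : StrictMono (insRunner e α) := by
  intro p q hpq
  have hp : p % e < e := Nat.mod_lt p (by omega)
  have hq : q % e < e := Nat.mod_lt q (by omega)
  have h1 := Nat.div_add_mod p e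
  have h2 := Nat.div_add_mod q e
  rw [insRunner, insRunner]
  rcases lt_trichotomy (p / e) (q / e) with hlt | heq | hgt
  · have key : (p / e) * (e + 1) + (e + 1) ≤ (q / e) * (e + 1) := by
      have h3 : (p / e + 1) * (e + 1) ≤ (q / e) * (e + 1) :=
        Nat.mul_le_mul_right _ hlt
      rw [add_mul, one_mul] at h3
      exact h3
    split_ifs <;> omega
  · rw [heq] at h1
    have hmod : p % e < q % e := by omega
    rw [heq]
    split_ifs <;> omega
  · exfalso
    have h3 : (q / e + 1) * e ≤ (p / e) * e := Nat.mul_le_mul_right _ hgt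
    rw [add_mul, one_mul, Nat.mul_comm (q / e) e, Nat.mul_comm (p / e) e] at h3
    omega

lemma insRunner_add (e α : ℕ) (he : 1 ≤ e) (p : ℕ) :
    insRunner e α (p + e) = insRunner e α p + (e + 1) := by
  rw [insRunner, insRunner]
  have h1 : (p + e) / e = p / e + 1 := by
    rw [Nat.add_div_right _ (by omega)]
  have h2 : (p + e) % e = p % e := Nat.add_mod_right p e
  rw [h1, h2, add_mul, one_mul]
  omega

end Statement12
namespace Statement12

open Partition' Finset

variable {e k : ℕ}

lemma haddspin_to_pmove (he : 1 ≤ e) {l : Partition'} (hl : l.length ≤ k) :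
    ∀ m s (n : Partition'), n.length ≤ k → HAddSpin e m s l n →
      PMove e (betaSet l k) (betaSet l k) (betaSet n k) m s := by
  intro m
  induction m with
  | zero =>
    intro s n hn h
    obtain ⟨hsub, R, c, hU, hdisj, hrib, hs⟩ := h
    have hcells : cells l = cells n := by
      apply Set.Subset.antisymm hsub
      intro x hx
      by_contra hxl
      have : x ∈ ⋃ i : Fin 0, R i := by rw [← hU]; exact ⟨hx, hxl⟩
      obtain ⟨i, -⟩ := Set.mem_iUnion.mp this
      exact i.elim0
    have hbeq : betaSet n k = betaSet l k := betaSet_eq_of_cells_eq k hcells.symm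
    simp only [Finset.univ_eq_empty, Finset.sum_empty] at hs
    rw [hbeq, hs]
    exact .refl
  | succ m ih =>
    intro s n hn h
    obtain ⟨hsub, R, c, hU, hdisj, hrib, hs⟩ := h
    obtain ⟨i₀, u, huparts, hlu, hun, hnR, huskew⟩ := peel (k := k) he hsub R c hU hdisj hrib
    have hukl : u.length ≤ k := le_trans (length_le_of_parts_le huparts) hn
    have hribi₀ : IsRibbonC e (c i₀) (cells n \ cells u) := by
      rw [hnR]; exact (hrib i₀).1
    obtain ⟨b, hbmem, hbe, hBn, hspin, hheadineq⟩ := ribbon_to_move he hukl hn hun hribi₀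
    have hprev : HAddSpin e m (∑ j : Fin m, spinOf e (c (i₀.succAbove j))) l u := by
      refine ⟨hlu, fun j => R (i₀.succAbove j), fun j => c (i₀.succAbove j), huskew,
        ?_, fun j => hrib _, rfl⟩
      intro i j hij
      exact hdisj (Fin.succAbove_right_injective.ne hij)
    have hIH := ih _ u hukl hprev
    have hheadl : absG (betaSet u k) (b + e) ≤ absG (betaSet l k) (b + e) := by
      have h1 := hheadineq l (hrib i₀).2
      have h2 : absG (betaSet n k) (b + e) = absG (betaSet u k) (b + e) := by
        rw [hBn]; exact absG_moveF_above he hbmem hbe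
      omega
    have hstep := PMove.step hIH hbmem hbe hheadl
    rw [← hBn] at hstep
    rw [hs, Fin.sum_univ_succAbove _ i₀, hspin,
      Nat.add_comm (((betaSet u k).filter fun x => b < x ∧ x < b + e).card)
        (∑ j : Fin m, spinOf e (c (i₀.succAbove j)))]
    exact hstep

lemma pmove_to_haddspin (he : 1 ≤ e) {l : Partition'} (hl : l.length ≤ k)
    {C : Finset ℕ} {m s : ℕ} (h : PMove e (betaSet l k) (betaSet l k) C m s) :
    ∀ n : Partition', n.length ≤ k → betaSet n k = C → HAddSpin e m s l n := by
  induction h with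
  | refl =>
    intro n hn hB
    have hcells : cells n = cells l := cells_eq_of_betaSet_eq hn hl hB
    refine ⟨le_of_eq hcells.symm, fun i => i.elim0, fun i => i.elim0, ?_, ?_,
      fun i => i.elim0, ?_⟩
    · rw [hcells]
      simp
    · exact Subsingleton.pairwise
    · simp
  | @step C m s b hP hb hbe hhead ih =>
    intro n hn hB
    have hcard : C.card = k := by rw [PMove.card_eq he hP, card_betaSet]
    have hubeta : betaSet (ofBeta C k hcard) k = C := ofBeta_betaSet hcard
    have hukl : (ofBeta C k hcard).length ≤ k := ofBeta_length hcard
    obtain ⟨hsubl, R, cc, hU, hdisj, hrib, hs⟩ := ih (ofBeta C k hcard) hukl hubeta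
    have hBn : betaSet n k = moveF e b (betaSet (ofBeta C k hcard) k) := by
      rw [hubeta, hB]
    obtain ⟨hsub2, hribN, hspinN, hheadN⟩ := move_to_ribbon he hukl hn
      (by rw [hubeta]; exact hb) (by rw [hubeta]; exact hbe) hBn
    have hdnew : ∀ jj : Fin m, Disjoint (cells n \ cells (ofBeta C k hcard)) (R jj) := by
      intro jj
      apply Set.disjoint_left.mpr
      intro x hx hxR
      have hx2 : x ∈ cells (ofBeta C k hcard) \ cells l := by
        rw [hU]; exact Set.mem_iUnion.mpr ⟨jj, hxR⟩
      exact hx.2 hx2.1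
    refine ⟨le_trans hsubl hsub2,
      Fin.cons (cells n \ cells (ofBeta C k hcard)) R,
      Fin.cons (ribbonC (betaSet n k) k (b + e - 1)) cc, ?_, ?_, ?_, ?_⟩
    · have hsplit : cells n \ cells l
          = (cells n \ cells (ofBeta C k hcard)) ∪ (cells (ofBeta C k hcard) \ cells l) :=
        (Set.diff_union_diff_cancel hsub2 hsubl).symm
      rw [hsplit, hU]
      ext x
      simp only [Set.mem_union, Set.mem_iUnion]
      constructor
      · rintro (hx | ⟨i, hx⟩)
        · exact ⟨0, by simpa using hx⟩
        · exact ⟨i.succ, by simpa using hx⟩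
      · rintro ⟨i, hx⟩
        rcases Fin.eq_zero_or_eq_succ i with rfl | ⟨j', rfl⟩
        · left; simpa using hx
        · right; exact ⟨j', by simpa using hx⟩
    · intro i j hij
      rcases Fin.eq_zero_or_eq_succ i with rfl | ⟨i', rfl⟩
      · rcases Fin.eq_zero_or_eq_succ j with rfl | ⟨j', rfl⟩
        · exact absurd rfl hij
        · simp only [Fin.cons_zero, Fin.cons_succ]
          exact hdnew j'
      · rcases Fin.eq_zero_or_eq_succ j with rfl | ⟨j', rfl⟩
        · simp only [Fin.cons_zero, Fin.cons_succ]
          exact (hdnew i').symm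
        · simp only [Fin.cons_succ]
          exact hdisj fun hcc => hij (congrArg Fin.succ hcc)
    · intro i
      rcases Fin.eq_zero_or_eq_succ i with rfl | ⟨i', rfl⟩
      · simp only [Fin.cons_zero]
        refine ⟨hribN, ?_⟩
        apply hheadN l
        have habove : absG (betaSet n k) (b + e) = absG C (b + e) := by
          rw [hB]; exact absG_moveF_above he hb hbe
        omega
      · simp only [Fin.cons_succ]
        exact hrib i'
    · rw [Fin.sum_univ_succ]
      simp only [Fin.cons_zero, Fin.cons_succ]
      rw [hspinN, hubeta, ← hs]
      exact Nat.add_comm _ _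

end Statement12

open Partition'
/-- `λ →_{m:e} ν` iff `λ⁺ →_{m:e+1} ν⁺`, and the total spins agree. -/
theorem hadd_iff_plus_hadd (e α k m : ℕ) (he : 2 ≤ e) (hα : α ≤ e)
    (l n lp np : Partition') (hl : l.length ≤ k) (hn : n.length ≤ k)
    (hlp : IsPlus e α k l lp) (hnp : IsPlus e α k n np) :
    (HAdd e m l n ↔ HAdd (e + 1) m lp np) ∧
    (∀ s, HAddSpin e m s l n ↔ HAddSpin (e + 1) m s lp np) := by
  have he1 : 1 ≤ e := by omega
  have hmono := Statement12.insRunner_strictMono e α he1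
  have haddf := Statement12.insRunner_add e α he1
  have key : ∀ s, HAddSpin e m s l n ↔ HAddSpin (e + 1) m s lp np := by
    intro s
    constructor
    · intro h
      have hp := Statement12.haddspin_to_pmove he1 hl m s n hn h
      have hmap := Statement12.PMove.map hmono haddf hp
      rw [← hlp.2, ← hnp.2] at hmap
      exact Statement12.pmove_to_haddspin (by omega) hlp.1 hmap np hnp.1 rfl
    · intro h
      have hp := Statement12.haddspin_to_pmove (by omega) hlp.1 m s np hnp.1 h
      rw [hlp.2, hnp.2] at hp
      obtain ⟨C, hC, hP⟩ := Statement12.PMove.unmap hmono haddf hp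
      have hCeq : Partition'.betaSet n k = C :=
        Finset.image_injective hmono.injective hC
      exact Statement12.pmove_to_haddspin he1 hl hP n hn hCeq
  exact ⟨exists_congr key, key⟩
end

section
/- If λ →_{m:e} ν (i.e., ν/λ is a disjoint union of m e-ribbons whose heads either lie in row 1 or directly below cells of λ), then λ and ν have the same e-core. -/
open Finset

/-- A partition: a weakly decreasing, eventually-zero sequence of naturals.
`parts i` is the `(i+1)`-st part (0-indexed). -/
structure YPartition where
  parts : ℕ → ℕ
  antitone : ∀ ⦃i j : ℕ⦄, i ≤ j → parts j ≤ parts i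
  eventually_zero : ∃ N, ∀ i, N ≤ i → parts i = 0

namespace YPartition

/-- The length of a partition: the number of nonzero parts. -/
noncomputable def length (l : YPartition) : ℕ :=
  sInf {N | ∀ i, N ≤ i → l.parts i = 0}

/-- The size `|λ|` of a partition: the sum of its parts. -/
noncomputable def size (l : YPartition) : ℕ :=
  ∑ i ∈ Finset.range l.length, l.parts i

/-- The beta-numbers of `l` with respect to `k` beads: `λ_i + k - i` for `i = 1, …, k`
(here 0-indexed: bead for row `i+1` sits at `parts i + (k - 1 - i)`). -/
def betaSet (l : YPartition) (k : ℕ) : Finset ℕ :=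
  (Finset.range k).image fun i => l.parts i + (k - 1 - i)

/-- Dominance order: `l ⊵ m`. -/
def Dominates (l m : YPartition) : Prop :=
  ∀ j, ∑ i ∈ Finset.range j, m.parts i ≤ ∑ i ∈ Finset.range j, l.parts i

/-- Inserting an empty runner before runner `α` into an `e`-abacus: a bead at
position `m*e + r` moves to `m*(e+1) + r` if `r < α` and to `m*(e+1) + r + 1` otherwise. -/
def insRunner (e α p : ℕ) : ℕ :=
  (p / e) * (e + 1) + p % e + (if p % e < α then 0 else 1)

/-- `lp` is the partition `λ⁺` obtained from `l` by inserting an empty runner at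
position `α` into its `e`-abacus with `k` beads. -/
def IsPlus (e α k : ℕ) (l lp : YPartition) : Prop :=
  lp.length ≤ k ∧ lp.betaSet k = (l.betaSet k).image (insRunner e α)

/-- A partition is `d`-regular if no `d` of its nonzero parts are equal. -/
def Regular (d : ℕ) (l : YPartition) : Prop :=
  ¬ ∃ i, l.parts i ≠ 0 ∧ l.parts (i + (d - 1)) = l.parts i

/-- The Young diagram of a partition, as a set of (row, column) cells, 0-indexed. -/
def cells (l : YPartition) : Set (ℕ × ℕ) := {x | x.2 < l.parts x.1}

/-- `c 0, c 1, …, c (e-1)` are the successive cells of a ribbon: each next cell is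
directly below, or directly to the left of, the previous cell. -/
def RibbonSteps (e : ℕ) (c : ℕ → ℕ × ℕ) : Prop :=
  ∀ i, i + 1 < e →
    (c (i + 1) = ((c i).1 + 1, (c i).2)) ∨
    ((c i).2 = (c (i + 1)).2 + 1 ∧ (c (i + 1)).1 = (c i).1)

/-- `R` is an `e`-ribbon with cell enumeration `c` (head `c 0`). -/
def IsRibbonC (e : ℕ) (c : ℕ → ℕ × ℕ) (R : Set (ℕ × ℕ)) : Prop :=
  R = c '' (Set.Iio e) ∧ Set.InjOn c (Set.Iio e) ∧ RibbonSteps e c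

/-- The spin of an `e`-ribbon: the number of vertical steps. -/
def spinOf (e : ℕ) (c : ℕ → ℕ × ℕ) : ℕ :=
  ((Finset.range (e - 1)).filter fun i => (c (i + 1)).1 = (c i).1 + 1).card

/-- The head of the ribbon lies in row 1 or directly below a cell of `l`. -/
def HeadOK (l : YPartition) (c : ℕ → ℕ × ℕ) : Prop :=
  (c 0).1 = 0 ∨ ((c 0).1 - 1, (c 0).2) ∈ cells l

/-- `l` is obtained from `n` by removing a single rim hook (ribbon) of length `e`. -/
def RemoveRibbon (e : ℕ) (n l : YPartition) : Prop :=
  cells l ⊆ cells n ∧ ∃ c, IsRibbonC e c (cells n \ cells l)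

/-- `κ` is the `e`-core of `l`: obtained by repeatedly removing `e`-rim-hooks,
and no further `e`-rim-hook can be removed. -/
def IsECoreOf (e : ℕ) (κ l : YPartition) : Prop :=
  Relation.ReflTransGen (RemoveRibbon e) l κ ∧ ¬ ∃ m, RemoveRibbon e κ m

/-- `l` has `e`-weight `w`: `|l| = |e-core of l| + w * e`. -/
def EWeight (e : ℕ) (l : YPartition) (w : ℕ) : Prop :=
  ∃ κ, IsECoreOf e κ l ∧ l.size = κ.size + w * e

/-- `λ →_{m:e} ν` with total spin `s`: `[ν] \ [λ]` is a disjoint union of `m`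
`e`-ribbons, each of whose heads lies in row 1 or directly below a cell of `λ`,
the sum of whose spins is `s`. -/
def HAddSpin (e m s : ℕ) (l n : YPartition) : Prop :=
  cells l ⊆ cells n ∧
  ∃ (R : Fin m → Set (ℕ × ℕ)) (c : Fin m → ℕ → ℕ × ℕ),
    ((cells n \ cells l) = ⋃ i, R i) ∧
    (Pairwise fun i j => Disjoint (R i) (R j)) ∧
    (∀ i, IsRibbonC e (c i) (R i) ∧ HeadOK l (c i)) ∧
    s = ∑ i, spinOf e (c i)

/-- `λ →_{m:e} ν`. -/
def HAdd (e m : ℕ) (l n : YPartition) : Prop := ∃ s, HAddSpin e m s l n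

/-- `x` is an addable node of `l`. -/
def Addable (l : YPartition) (x : ℕ × ℕ) : Prop :=
  x ∉ cells l ∧ ∃ n : YPartition, cells n = insert x (cells l)

/-- `x` is a removable node of `l`. -/
def Removable (l : YPartition) (x : ℕ × ℕ) : Prop :=
  x ∈ cells l ∧ ∃ n : YPartition, cells n = cells l \ {x}

/-- The `e`-residue of a node `(c,d)`: `d - c mod e`. -/
def res (e : ℕ) (x : ℕ × ℕ) : ZMod e := (x.2 : ZMod e) - (x.1 : ZMod e)

/-- `N_i(λ,ν) = #{addable i-nodes of λ above x} - #{removable i-nodes of λ above x}`,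
where `i = res e x` and `y` is above `x` iff `y.1 < x.1`. -/
noncomputable def Nnum (e : ℕ) (l : YPartition) (x : ℕ × ℕ) : ℤ :=
  ({y | Addable l y ∧ res e y = res e x ∧ y.1 < x.1}.ncard : ℤ) -
  ({y | Removable l y ∧ res e y = res e x ∧ y.1 < x.1}.ncard : ℤ)

end YPartition
namespace YPartition

lemma mem_cells {p : YPartition} {x : ℕ × ℕ} : x ∈ cells p ↔ x.2 < p.parts x.1 := Iff.rfl

lemma cells_lower {p : YPartition} {x y : ℕ × ℕ} (h1 : y.1 ≤ x.1) (h2 : y.2 ≤ x.2)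
    (hx : x ∈ cells p) : y ∈ cells p :=
  lt_of_le_of_lt h2 (lt_of_lt_of_le hx (p.antitone h1))

lemma parts_eq_zero_of_length_le {p : YPartition} {i : ℕ} (h : p.length ≤ i) : p.parts i = 0 := by
  have hne : {N | ∀ i, N ≤ i → p.parts i = 0}.Nonempty := p.eventually_zero
  exact Nat.sInf_mem hne i h

lemma cells_finite (p : YPartition) : (cells p).Finite := by
  apply Set.Finite.subset ((Set.finite_Iio p.length).prod (Set.finite_Iio (p.parts 0 + 1)))
  rintro ⟨r, y⟩ hx
  have hx' : y < p.parts r := hx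
  constructor
  · by_contra hc
    simp only [Set.mem_Iio, not_lt] at hc
    rw [parts_eq_zero_of_length_le hc] at hx'
    omega
  · have := p.antitone (Nat.zero_le r)
    simp only [Set.mem_Iio]
    omega

lemma eq_of_cells_eq {p q : YPartition} (h : cells p = cells q) : p = q := by
  have hp : p.parts = q.parts := by
    funext r
    have key : ∀ y, y < p.parts r ↔ y < q.parts r := by
      intro y
      constructor
      · intro hy
        have hm : ((r, y) : ℕ × ℕ) ∈ cells p := hy
        rw [h] at hm; exact hm
      · intro hy
        have hm : ((r, y) : ℕ × ℕ) ∈ cells q := hy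
        rw [← h] at hm; exact hm
    have h1 : ¬ q.parts r < p.parts r := fun hlt => lt_irrefl _ ((key _).mp hlt)
    have h2 : ¬ p.parts r < q.parts r := fun hlt => lt_irrefl _ ((key _).mpr hlt)
    omega
  cases p; cases q; simpa using hp

section OfLowerSet

variable {n : YPartition} {S : Set (ℕ × ℕ)}

lemma rowLen_nonempty (hS : S ⊆ cells n) (r : ℕ) : {y | (r, y) ∉ S}.Nonempty :=
  ⟨n.parts r, fun h => Nat.lt_irrefl (n.parts r) (mem_cells.mp (hS h))⟩

lemma mem_rowLen (hS : S ⊆ cells n) (hrow : ∀ r y, (r, y + 1) ∈ S → (r, y) ∈ S) (r y : ℕ) :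
    (r, y) ∈ S ↔ y < sInf {y | (r, y) ∉ S} := by
  constructor
  · intro hy
    by_contra hc
    push_neg at hc
    have hmem : (r, sInf {y | (r, y) ∉ S}) ∉ S := Nat.sInf_mem (rowLen_nonempty hS r)
    have desc : ∀ d z, (r, z + d) ∈ S → (r, z) ∈ S := by
      intro d
      induction d with
      | zero => intro z hz; simpa using hz
      | succ d ih =>
        intro z hz
        have : (r, (z + 1) + d) ∈ S := by
          have : z + (d + 1) = (z + 1) + d := by omega
          rwa [this] at hz
        exact hrow _ _ (by simpa using ih (z + 1) this)
    have : (r, sInf {y | (r, y) ∉ S} + (y - sInf {y | (r, y) ∉ S})) ∈ S := by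
      have hyy : sInf {y | (r, y) ∉ S} + (y - sInf {y | (r, y) ∉ S}) = y := by omega
      rwa [hyy]
    exact hmem (desc _ _ this)
  · intro hy
    by_contra hc
    have := Nat.sInf_le (show y ∈ {y | (r, y) ∉ S} from hc)
    omega

noncomputable def ofLowerSet (n : YPartition) (S : Set (ℕ × ℕ)) (hS : S ⊆ cells n)
    (hrow : ∀ r y, (r, y + 1) ∈ S → (r, y) ∈ S)
    (hcol : ∀ r y, (r + 1, y) ∈ S → (r, y) ∈ S) : YPartition where
  parts r := sInf {y | (r, y) ∉ S}
  antitone := by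
    apply antitone_nat_of_succ_le
    intro r
    by_contra hc
    push_neg at hc
    have h1 : (r + 1, sInf {y | (r, y) ∉ S}) ∈ S := (mem_rowLen hS hrow (r + 1) _).2 hc
    have h2 := hcol _ _ h1
    have h3 := (mem_rowLen hS hrow r _).1 h2
    omega
  eventually_zero := by
    obtain ⟨N, hN⟩ := n.eventually_zero
    refine ⟨N, fun i hi => ?_⟩
    show sInf {y | (i, y) ∉ S} = 0
    have h1 : ((i, n.parts i) : ℕ × ℕ) ∉ S := fun h => Nat.lt_irrefl (n.parts i) (mem_cells.mp (hS h))
    have h2 := Nat.sInf_le (show n.parts i ∈ {y | (i, y) ∉ S} from h1)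
    rw [hN i hi] at h2
    omega

lemma cells_ofLowerSet (hS : S ⊆ cells n)
    (hrow : ∀ r y, (r, y + 1) ∈ S → (r, y) ∈ S)
    (hcol : ∀ r y, (r + 1, y) ∈ S → (r, y) ∈ S) :
    cells (ofLowerSet n S hS hrow hcol) = S := by
  ext ⟨r, y⟩
  rw [mem_cells]
  exact (mem_rowLen hS hrow r y).symm

end OfLowerSet

end YPartition
namespace YPartition

variable {e : ℕ} {c : ℕ → ℕ × ℕ} {R : Set (ℕ × ℕ)}

lemma ribbon_mem (h : IsRibbonC e c R) {z : ℕ × ℕ} : z ∈ R ↔ ∃ k, k < e ∧ c k = z := by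
  rw [h.1]
  constructor
  · rintro ⟨k, hk, rfl⟩; exact ⟨k, hk, rfl⟩
  · rintro ⟨k, hk, rfl⟩; exact ⟨k, hk, rfl⟩

lemma ribbon_pos (h : IsRibbonC e c R) :
    ∀ k, k < e → (c k).1 + (c 0).2 = (c k).2 + (c 0).1 + k := by
  intro k
  induction k with
  | zero => intro _; omega
  | succ k ih =>
    intro hk
    have hik := ih (by omega)
    rcases h.2.2 k hk with h1 | h2
    · have e1 : (c (k + 1)).1 = (c k).1 + 1 := by rw [h1]
      have e2 : (c (k + 1)).2 = (c k).2 := by rw [h1]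
      omega
    · obtain ⟨ha, hb⟩ := h2
      omega

lemma ribbon_col_le (h : IsRibbonC e c R) :
    ∀ k, k < e → (c k).2 ≤ (c 0).2 := by
  intro k
  induction k with
  | zero => intro _; omega
  | succ k ih =>
    intro hk
    have hik := ih (by omega)
    rcases h.2.2 k hk with h1 | h2
    · have e2 : (c (k + 1)).2 = (c k).2 := by rw [h1]
      omega
    · obtain ⟨ha, hb⟩ := h2
      omega

end YPartition
namespace YPartition

lemma key_removable (e : ℕ) {m : ℕ} (l n : YPartition)
    (R : Fin m → Set (ℕ × ℕ)) (c : Fin m → ℕ → ℕ × ℕ)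
    (hD : cells n \ cells l = ⋃ i, R i)
    (hdisj : Pairwise fun i j => Disjoint (R i) (R j))
    (hrib : ∀ i, IsRibbonC e (c i) (R i) ∧ HeadOK l (c i))
    (i : Fin m) (hmax : ∀ j, (c j 0).2 ≤ (c i 0).2) :
    ∀ k, k < e →
      (((c i k).1, (c i k).2 + 1) ∈ cells n → ((c i k).1, (c i k).2 + 1) ∈ R i) ∧
      (((c i k).1 + 1, (c i k).2) ∈ cells n → ((c i k).1 + 1, (c i k).2) ∈ R i) := by
  have hDs : ∀ j, R j ⊆ cells n \ cells l := by
    intro j; rw [hD]; exact Set.subset_iUnion R j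
  have hmemc : ∀ j k', k' < e → c j k' ∈ R j := fun j k' h =>
    (ribbon_mem (hrib j).1).2 ⟨k', h, rfl⟩
  have hfind : ∀ z : ℕ × ℕ, z ∈ cells n → z ∉ cells l → ∃ j, z ∈ R j := by
    intro z h1 h2
    have hz : z ∈ cells n \ cells l := ⟨h1, h2⟩
    rw [hD] at hz
    exact Set.mem_iUnion.mp hz
  intro k
  induction k using Nat.strong_induction_on with
  | _ k IH =>
    intro hk
    have hpos := ribbon_pos (hrib i).1
    have hcellik := hmemc i k hk
    have hnotl : c i k ∉ cells l := (hDs i hcellik).2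
    have hA : ((c i k).1, (c i k).2 + 1) ∈ cells n → ((c i k).1, (c i k).2 + 1) ∈ R i := by
      intro hn1
      have hn1' : (c i k).2 + 1 < n.parts (c i k).1 := hn1
      have hnl : ((c i k).1, (c i k).2 + 1) ∉ cells l := by
        intro hl
        have hl' : (c i k).2 + 1 < l.parts (c i k).1 := hl
        exact hnotl (show (c i k).2 < l.parts (c i k).1 by omega)
      rcases Nat.eq_zero_or_pos k with hk0 | hk0
      · subst hk0
        exfalso
        obtain ⟨j, hj⟩ := hfind _ hn1 hnl
        obtain ⟨k', hk', hck'⟩ := (ribbon_mem (hrib j).1).1 hj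
        have h1 := ribbon_col_le (hrib j).1 k' hk'
        have h1' : (c i 0).2 + 1 ≤ (c j 0).2 := by rw [hck'] at h1; exact h1
        have h2 := hmax j
        omega
      · have hk1 : k - 1 + 1 = k := by omega
        have hstep := (hrib i).1.2.2 (k - 1) (by omega)
        rw [hk1] at hstep
        rcases hstep with hdown | hleft
        · have e1 : (c i k).1 = (c i (k - 1)).1 + 1 := by rw [hdown]
          have e2 : (c i k).2 = (c i (k - 1)).2 := by rw [hdown]
          have hmono := n.antitone (show (c i (k - 1)).1 ≤ (c i k).1 by omega)
          have hupn : (c i (k - 1)).2 + 1 < n.parts (c i (k - 1)).1 := by omega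
          have hupR : ((c i (k - 1)).1, (c i (k - 1)).2 + 1) ∈ R i :=
            (IH (k - 1) (by omega) (by omega)).1 hupn
          obtain ⟨idx, hidx, hcidx⟩ := (ribbon_mem (hrib i).1).1 hupR
          have f1 : (c i idx).1 = (c i (k - 1)).1 := by rw [hcidx]
          have f2 : (c i idx).2 = (c i (k - 1)).2 + 1 := by rw [hcidx]
          have hp1 := hpos idx hidx
          have hp2 := hpos (k - 1) (by omega)
          have hBidx := (IH idx (by omega) (by omega)).2
          have harg : (c i idx).2 < n.parts ((c i idx).1 + 1) := by
            rw [f1, f2, ← e1]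
            omega
          have hgoal : ((c i idx).1 + 1, (c i idx).2) ∈ R i := hBidx harg
          have hpair : ((c i idx).1 + 1, (c i idx).2) = ((c i k).1, (c i k).2 + 1) := by
            rw [f1, f2, ← e1, ← e2]
          rwa [hpair] at hgoal
        · obtain ⟨h1, h2⟩ := hleft
          have hcc : c i (k - 1) = ((c i k).1, (c i k).2 + 1) := by
            rw [← Prod.mk.eta (p := c i (k - 1)), h1, h2]
          exact hcc ▸ hmemc i (k - 1) (by omega)
    refine ⟨hA, ?_⟩
    intro hn2
    have hn2' : (c i k).2 < n.parts ((c i k).1 + 1) := hn2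
    have hnl : ((c i k).1 + 1, (c i k).2) ∉ cells l := by
      intro hl
      have hl' : (c i k).2 < l.parts ((c i k).1 + 1) := hl
      have := l.antitone (show (c i k).1 ≤ (c i k).1 + 1 by omega)
      exact hnotl (show (c i k).2 < l.parts (c i k).1 by omega)
    obtain ⟨j, hj⟩ := hfind _ hn2 hnl
    by_cases hji : j = i
    · subst hji; exact hj
    · exfalso
      obtain ⟨k', hk', hck'⟩ := (ribbon_mem (hrib j).1).1 hj
      have hk'0 : 0 < k' := by
        rcases Nat.eq_zero_or_pos k' with h0 | h0
        · exfalso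
          rw [h0] at hck'
          rcases (hrib j).2 with hh | hh
          · rw [hck'] at hh
            exact absurd (show (c i k).1 + 1 = 0 from hh) (by omega)
          · rw [hck'] at hh
            have hh' : (c i k).2 < l.parts ((c i k).1 + 1 - 1) := hh
            exact hnotl (show (c i k).2 < l.parts (c i k).1 by
              have : (c i k).1 + 1 - 1 = (c i k).1 := by omega
              rwa [this] at hh')
        · exact h0
      have hk'1 : k' - 1 + 1 = k' := by omega
      have hstepj := (hrib j).1.2.2 (k' - 1) (by omega)
      rw [hk'1, hck'] at hstepj
      rcases hstepj with hdown | hleft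
      · have g := Prod.ext_iff.mp hdown
        have g1 : (c i k).1 + 1 = (c j (k' - 1)).1 + 1 := g.1
        have g2 : (c i k).2 = (c j (k' - 1)).2 := g.2
        have hcc : c j (k' - 1) = c i k := by
          rw [← Prod.mk.eta (p := c j (k' - 1)), ← Prod.mk.eta (p := c i k), g2]
          congr 1
          omega
        have hmemj : c i k ∈ R j := hcc ▸ hmemc j (k' - 1) (by omega)
        exact Set.disjoint_left.mp (hdisj hji) hmemj hcellik
      · obtain ⟨p1, p2⟩ := hleft
        have q1 : (c j (k' - 1)).2 = (c i k).2 + 1 := p1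
        have q2 : (c i k).1 + 1 = (c j (k' - 1)).1 := p2
        have hprev : c j (k' - 1) ∈ R j := hmemc j (k' - 1) (by omega)
        have hprevn : (c j (k' - 1)).2 < n.parts (c j (k' - 1)).1 := (hDs j hprev).1
        have hupn : (c i k).2 + 1 < n.parts (c i k).1 := by
          have := n.antitone (show (c i k).1 ≤ (c j (k' - 1)).1 by omega)
          omega
        have hupR := hA hupn
        obtain ⟨idx, hidx, hcidx⟩ := (ribbon_mem (hrib i).1).1 hupR
        have f1 : (c i idx).1 = (c i k).1 := by rw [hcidx]
        have f2 : (c i idx).2 = (c i k).2 + 1 := by rw [hcidx]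
        have hp1 := hpos idx hidx
        have hpk := hpos k hk
        have hBidx := (IH idx (by omega) (by omega)).2
        have harg : (c i idx).2 < n.parts ((c i idx).1 + 1) := by
          rw [f1, f2]
          have hpn := hprevn
          rw [q1, ← q2] at hpn
          exact hpn
        have hgoal := hBidx harg
        have hpair : ((c i idx).1 + 1, (c i idx).2) = ((c i k).1 + 1, (c i k).2 + 1) := by
          rw [f1, f2]
        rw [hpair] at hgoal
        have hprev' : ((c i k).1 + 1, (c i k).2 + 1) ∈ R j := by
          have hcc : c j (k' - 1) = ((c i k).1 + 1, (c i k).2 + 1) := by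
            rw [← Prod.mk.eta (p := c j (k' - 1)), q1, ← q2]
          rwa [hcc] at hprev
        exact Set.disjoint_left.mp (hdisj hji) hprev' hgoal

end YPartition
namespace YPartition

lemma hadd_chain (e : ℕ) :
    ∀ m s (l n : YPartition), HAddSpin e m s l n →
      Relation.ReflTransGen (RemoveRibbon e) n l := by
  intro m
  induction m with
  | zero =>
    intro s l n h
    obtain ⟨hsub, R, c, hD, hdisj, hrc, hs⟩ := h
    have hempty : cells n \ cells l = ∅ := by
      rw [hD]
      exact Set.iUnion_of_empty R
    have hcells : cells n = cells l := by
      apply Set.Subset.antisymm _ hsub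
      intro x hx
      by_contra hc
      have : x ∈ cells n \ cells l := ⟨hx, hc⟩
      rw [hempty] at this
      exact this
    rw [eq_of_cells_eq hcells]
  | succ m IHm =>
    intro s l n h
    obtain ⟨hsub, R, c, hD, hdisj, hrc, hs⟩ := h
    obtain ⟨i, hmax⟩ := Finite.exists_max (fun j : Fin (m + 1) => (c j 0).2)
    have hDs : ∀ j, R j ⊆ cells n \ cells l := by
      intro j; rw [hD]; exact Set.subset_iUnion R j
    have hRn : R i ⊆ cells n := fun x hx => (hDs i hx).1
    have key := key_removable e l n R c hD hdisj hrc i hmax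
    have hA' : ∀ z ∈ R i, (z.1, z.2 + 1) ∈ cells n → (z.1, z.2 + 1) ∈ R i := by
      intro z hz hn1
      obtain ⟨k, hk, hck⟩ := (ribbon_mem (hrc i).1).1 hz
      have hkey := (key k hk).1
      rw [hck] at hkey
      exact hkey hn1
    have hB' : ∀ z ∈ R i, (z.1 + 1, z.2) ∈ cells n → (z.1 + 1, z.2) ∈ R i := by
      intro z hz hn1
      obtain ⟨k, hk, hck⟩ := (ribbon_mem (hrc i).1).1 hz
      have hkey := (key k hk).2
      rw [hck] at hkey
      exact hkey hn1
    have hS : cells n \ R i ⊆ cells n := Set.diff_subset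
    have hrow : ∀ r y, (r, y + 1) ∈ cells n \ R i → (r, y) ∈ cells n \ R i := by
      rintro r y ⟨hn1, hr1⟩
      have hn1' : y + 1 < n.parts r := hn1
      refine ⟨show y < n.parts r by omega, fun hR => hr1 ?_⟩
      exact hA' (r, y) hR hn1
    have hcol : ∀ r y, (r + 1, y) ∈ cells n \ R i → (r, y) ∈ cells n \ R i := by
      rintro r y ⟨hn1, hr1⟩
      have hn1' : y < n.parts (r + 1) := hn1
      have hmono := n.antitone (show r ≤ r + 1 by omega)
      refine ⟨show y < n.parts r by omega, fun hR => hr1 ?_⟩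
      exact hB' (r, y) hR hn1
    set n' := ofLowerSet n (cells n \ R i) hS hrow hcol with hn'def
    have hcn' : cells n' = cells n \ R i := cells_ofLowerSet hS hrow hcol
    have hstep : RemoveRibbon e n n' := by
      refine ⟨?_, c i, ?_⟩
      · rw [hcn']; exact Set.diff_subset
      · rw [hcn', Set.diff_diff_cancel_left hRn]
        exact (hrc i).1
    have happ : HAddSpin e m (∑ j : Fin m, spinOf e (c (i.succAbove j))) l n' := by
      refine ⟨?_, fun j => R (i.succAbove j), fun j => c (i.succAbove j), ?_, ?_,
        fun j => hrc _, rfl⟩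
      · intro x hx
        rw [hcn']
        exact ⟨hsub hx, fun hR => (hDs i hR).2 hx⟩
      · rw [hcn']
        ext x
        simp only [Set.mem_diff, Set.mem_iUnion]
        constructor
        · rintro ⟨⟨hxn, hxRi⟩, hxl⟩
          have hxU : x ∈ ⋃ j, R j := by rw [← hD]; exact ⟨hxn, hxl⟩
          obtain ⟨j', hj'⟩ := Set.mem_iUnion.mp hxU
          have hne : j' ≠ i := fun hh => hxRi (hh ▸ hj')
          obtain ⟨j, hj⟩ := Fin.exists_succAbove_eq hne
          exact ⟨j, hj ▸ hj'⟩
        · rintro ⟨j, hj⟩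
          have hxD := hDs _ hj
          refine ⟨⟨hxD.1, fun hxRi => ?_⟩, hxD.2⟩
          exact Set.disjoint_left.mp (hdisj (Fin.succAbove_ne i j)) hj hxRi
      · intro j j' hne
        exact hdisj (Fin.succAbove_right_injective.ne hne)
    exact Relation.ReflTransGen.head hstep (IHm _ l n' happ)

lemma exists_core_aux (e : ℕ) (he : 0 < e) :
    ∀ N (p : YPartition), (cells p).ncard ≤ N → ∃ κ, IsECoreOf e κ p := by
  intro N
  induction N with
  | zero =>
    intro p hp
    by_cases h : ∃ q, RemoveRibbon e p q
    · obtain ⟨q, hq⟩ := h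
      exfalso
      obtain ⟨cc, hc⟩ := hq.2
      have hc0 : cc 0 ∈ cells p \ cells q := by
        rw [hc.1]; exact ⟨0, he, rfl⟩
      have hss : cells q ⊂ cells p := by
        refine ⟨hq.1, fun hsup => ?_⟩
        exact hc0.2 (hsup hc0.1)
      have hlt : (cells q).ncard < (cells p).ncard :=
        Set.ncard_lt_ncard hss (cells_finite p)
      omega
    · exact ⟨p, Relation.ReflTransGen.refl, h⟩
  | succ N IH =>
    intro p hp
    by_cases h : ∃ q, RemoveRibbon e p q
    · obtain ⟨q, hq⟩ := h
      obtain ⟨cc, hc⟩ := hq.2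
      have hc0 : cc 0 ∈ cells p \ cells q := by
        rw [hc.1]; exact ⟨0, he, rfl⟩
      have hss : cells q ⊂ cells p := by
        refine ⟨hq.1, fun hsup => ?_⟩
        exact hc0.2 (hsup hc0.1)
      have hlt : (cells q).ncard < (cells p).ncard :=
        Set.ncard_lt_ncard hss (cells_finite p)
      obtain ⟨κ, h1, h2⟩ := IH q (by omega)
      exact ⟨κ, Relation.ReflTransGen.head hq h1, h2⟩
    · exact ⟨p, Relation.ReflTransGen.refl, h⟩

end YPartition

open YPartition
/-- if `λ →_{m:e} ν` then `λ` and `ν` have the same `e`-core. -/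
theorem hadd_same_core (e m : ℕ) (he : 2 ≤ e) (l n : YPartition)
    (h : HAdd e m l n) :
    ∃ κ, IsECoreOf e κ l ∧ IsECoreOf e κ n := by
  obtain ⟨s, hs⟩ := h
  have hchain := hadd_chain e m s l n hs
  obtain ⟨κ, h1, h2⟩ := exists_core_aux e (by omega) (cells l).ncard l le_rfl
  exact ⟨κ, ⟨h1, h2⟩, ⟨hchain.trans h1, h2⟩⟩
end

section
/- Let λ be a partition of length at most k represented on the e-abacus with k beads, and let x be an addable node of λ of e-residue i corresponding to moving a bead from position β_x on runner r−1 to position β_x+1 on runner r. Then N_i(λ,ν) = A − B, where ν is the partition obtained by adding x, A is the number of beads on runner r−1 at positions greater than β_x whose adjacent position on runner r is empty, and B is the number of beads on runner r at positions whose adjacent position on runner r−1 is empty and which exceed β_x. -/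
open Finset

/-- A partition: a weakly decreasing, eventually-zero sequence of naturals.
`parts i` is the `(i+1)`-st part (0-indexed). -/
structure AbacusPartition where
  parts : ℕ → ℕ
  antitone : ∀ ⦃i j : ℕ⦄, i ≤ j → parts j ≤ parts i
  eventually_zero : ∃ N, ∀ i, N ≤ i → parts i = 0

namespace AbacusPartition

/-- The length of a partition: the number of nonzero parts. -/
noncomputable def length (l : AbacusPartition) : ℕ :=
  sInf {N | ∀ i, N ≤ i → l.parts i = 0}

/-- The size `|λ|` of a partition: the sum of its parts. -/
noncomputable def size (l : AbacusPartition) : ℕ :=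
  ∑ i ∈ Finset.range l.length, l.parts i

/-- The beta-numbers of `l` with respect to `k` beads: `λ_i + k - i` for `i = 1, …, k`
(here 0-indexed: bead for row `i+1` sits at `parts i + (k - 1 - i)`). -/
def betaSet (l : AbacusPartition) (k : ℕ) : Finset ℕ :=
  (Finset.range k).image fun i => l.parts i + (k - 1 - i)

/-- Dominance order: `l ⊵ m`. -/
def Dominates (l m : AbacusPartition) : Prop :=
  ∀ j, ∑ i ∈ Finset.range j, m.parts i ≤ ∑ i ∈ Finset.range j, l.parts i

/-- Inserting an empty runner before runner `α` into an `e`-abacus: a bead at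
position `m*e + r` moves to `m*(e+1) + r` if `r < α` and to `m*(e+1) + r + 1` otherwise. -/
def insRunner (e α p : ℕ) : ℕ :=
  (p / e) * (e + 1) + p % e + (if p % e < α then 0 else 1)

/-- `lp` is the partition `λ⁺` obtained from `l` by inserting an empty runner at
position `α` into its `e`-abacus with `k` beads. -/
def IsPlus (e α k : ℕ) (l lp : AbacusPartition) : Prop :=
  lp.length ≤ k ∧ lp.betaSet k = (l.betaSet k).image (insRunner e α)

/-- A partition is `d`-regular if no `d` of its nonzero parts are equal. -/
def Regular (d : ℕ) (l : AbacusPartition) : Prop :=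
  ¬ ∃ i, l.parts i ≠ 0 ∧ l.parts (i + (d - 1)) = l.parts i

/-- The Young diagram of a partition, as a set of (row, column) cells, 0-indexed. -/
def cells (l : AbacusPartition) : Set (ℕ × ℕ) := {x | x.2 < l.parts x.1}

/-- `c 0, c 1, …, c (e-1)` are the successive cells of a ribbon: each next cell is
directly below, or directly to the left of, the previous cell. -/
def RibbonSteps (e : ℕ) (c : ℕ → ℕ × ℕ) : Prop :=
  ∀ i, i + 1 < e →
    (c (i + 1) = ((c i).1 + 1, (c i).2)) ∨
    ((c i).2 = (c (i + 1)).2 + 1 ∧ (c (i + 1)).1 = (c i).1)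

/-- `R` is an `e`-ribbon with cell enumeration `c` (head `c 0`). -/
def IsRibbonC (e : ℕ) (c : ℕ → ℕ × ℕ) (R : Set (ℕ × ℕ)) : Prop :=
  R = c '' (Set.Iio e) ∧ Set.InjOn c (Set.Iio e) ∧ RibbonSteps e c

/-- The spin of an `e`-ribbon: the number of vertical steps. -/
def spinOf (e : ℕ) (c : ℕ → ℕ × ℕ) : ℕ :=
  ((Finset.range (e - 1)).filter fun i => (c (i + 1)).1 = (c i).1 + 1).card

/-- The head of the ribbon lies in row 1 or directly below a cell of `l`. -/
def HeadOK (l : AbacusPartition) (c : ℕ → ℕ × ℕ) : Prop :=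
  (c 0).1 = 0 ∨ ((c 0).1 - 1, (c 0).2) ∈ cells l

/-- `l` is obtained from `n` by removing a single rim hook (ribbon) of length `e`. -/
def RemoveRibbon (e : ℕ) (n l : AbacusPartition) : Prop :=
  cells l ⊆ cells n ∧ ∃ c, IsRibbonC e c (cells n \ cells l)

/-- `κ` is the `e`-core of `l`: obtained by repeatedly removing `e`-rim-hooks,
and no further `e`-rim-hook can be removed. -/
def IsECoreOf (e : ℕ) (κ l : AbacusPartition) : Prop :=
  Relation.ReflTransGen (RemoveRibbon e) l κ ∧ ¬ ∃ m, RemoveRibbon e κ m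

/-- `l` has `e`-weight `w`: `|l| = |e-core of l| + w * e`. -/
def EWeight (e : ℕ) (l : AbacusPartition) (w : ℕ) : Prop :=
  ∃ κ, IsECoreOf e κ l ∧ l.size = κ.size + w * e

/-- `λ →_{m:e} ν` with total spin `s`: `[ν] \ [λ]` is a disjoint union of `m`
`e`-ribbons, each of whose heads lies in row 1 or directly below a cell of `λ`,
the sum of whose spins is `s`. -/
def HAddSpin (e m s : ℕ) (l n : AbacusPartition) : Prop :=
  cells l ⊆ cells n ∧
  ∃ (R : Fin m → Set (ℕ × ℕ)) (c : Fin m → ℕ → ℕ × ℕ),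
    ((cells n \ cells l) = ⋃ i, R i) ∧
    (Pairwise fun i j => Disjoint (R i) (R j)) ∧
    (∀ i, IsRibbonC e (c i) (R i) ∧ HeadOK l (c i)) ∧
    s = ∑ i, spinOf e (c i)

/-- `λ →_{m:e} ν`. -/
def HAdd (e m : ℕ) (l n : AbacusPartition) : Prop := ∃ s, HAddSpin e m s l n

/-- `x` is an addable node of `l`. -/
def Addable (l : AbacusPartition) (x : ℕ × ℕ) : Prop :=
  x ∉ cells l ∧ ∃ n : AbacusPartition, cells n = insert x (cells l)

/-- `x` is a removable node of `l`. -/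
def Removable (l : AbacusPartition) (x : ℕ × ℕ) : Prop :=
  x ∈ cells l ∧ ∃ n : AbacusPartition, cells n = cells l \ {x}

/-- The `e`-residue of a node `(c,d)`: `d - c mod e`. -/
def res (e : ℕ) (x : ℕ × ℕ) : ZMod e := (x.2 : ZMod e) - (x.1 : ZMod e)

/-- `N_i(λ,ν) = #{addable i-nodes of λ above x} - #{removable i-nodes of λ above x}`,
where `i = res e x` and `y` is above `x` iff `y.1 < x.1`. -/
noncomputable def Nnum (e : ℕ) (l : AbacusPartition) (x : ℕ × ℕ) : ℤ :=
  ({y | Addable l y ∧ res e y = res e x ∧ y.1 < x.1}.ncard : ℤ) -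
  ({y | Removable l y ∧ res e y = res e x ∧ y.1 < x.1}.ncard : ℤ)

end AbacusPartition

open AbacusPartition
namespace AuxNAB

lemma parts_eq_zero (l : AbacusPartition) {i : ℕ} (h : l.length ≤ i) : l.parts i = 0 := by
  have hne : {N | ∀ j, N ≤ j → l.parts j = 0}.Nonempty := l.eventually_zero
  exact Nat.sInf_mem hne i h

def beta (l : AbacusPartition) (k a : ℕ) : ℕ := l.parts a + (k - 1 - a)

lemma beta_lt (l : AbacusPartition) {k a b : ℕ} (hab : a < b) (hb : b < k) :
    beta l k b < beta l k a := by
  have h1 : l.parts b ≤ l.parts a := l.antitone hab.le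
  unfold beta; omega

lemma beta_lt_iff (l : AbacusPartition) {k a b : ℕ} (ha : a < k) (hb : b < k) :
    beta l k b < beta l k a ↔ a < b := by
  constructor
  · intro h
    by_contra hc
    push_neg at hc
    rcases Nat.lt_or_ge b a with h2 | h2
    · exact absurd (beta_lt l h2 ha) (by omega)
    · have : a = b := by omega
      subst this; omega
  · intro h; exact beta_lt l h hb

lemma mem_betaSet (l : AbacusPartition) {k q : ℕ} :
    q ∈ l.betaSet k ↔ ∃ a, a < k ∧ beta l k a = q := by
  simp [AbacusPartition.betaSet, beta, Finset.mem_image, Finset.mem_range]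

lemma beta_succ_not_mem_iff (l : AbacusPartition) {k a : ℕ} (ha : a < k) :
    beta l k a + 1 ∉ l.betaSet k ↔ (a = 0 ∨ l.parts a < l.parts (a - 1)) := by
  constructor
  · intro h
    by_contra hc
    push_neg at hc
    obtain ⟨ha0, hle⟩ := hc
    have heq : l.parts (a - 1) = l.parts a :=
      le_antisymm hle (l.antitone (by omega))
    exact h ((mem_betaSet l).2 ⟨a - 1, by omega, by unfold beta; omega⟩)
  · intro h hmem
    obtain ⟨b, hbk, hbeq⟩ := (mem_betaSet l).1 hmem
    have hb_lt : b < a := by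
      have : beta l k a < beta l k b := by omega
      exact ((beta_lt_iff l hbk ha).1 this)
    have hb1 : b = a - 1 := by
      by_contra hne
      have hblt : b < a - 1 := by omega
      have h1 : beta l k (a - 1) < beta l k b := beta_lt l hblt (by omega)
      have h2 : beta l k a < beta l k (a - 1) := beta_lt l (by omega) ha
      omega
    subst hb1
    have : l.parts (a - 1) = l.parts a := by unfold beta at hbeq; omega
    rcases h with h | h
    · omega
    · omega

lemma beta_pred_iff (l : AbacusPartition) {k a : ℕ} (hl : l.length ≤ k) (ha : a < k) :
    (1 ≤ beta l k a ∧ beta l k a - 1 ∉ l.betaSet k) ↔ l.parts (a + 1) < l.parts a := by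
  constructor
  · rintro ⟨h1, h2⟩
    by_contra hc
    push_neg at hc
    have heq : l.parts (a + 1) = l.parts a :=
      le_antisymm (l.antitone (by omega)) hc
    rcases Nat.lt_or_ge (a + 1) k with hak | hak
    · exact h2 ((mem_betaSet l).2 ⟨a + 1, hak, by unfold beta; omega⟩)
    · have : l.parts (a + 1) = 0 := parts_eq_zero l (by omega)
      unfold beta at h1; omega
  · intro h
    have hpos : 1 ≤ l.parts a := by omega
    refine ⟨by unfold beta; omega, ?_⟩
    intro hmem
    obtain ⟨b, hbk, hbeq⟩ := (mem_betaSet l).1 hmem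
    have hba1 : 1 ≤ beta l k a := by unfold beta; omega
    have hab : a < b := by
      refine (beta_lt_iff l ha hbk).1 ?_
      omega
    have hb1 : b = a + 1 := by
      by_contra hne
      have h1 : beta l k b < beta l k (a + 1) := beta_lt l (by omega) hbk
      have h2 : beta l k (a + 1) < beta l k a := beta_lt l (by omega) (by omega)
      omega
    subst hb1
    unfold beta at hbeq
    omega

end AuxNAB

namespace AuxNAB

lemma mem_cells {l : AbacusPartition} {b c : ℕ} : (b, c) ∈ cells l ↔ c < l.parts b :=
  Iff.rfl

lemma addable_of (l : AbacusPartition) (a : ℕ) (h : a = 0 ∨ l.parts a < l.parts (a - 1)) :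
    Addable l (a, l.parts a) := by
  constructor
  · simp [mem_cells]
  · refine ⟨⟨fun b => if b = a then l.parts a + 1 else l.parts b, ?_, ?_⟩, ?_⟩
    · intro i j hij
      by_cases hj : j = a <;> by_cases hi : i = a
    
      · rw [if_pos hj, if_pos hi]
      · rw [if_pos hj, if_neg hi]
        rcases h with h | h
        · omega
        · have h2 := l.antitone (show i ≤ a - 1 by omega)
          omega
      · rw [if_neg hj, if_pos hi]
        rw [hi] at hij
        have := l.antitone hij
        omega
      · rw [if_neg hj, if_neg hi]
        exact l.antitone hij
    · obtain ⟨N, hN⟩ := l.eventually_zero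
      refine ⟨N + a + 1, fun i hi => ?_⟩
      rw [if_neg (by omega)]
      exact hN i (by omega)
    · ext ⟨b, c⟩
      simp only [cells, Set.mem_setOf_eq, Set.mem_insert_iff, Prod.mk.injEq]
      by_cases hb : b = a
      · simp only [hb]
        simp only [if_true, true_and]
        omega
      · simp [hb]

lemma addable_iff (l : AbacusPartition) (y : ℕ × ℕ) :
    Addable l y ↔ y.2 = l.parts y.1 ∧ (y.1 = 0 ∨ l.parts y.1 < l.parts (y.1 - 1)) := by
  obtain ⟨a, c⟩ := y
  constructor
  · rintro ⟨hx, n, hn⟩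
    simp only [mem_cells, not_lt] at hx
    have hmem : (a, c) ∈ cells n := by rw [hn]; exact Set.mem_insert _ _
    rw [mem_cells] at hmem
    have hc : c = l.parts a := by
      by_contra hne
      have hlt : l.parts a < c := by omega
      have h1 : (a, l.parts a) ∈ cells n := by rw [mem_cells]; omega
      rw [hn] at h1
      rcases h1 with h1 | h1
      · rw [Prod.mk.injEq] at h1; omega
      · rw [mem_cells] at h1; omega
    refine ⟨hc, ?_⟩
    by_contra hcon
    push_neg at hcon
    obtain ⟨ha0, hle⟩ := hcon
    have heq : l.parts (a - 1) = l.parts a :=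
      le_antisymm hle (l.antitone (by omega))
    have h1 : (a - 1, c) ∈ cells n := by
      rw [mem_cells]
      exact lt_of_lt_of_le hmem (n.antitone (by omega))
    rw [hn] at h1
    rcases h1 with h1 | h1
    · rw [Prod.mk.injEq] at h1; omega
    · rw [mem_cells] at h1; omega
  · rintro ⟨hc, h⟩
    dsimp only at hc h
    subst hc
    exact addable_of l a h

lemma removable_of (l : AbacusPartition) (a : ℕ) (h : l.parts (a + 1) < l.parts a) :
    Removable l (a, l.parts a - 1) := by
  constructor
  · rw [mem_cells]; omega
  · refine ⟨⟨fun b => if b = a then l.parts a - 1 else l.parts b, ?_, ?_⟩, ?_⟩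
    · intro i j hij
      by_cases hj : j = a <;> by_cases hi : i = a
      · rw [if_pos hj, if_pos hi]
      · rw [if_pos hj, if_neg hi]
        have := l.antitone (show i ≤ a by omega)
        omega
      · rw [if_neg hj, if_pos hi]
        rw [hi] at hij
        have := l.antitone (show a + 1 ≤ j by omega)
        omega
      · rw [if_neg hj, if_neg hi]
        exact l.antitone hij
    · obtain ⟨N, hN⟩ := l.eventually_zero
      refine ⟨N + a + 1, fun i hi => ?_⟩
      rw [if_neg (by omega)]
      exact hN i (by omega)
    · ext ⟨b, c⟩
      simp only [cells, Set.mem_setOf_eq, Set.mem_diff, Set.mem_singleton_iff,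
        Prod.mk.injEq]
      by_cases hb : b = a
      · simp only [hb]
        simp only [if_true, true_and]
        omega
      · simp [hb]

lemma removable_iff (l : AbacusPartition) (y : ℕ × ℕ) :
    Removable l y ↔ y.2 + 1 = l.parts y.1 ∧ l.parts (y.1 + 1) < l.parts y.1 := by
  obtain ⟨a, c⟩ := y
  constructor
  · rintro ⟨hx, n, hn⟩
    rw [mem_cells] at hx
    have hnot : (a, c) ∉ cells n := by
      rw [hn]; simp
    rw [mem_cells] at hnot
    push_neg at hnot
    have hc : c + 1 = l.parts a := by
      by_contra hne
      have h1 : (a, c + 1) ∈ cells n := by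
        rw [hn]
        refine ⟨by rw [mem_cells]; omega, by simp⟩
      rw [mem_cells] at h1
      omega
    refine ⟨hc, ?_⟩
    by_contra hcon
    push_neg at hcon
    have heq : l.parts (a + 1) = l.parts a :=
      le_antisymm (l.antitone (by omega)) hcon
    have h1 : (a + 1, c) ∈ cells n := by
      rw [hn]
      refine ⟨by rw [mem_cells]; omega, by simp⟩
    rw [mem_cells] at h1
    have := n.antitone (show a ≤ a + 1 by omega)
    omega
  · rintro ⟨hc, h⟩
    dsimp only at hc h
    have : c = l.parts a - 1 := by omega
    subst this
    exact removable_of l a h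

end AuxNAB

namespace AuxNAB

lemma res_eq_iff (e : ℕ) {k a b : ℕ} (ha : a < k) (hb : b < k) (u v : ℕ) :
    res e (a, u) = res e (b, v) ↔ (u + (k - 1 - a)) % e = (v + (k - 1 - b)) % e := by
  have hka : a ≤ k - 1 := by omega
  have hkb : b ≤ k - 1 := by omega
  have key : res e (a, u) = res e (b, v) ↔
      ((u + (k - 1 - a) : ℕ) : ZMod e) = ((v + (k - 1 - b) : ℕ) : ZMod e) := by
    constructor
    · intro h
      have h' : (u : ZMod e) - a = (v : ZMod e) - b := h
      push_cast [Nat.cast_sub hka, Nat.cast_sub hkb]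
      linear_combination h'
    · intro h
      show (u : ZMod e) - a = (v : ZMod e) - b
      push_cast [Nat.cast_sub hka, Nat.cast_sub hkb] at h
      linear_combination h
  rw [key]
  exact ZMod.natCast_eq_natCast_iff _ _ _

lemma mod_shift {e q p : ℕ} (hq : 1 ≤ q) :
    (q - 1) % e = p % e ↔ q % e = (p + 1) % e := by
  have h1 : q - 1 + 1 = q := by omega
  constructor
  · intro h
    have h2 : (q - 1) + 1 ≡ p + 1 [MOD e] := Nat.ModEq.add_right 1 h
    rwa [h1] at h2
  · intro h
    have h2 : (q - 1) + 1 ≡ p + 1 [MOD e] := by rwa [h1]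
    exact Nat.ModEq.add_right_cancel' 1 h2

end AuxNAB

namespace AuxNAB

lemma beta_injOn (l : AbacusPartition) (k : ℕ) :
    Set.InjOn (beta l k) (Finset.range k : Finset ℕ) := by
  intro a ha b hb hab
  simp only [Finset.coe_range, Set.mem_Iio] at ha hb
  by_contra hne
  rcases Nat.lt_or_ge a b with h | h
  · have := beta_lt l h hb; omega
  · have := beta_lt l (show b < a by omega) ha; omega

lemma filter_betaSet_card (l : AbacusPartition) (k : ℕ) (P : ℕ → Prop) [DecidablePred P] :
    ((l.betaSet k).filter P).card
      = ((Finset.range k).filter fun a => P (beta l k a)).card := by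
  have h : l.betaSet k = (Finset.range k).image (beta l k) := rfl
  rw [h, Finset.filter_image]
  exact Finset.card_image_of_injOn
    ((beta_injOn l k).mono (Finset.coe_subset.2 (Finset.filter_subset _ _)))

end AuxNAB


/-- `N_i(λ,ν) = A - B` where `x` is the addable `i`-node
corresponding to moving the bead at `β_x = p` to `p + 1`, `A` counts beads on
the runner of `p` above `p` whose neighbour on the next runner is empty, and `B`
counts beads on the next runner exceeding `p` whose neighbour on the runner of
`p` is empty. -/
theorem N_eq_A_sub_B (e k : ℕ) (he : 2 ≤ e) (l : AbacusPartition) (hl : l.length ≤ k)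
    (x : ℕ × ℕ) (hx : Addable l x) (hxk : x.1 < k)
    (p : ℕ) (hp : p = x.2 + k - 1 - x.1) :
    Nnum e l x =
      (((l.betaSet k).filter fun q =>
          q % e = p % e ∧ p < q ∧ (q + 1) ∉ l.betaSet k).card : ℤ) -
      (((l.betaSet k).filter fun q =>
          q % e = (p + 1) % e ∧ p < q ∧ 1 ≤ q ∧ (q - 1) ∉ l.betaSet k).card : ℤ) := by
  classical
  obtain ⟨hc, hadd⟩ := (AuxNAB.addable_iff l x).1 hx
  have hpx : x.2 + (k - 1 - x.1) = p := by omega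
  have hpb : p = AuxNAB.beta l k x.1 := by unfold AuxNAB.beta; omega
  set FA : Finset ℕ := (Finset.range k).filter fun a =>
      AuxNAB.beta l k a % e = p % e ∧ p < AuxNAB.beta l k a ∧
      (AuxNAB.beta l k a + 1) ∉ l.betaSet k with hFA
  set FB : Finset ℕ := (Finset.range k).filter fun a =>
      AuxNAB.beta l k a % e = (p + 1) % e ∧ p < AuxNAB.beta l k a ∧
      (1 ≤ AuxNAB.beta l k a ∧ AuxNAB.beta l k a - 1 ∉ l.betaSet k) with hFB
  -- the row index is < x.1 iff p < beta
  have hrow : ∀ a, a < k → (p < AuxNAB.beta l k a ↔ a < x.1) := by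
    intro a hak
    rw [hpb]
    exact AuxNAB.beta_lt_iff l hak hxk
  -- A side set equality
  have hA : {y | Addable l y ∧ res e y = res e x ∧ y.1 < x.1}
      = ↑(FA.image fun a => (a, l.parts a)) := by
    ext y
    simp only [Set.mem_setOf_eq, Finset.coe_image, Set.mem_image, Finset.mem_coe,
      hFA, Finset.mem_filter, Finset.mem_range]
    constructor
    · rintro ⟨hy, hres, hlt⟩
      obtain ⟨hy2, hy1⟩ := (AuxNAB.addable_iff l y).1 hy
      have hyk : y.1 < k := by omega
      refine ⟨y.1, ⟨hyk, ?_, (hrow y.1 hyk).2 hlt,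
        (AuxNAB.beta_succ_not_mem_iff l hyk).2 hy1⟩, ?_⟩
      · have h1 := (AuxNAB.res_eq_iff e hyk hxk y.2 x.2).1 hres
        have h2 : y.2 + (k - 1 - y.1) = AuxNAB.beta l k y.1 := by
          unfold AuxNAB.beta; omega
        rw [h2, hpx] at h1
        exact h1
      · rw [← hy2]
    · rintro ⟨a, ⟨hak, hmod, hplt, hnm⟩, rfl⟩
      refine ⟨AuxNAB.addable_of l a ((AuxNAB.beta_succ_not_mem_iff l hak).1 hnm),
        ?_, (hrow a hak).1 hplt⟩
      rw [AuxNAB.res_eq_iff e hak hxk (l.parts a) x.2, hpx]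
      exact hmod
  -- B side set equality
  have hB : {y | Removable l y ∧ res e y = res e x ∧ y.1 < x.1}
      = ↑(FB.image fun a => (a, l.parts a - 1)) := by
    ext y
    simp only [Set.mem_setOf_eq, Finset.coe_image, Set.mem_image, Finset.mem_coe,
      hFB, Finset.mem_filter, Finset.mem_range]
    constructor
    · rintro ⟨hy, hres, hlt⟩
      obtain ⟨hy2, hy1⟩ := (AuxNAB.removable_iff l y).1 hy
      have hyk : y.1 < k := by omega
      have hbp := (AuxNAB.beta_pred_iff l hl hyk).2 hy1
      refine ⟨y.1, ⟨hyk, ?_, (hrow y.1 hyk).2 hlt, hbp⟩, ?_⟩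
      · have h1 := (AuxNAB.res_eq_iff e hyk hxk y.2 x.2).1 hres
        have h2 : y.2 + (k - 1 - y.1) = AuxNAB.beta l k y.1 - 1 := by
          unfold AuxNAB.beta; omega
        rw [h2, hpx] at h1
        exact (AuxNAB.mod_shift hbp.1).1 h1
      · have : l.parts y.1 - 1 = y.2 := by omega
        rw [this]
    · rintro ⟨a, ⟨hak, hmod, hplt, hbp⟩, rfl⟩
      have hstep := (AuxNAB.beta_pred_iff l hl hak).1 hbp
      refine ⟨AuxNAB.removable_of l a hstep, ?_, (hrow a hak).1 hplt⟩
      rw [AuxNAB.res_eq_iff e hak hxk (l.parts a - 1) x.2, hpx]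
      have h2 : l.parts a - 1 + (k - 1 - a) = AuxNAB.beta l k a - 1 := by
        unfold AuxNAB.beta; omega
      rw [h2]
      exact (AuxNAB.mod_shift hbp.1).2 hmod
  have cardA : {y | Addable l y ∧ res e y = res e x ∧ y.1 < x.1}.ncard = FA.card := by
    rw [hA, Set.ncard_coe_finset]
    exact Finset.card_image_of_injective _ (fun a b h => congrArg Prod.fst h)
  have cardB : {y | Removable l y ∧ res e y = res e x ∧ y.1 < x.1}.ncard = FB.card := by
    rw [hB, Set.ncard_coe_finset]
    exact Finset.card_image_of_injective _ (fun a b h => congrArg Prod.fst h)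
  have eA : (((l.betaSet k).filter fun q =>
        q % e = p % e ∧ p < q ∧ (q + 1) ∉ l.betaSet k).card) = FA.card := by
    rw [hFA]
    exact AuxNAB.filter_betaSet_card l k _
  have eB : (((l.betaSet k).filter fun q =>
        q % e = (p + 1) % e ∧ p < q ∧ 1 ≤ q ∧ (q - 1) ∉ l.betaSet k).card) = FB.card := by
    rw [hFB]
    exact AuxNAB.filter_betaSet_card l k _
  rw [Nnum, cardA, cardB, eA, eB]
end

section
/- Let λ be a partition with ℓ(λ) ≤ k. The number of (e+1)-rim-hook removal sequences needed, i.e., the (e+1)-weight of λ⁺, equals the e-weight of λ. In particular if λ and μ are partitions of n of length ≤ k with the same e-core, then λ⁺ and μ⁺ are partitions of the same number with the same (e+1)-core and the same (e+1)-weight. -/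
open Finset

namespace YPartition

@[ext] lemma ext' {l m : YPartition} (h : ∀ i, l.parts i = m.parts i) : l = m := by
  cases l; cases m; simp only [mk.injEq]; exact funext h

lemma parts_eq_zero {l : YPartition} {i : ℕ} (h : l.length ≤ i) : l.parts i = 0 := by
  obtain ⟨N, hN⟩ := l.eventually_zero
  have : l.length ∈ {N | ∀ i, N ≤ i → l.parts i = 0} := Nat.sInf_mem ⟨N, hN⟩
  exact this i h

lemma lt_length {l : YPartition} {i : ℕ} (h : l.parts i ≠ 0) : i < l.length := by
  by_contra hc
  exact h (parts_eq_zero (not_lt.1 hc))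

lemma length_le_iff {l : YPartition} {N : ℕ} : l.length ≤ N ↔ ∀ i, N ≤ i → l.parts i = 0 := by
  constructor
  · intro h i hi; exact parts_eq_zero (h.trans hi)
  · intro h; exact Nat.sInf_le h

lemma size_eq_sum {l : YPartition} {K : ℕ} (h : l.length ≤ K) :
    l.size = ∑ i ∈ Finset.range K, l.parts i := by
  rw [size]
  apply Finset.sum_subset (Finset.range_subset_range.2 h)
  intro i _ hi
  simp only [Finset.mem_range, not_lt] at hi
  exact parts_eq_zero hi

lemma length_mono {l n : YPartition} (h : ∀ i, l.parts i ≤ n.parts i) : l.length ≤ n.length :=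
  length_le_iff.2 fun i hi => Nat.le_zero.1 ((h i).trans (parts_eq_zero hi).le)

lemma cells_subset_iff {l n : YPartition} : cells l ⊆ cells n ↔ ∀ i, l.parts i ≤ n.parts i := by
  constructor
  · intro h i
    by_contra hc
    push_neg at hc
    have : (i, n.parts i) ∈ cells l := by simpa [cells] using hc
    have := h this
    simp [cells] at this
  · intro h x hx
    exact lt_of_lt_of_le hx (h x.1)

end YPartition

namespace YPartition

/-- A single downward bead move on an `e`-abacus beta-set. -/
def MoveE (e : ℕ) (B B' : Finset ℕ) : Prop :=
  ∃ p, p ∈ B ∧ e ≤ p ∧ p - e ∉ B ∧ B' = insert (p - e) (B.erase p)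

/-- Number of beads on runner `r`. -/
def cnt (e r : ℕ) (B : Finset ℕ) : ℕ := (B.filter fun p => p % e = r).card

/-- Total height of beads. -/
def Hsum (e : ℕ) (B : Finset ℕ) : ℕ := ∑ p ∈ B, p / e

/-- A beta-set is normalized (no bead can move down). -/
def IsNorm (e : ℕ) (B : Finset ℕ) : Prop := ∀ p ∈ B, e ≤ p → p - e ∈ B

lemma MoveE.card {e : ℕ} {B B' : Finset ℕ} (h : MoveE e B B') : B'.card = B.card := by
  obtain ⟨p, hp, hep, hpe, rfl⟩ := h
  have h1 : p - e ∉ B.erase p := fun hc => hpe (Finset.mem_of_mem_erase hc)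
  rw [Finset.card_insert_of_notMem h1, Finset.card_erase_of_mem hp]
  have : 1 ≤ B.card := Finset.card_pos.2 ⟨p, hp⟩
  omega

lemma mod_sub_self {e p : ℕ} (hep : e ≤ p) : (p - e) % e = p % e := by
  conv_rhs => rw [← Nat.sub_add_cancel hep]
  simp [Nat.add_mod]

lemma MoveE.cnt {e r : ℕ} {B B' : Finset ℕ} (h : MoveE e B B') : cnt e r B' = cnt e r B := by
  obtain ⟨p, hp, hep, hpe, rfl⟩ := h
  unfold YPartition.cnt
  rw [Finset.filter_insert, Finset.filter_erase]
  have hres : (p - e) % e = p % e := mod_sub_self hep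
  by_cases hr : p % e = r
  · rw [if_pos (by rw [hres, hr])]
    have h1 : p - e ∉ (B.filter fun q => q % e = r).erase p := fun hc =>
      hpe (Finset.mem_filter.1 (Finset.mem_of_mem_erase hc)).1
    have h2 : p ∈ B.filter fun q => q % e = r := Finset.mem_filter.2 ⟨hp, hr⟩
    rw [Finset.card_insert_of_notMem h1, Finset.card_erase_of_mem h2]
    have : 1 ≤ (B.filter fun q => q % e = r).card := Finset.card_pos.2 ⟨p, h2⟩
    omega
  · rw [if_neg (by rw [hres]; exact hr)]
    have h1 : p ∉ B.filter fun q => q % e = r := fun hc => hr (Finset.mem_filter.1 hc).2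
    rw [Finset.erase_eq_of_notMem h1]

lemma MoveE.hsum {e : ℕ} {B B' : Finset ℕ} (he : 0 < e) (h : MoveE e B B') :
    Hsum e B = Hsum e B' + 1 := by
  obtain ⟨p, hp, hep, hpe, rfl⟩ := h
  unfold Hsum
  have h1 : p - e ∉ B.erase p := fun hc => hpe (Finset.mem_of_mem_erase hc)
  rw [Finset.sum_insert h1, ← Finset.add_sum_erase _ _ hp]
  have : (p - e) / e + 1 = p / e := by
    rw [← Nat.sub_add_cancel hep, Nat.add_div_right _ he, Nat.sub_add_cancel hep]
  omega

lemma MoveE.sum {e : ℕ} {B B' : Finset ℕ} (h : MoveE e B B') :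
    ∑ p ∈ B, p = e + ∑ p ∈ B', p := by
  obtain ⟨p, hp, hep, hpe, rfl⟩ := h
  have h1 : p - e ∉ B.erase p := fun hc => hpe (Finset.mem_of_mem_erase hc)
  rw [Finset.sum_insert h1, ← Finset.add_sum_erase _ _ hp]
  omega

/-- A downward-closed finset of naturals is an initial segment. -/
lemma dcl_mem {S : Finset ℕ} (h : ∀ x ∈ S, ∀ y, y ≤ x → y ∈ S) {m : ℕ} :
    m ∈ S ↔ m < S.card := by
  constructor
  · intro hm
    have : Finset.range (m + 1) ⊆ S := fun y hy =>
      h m hm y (Nat.lt_succ_iff.1 (Finset.mem_range.1 hy))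
    have := Finset.card_le_card this
    simpa using this
  · intro hm
    by_contra hc
    have : S ⊆ Finset.range m := by
      intro x hx
      rw [Finset.mem_range]
      by_contra hx'
      exact hc (h x hx m (not_lt.1 hx'))
    have := Finset.card_le_card this
    simp at this
    omega

lemma IsNorm.mul_add_mem {e : ℕ} (he : 0 < e) {B : Finset ℕ} (h : IsNorm e B) {q : ℕ}
    (hq : q ∈ B) : ∀ y, y ≤ q / e → y * e + q % e ∈ B := by
  have key : ∀ t, t ≤ q / e → (q / e - t) * e + q % e ∈ B := by
    intro t
    induction t with
    | zero =>
      intro _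
      rw [Nat.sub_zero, Nat.div_add_mod']
      exact hq
    | succ t ih =>
      intro ht
      have h1 := ih (by omega)
      have h2 : e ≤ (q / e - t) * e + q % e := by
        have h5 : 1 ≤ q / e - t := by omega
        calc e = 1 * e := (one_mul e).symm
        _ ≤ (q / e - t) * e := Nat.mul_le_mul_right e h5
        _ ≤ _ := Nat.le_add_right _ _
      have h3 := h _ h1 h2
      have heq : (q / e - t) * e + q % e - e = (q / e - (t + 1)) * e + q % e := by
        rw [show q / e - t = (q / e - (t + 1)) + 1 by omega, add_mul, one_mul]
        omega
      rwa [heq] at h3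
  intro y hy
  have := key (q / e - y) (by omega)
  rwa [show q / e - (q / e - y) = y by omega] at this

lemma mul_add_div_mod {e y r : ℕ} (he : 0 < e) (hr : r < e) :
    (y * e + r) / e = y ∧ (y * e + r) % e = r := by
  constructor
  · rw [mul_comm y e, Nat.mul_add_div he, Nat.div_eq_of_lt hr, add_zero]
  · rw [mul_comm y e, Nat.mul_add_mod, Nat.mod_eq_of_lt hr]

lemma IsNorm.mem_iff {e : ℕ} {B : Finset ℕ} (he : 0 < e) (h : IsNorm e B) (p : ℕ) :
    p ∈ B ↔ p / e < cnt e (p % e) B := by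
  set F := B.filter fun q => q % e = p % e with hF
  have hmem : ∀ y, y * e + p % e ∈ F ↔ y * e + p % e ∈ B := by
    intro y
    simp only [hF, Finset.mem_filter, and_iff_left_iff_imp]
    intro _
    exact (mul_add_div_mod he (Nat.mod_lt _ he)).2
  have hinj : Set.InjOn (· / e) (F : Set ℕ) := by
    intro x hx y hy hxy
    simp only [hF, Finset.coe_filter, Set.mem_setOf_eq] at hx hy
    simp only at hxy
    calc x = x / e * e + x % e := (Nat.div_add_mod' x e).symm
    _ = y / e * e + y % e := by rw [hxy, hx.2, hy.2]
    _ = y := Nat.div_add_mod' y e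
  have hdcl : ∀ x ∈ F.image (· / e), ∀ y, y ≤ x → y ∈ F.image (· / e) := by
    intro x hx y hy
    obtain ⟨q, hq, rfl⟩ := Finset.mem_image.1 hx
    obtain ⟨hqB, hqr⟩ := Finset.mem_filter.1 hq
    refine Finset.mem_image.2 ⟨y * e + p % e, ?_, (mul_add_div_mod he (Nat.mod_lt _ he)).1⟩
    rw [hmem]
    rw [← hqr]
    exact h.mul_add_mem he hqB y hy
  have hcard : (F.image (· / e)).card = F.card := Finset.card_image_of_injOn hinj
  have hc : cnt e (p % e) B = F.card := rfl
  constructor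
  · intro hp
    have hpF : p ∈ F := Finset.mem_filter.2 ⟨hp, rfl⟩
    have : p / e ∈ F.image (· / e) := Finset.mem_image_of_mem _ hpF
    rw [dcl_mem hdcl, hcard] at this
    omega
  · intro hp
    have : p / e ∈ F.image (· / e) := by
      rw [dcl_mem hdcl, hcard]
      omega
    obtain ⟨q, hq, hqe⟩ := Finset.mem_image.1 this
    have hqr := (Finset.mem_filter.1 hq).2
    have : q = p := by
      calc q = q / e * e + q % e := (Nat.div_add_mod' q e).symm
      _ = p / e * e + p % e := by rw [hqe, hqr]
      _ = p := Nat.div_add_mod' p e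
    subst this
    exact (Finset.mem_filter.1 hq).1

lemma norm_unique {e : ℕ} {B B' : Finset ℕ} (he : 0 < e) (hB : IsNorm e B) (hB' : IsNorm e B')
    (hcnt : ∀ r, cnt e r B = cnt e r B') : B = B' := by
  ext p
  rw [hB.mem_iff he, hB'.mem_iff he, hcnt]

lemma card_filter_mod {e : ℕ} (he : 0 < e) (B : Finset ℕ) (P : ℕ → Prop) [DecidablePred P] :
    (B.filter fun p => P (p % e)).card = ∑ r ∈ (Finset.range e).filter P, cnt e r B := by
  have : (B.filter fun p => P (p % e)) =
      ((Finset.range e).filter P).biUnion fun r => B.filter fun p => p % e = r := by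
    ext p
    simp only [Finset.mem_filter, Finset.mem_biUnion, Finset.mem_range]
    constructor
    · rintro ⟨hp, hP⟩
      exact ⟨p % e, ⟨Nat.mod_lt _ he, hP⟩, hp, rfl⟩
    · rintro ⟨r, ⟨_, hP⟩, hp, hr⟩
      exact ⟨hp, hr ▸ hP⟩
  rw [this, Finset.card_biUnion]
  · rfl
  · intro r _ s _ hrs
    simp only [Finset.disjoint_left, Finset.mem_filter]
    rintro p ⟨_, h1⟩ ⟨_, h2⟩
    exact hrs (h1 ▸ h2)

end YPartition

namespace YPartition

/-- The beta-number function. -/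
def fb (l : YPartition) (k i : ℕ) : ℕ := l.parts i + (k - 1 - i)

lemma fb_lt {l : YPartition} {k i j : ℕ} (hij : i < j) (hj : j < k) :
    l.fb k j < l.fb k i := by
  have h1 : l.parts j ≤ l.parts i := l.antitone hij.le
  have : k - 1 - j < k - 1 - i := by omega
  unfold fb
  omega

lemma fb_add_le {l : YPartition} {k i j : ℕ} (hij : i ≤ j) (hj : j < k) :
    l.fb k j + (j - i) ≤ l.fb k i := by
  have h1 : l.parts j ≤ l.parts i := l.antitone hij
  unfold fb
  omega

lemma mem_betaSet {l : YPartition} {k p : ℕ} :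
    p ∈ l.betaSet k ↔ ∃ i, i < k ∧ l.fb k i = p := by
  simp [betaSet, fb, Finset.mem_image, eq_comm]

lemma fb_mem_betaSet {l : YPartition} {k i : ℕ} (hi : i < k) : l.fb k i ∈ l.betaSet k :=
  mem_betaSet.2 ⟨i, hi, rfl⟩

lemma betaSet_card (l : YPartition) (k : ℕ) : (l.betaSet k).card = k := by
  rw [betaSet, Finset.card_image_of_injOn, Finset.card_range]
  intro i hi j hj hij
  simp only [Finset.coe_range, Set.mem_Iio] at hi hj
  by_contra hne
  rcases Nat.lt_or_ge i j with h | h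
  · exact absurd hij (fb_lt h hj).ne'
  · exact absurd hij (fb_lt (by omega) hi).ne

lemma betaSet_injOn {l m : YPartition} {k : ℕ} (hl : l.length ≤ k) (hm : m.length ≤ k)
    (h : l.betaSet k = m.betaSet k) : l = m := by
  have key : ∀ i < k, l.fb k i = m.fb k i := by
    have hcl := betaSet_card l k
    -- strictly monotone enumeration from below
    set g : Fin k → ℕ := fun j => l.fb k (k - 1 - j.1) with hg
    set g' : Fin k → ℕ := fun j => m.fb k (k - 1 - j.1) with hg'
    have hgmono : StrictMono g := by
      intro a b hab
      exact fb_lt (by omega) (by omega)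
    have hg'mono : StrictMono g' := by
      intro a b hab
      exact fb_lt (by omega) (by omega)
    have hgs : ∀ j, g j ∈ l.betaSet k := fun j => fb_mem_betaSet (by omega)
    have hg's : ∀ j, g' j ∈ l.betaSet k := fun j => h ▸ fb_mem_betaSet (by omega)
    have e1 := Finset.orderEmbOfFin_unique hcl hgs hgmono
    have e2 := Finset.orderEmbOfFin_unique hcl hg's hg'mono
    intro i hi
    have : g ⟨k - 1 - i, by omega⟩ = g' ⟨k - 1 - i, by omega⟩ := by rw [e1, e2]
    simpa [hg, hg', show k - 1 - (k - 1 - i) = i by omega] using this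
  ext i
  rcases Nat.lt_or_ge i k with hik | hik
  · have := key i hik
    unfold fb at this
    omega
  · rw [parts_eq_zero (hl.trans hik), parts_eq_zero (hm.trans hik)]

lemma sum_betaSet {l : YPartition} {k : ℕ} (hl : l.length ≤ k) :
    ∑ p ∈ l.betaSet k, p = l.size + ∑ i ∈ Finset.range k, (k - 1 - i) := by
  rw [betaSet, Finset.sum_image, size_eq_sum hl, ← Finset.sum_add_distrib]
  intro i hi j hj hij
  simp only [Finset.coe_range, Set.mem_Iio] at hi hj
  by_contra hne
  rcases Nat.lt_or_ge i j with h | h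
  · exact absurd hij (fb_lt h hj).ne'
  · exact absurd hij (fb_lt (by omega) hi).ne

end YPartition

namespace YPartition

/-- Row-level description of removing an `e`-rim-hook occupying rows `a..r`. -/
structure Rows (e : ℕ) (n l : YPartition) (a r : ℕ) : Prop where
  har : a ≤ r
  lo : ∀ i, i < a → l.parts i = n.parts i
  hi : ∀ i, r < i → l.parts i = n.parts i
  mid : ∀ i, a ≤ i → i < r → l.parts i + 1 = n.parts (i + 1)
  last : l.parts r + e = n.parts a + (r - a)

namespace Rows

variable {e : ℕ} {n l : YPartition} {a r : ℕ}

lemma le (h : Rows e n l a r) (he : 1 ≤ e) : ∀ i, l.parts i ≤ n.parts i := by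
  intro i
  rcases Nat.lt_or_ge i a with hia | hia
  · rw [h.lo i hia]
  rcases Nat.lt_or_ge r i with hri | hri
  · rw [h.hi i hri]
  -- a ≤ i ≤ r
  rcases Nat.lt_or_ge i r with hir | hir
  · have := h.mid i hia hir
    have h2 : n.parts (i + 1) ≤ n.parts i := n.antitone (by omega)
    omega
  · have hir : i = r := by omega
    subst hir
    rcases Nat.eq_or_lt_of_le h.har with heq | hlt
    · subst heq
      have := h.last
      omega
    · have h1 := h.mid (i - 1) (by omega) (by omega)
      have h2 : l.parts i ≤ l.parts (i - 1) := l.antitone (by omega)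
      rw [show i - 1 + 1 = i by omega] at h1
      omega

lemma row_pos (h : Rows e n l a r) (he : 1 ≤ e) : ∀ i, a ≤ i → i ≤ r → l.parts i < n.parts i := by
  intro i hia hir
  rcases Nat.lt_or_ge i r with hlt | hge
  · have := h.mid i hia hlt
    have h2 : n.parts (i + 1) ≤ n.parts i := n.antitone (by omega)
    omega
  · have hir : i = r := by omega
    subst hir
    rcases Nat.eq_or_lt_of_le h.har with heq | hlt
    · subst heq
      have := h.last
      omega
    · have h1 := h.mid (i - 1) (by omega) (by omega)
      have h2 : l.parts i ≤ l.parts (i - 1) := l.antitone (by omega)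
      rw [show i - 1 + 1 = i by omega] at h1
      omega

lemma r_lt_length (h : Rows e n l a r) (he : 1 ≤ e) : r < n.length :=
  lt_length (by have := h.row_pos he r h.har le_rfl; omega)

/-- Telescoping sum over the hook rows. -/
lemma sum_Icc (h : Rows e n l a r) :
    ∑ i ∈ Finset.Icc a r, n.parts i = e + ∑ i ∈ Finset.Icc a r, l.parts i := by
  have key : ∀ d, (∀ i, a ≤ i → i < a + d → l.parts i + 1 = n.parts (i + 1)) →
      ∑ i ∈ Finset.Icc a (a + d), n.parts i
        = n.parts a + d + ∑ i ∈ Finset.Ico a (a + d), l.parts i := by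
    intro d
    induction d with
    | zero => simp
    | succ d ih =>
      intro hmid
      rw [show a + (d + 1) = (a + d) + 1 by omega, ← Finset.Ico_add_one_right_eq_Icc,
        Finset.sum_Ico_succ_top (by omega), Finset.Ico_add_one_right_eq_Icc,
        ih (fun i h1 h2 => hmid i h1 (by omega)),
        show Finset.Icc a (a + d) = Finset.Ico a (a + d + 1) from (Finset.Ico_add_one_right_eq_Icc a (a+d)).symm,
        Finset.sum_Ico_succ_top (by omega) (f := l.parts),
        show (a + d) + 1 = a + d + 1 by omega, ← hmid (a + d) (by omega) (by omega)]
      ring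
  have har := h.har
  have h1 := key (r - a) (fun i h1 h2 => h.mid i h1 (by omega))
  rw [show a + (r - a) = r by omega] at h1
  rw [h1, show Finset.Icc a r = Finset.Ico a (r + 1) from (Finset.Ico_add_one_right_eq_Icc a r).symm,
    Finset.sum_Ico_succ_top (by omega) (f := l.parts)]
  have := h.last
  omega

lemma size_add (h : Rows e n l a r) (he : 1 ≤ e) : n.size = l.size + e := by
  set K := max n.length (r + 1) with hK
  have hIcc : Finset.Icc a r ⊆ Finset.range K := by
    intro i hi
    simp only [Finset.mem_Icc] at hi
    simp only [Finset.mem_range]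
    omega
  have hn : n.size = ∑ i ∈ Finset.range K, n.parts i := size_eq_sum (by omega)
  have hl : l.size = ∑ i ∈ Finset.range K, l.parts i :=
    size_eq_sum ((length_mono (h.le he)).trans (by omega))
  have hsplitn := (Finset.sum_sdiff hIcc (f := n.parts)).symm
  have hsplitl := (Finset.sum_sdiff hIcc (f := l.parts)).symm
  have hout : ∑ i ∈ Finset.range K \ Finset.Icc a r, n.parts i
      = ∑ i ∈ Finset.range K \ Finset.Icc a r, l.parts i := by
    apply Finset.sum_congr rfl
    intro i hi
    simp only [Finset.mem_sdiff, Finset.mem_Icc, not_and, not_le] at hi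
    rcases Nat.lt_or_ge i a with h1 | h1
    · exact (h.lo i h1).symm
    · exact (h.hi i (hi.2 h1)).symm
  rw [hn, hl, hsplitn, hsplitl, hout, h.sum_Icc]
  ring

end Rows

end YPartition

namespace YPartition

namespace Rows

variable {e : ℕ} {n l : YPartition} {a r k : ℕ}

lemma fb_mid (h : Rows e n l a r) (hk : r < k) :
    ∀ i, a ≤ i → i < r → l.fb k i = n.fb k (i + 1) := by
  intro i h1 h2
  have := h.mid i h1 h2
  unfold fb
  omega

lemma fb_last (h : Rows e n l a r) (hk : r < k) : l.fb k r + e = n.fb k a := by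
  have := h.last
  have := h.har
  unfold fb
  omega

lemma betaMove (h : Rows e n l a r) (he : 1 ≤ e) (hk : n.length ≤ k) :
    l.betaSet k = insert (n.fb k a - e) ((n.betaSet k).erase (n.fb k a)) ∧
    MoveE e (n.betaSet k) (l.betaSet k) := by
  have hrk : r < k := lt_of_lt_of_le (h.r_lt_length he) hk
  have hak : a < k := lt_of_le_of_lt h.har hrk
  set p := n.fb k a with hp
  have hlast := h.fb_last hrk
  have hep : e ≤ p := by omega
  have hpe : p - e = l.fb k r := by omega
  have hflo : ∀ i, i < a → l.fb k i = n.fb k i := by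
    intro i hi; have := h.lo i hi; unfold fb; omega
  have hfhi : ∀ i, r < i → l.fb k i = n.fb k i := by
    intro i hi; have := h.hi i hi; unfold fb; omega
  have hnotmem : p - e ∉ n.betaSet k := by
    rw [mem_betaSet]
    rintro ⟨i, hik, hie⟩
    rcases Nat.lt_or_ge r i with hri | hri
    · rw [← hfhi i hri] at hie
      have := fb_lt (l := l) hri hik
      omega
    · have h1 : n.fb k r ≤ n.fb k i := by
        have := fb_add_le (l := n) hri hrk
        omega
      have h2 : l.fb k r < n.fb k r := by
        rcases Nat.eq_or_lt_of_le h.har with heq | hlt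
        · subst heq; omega
        · have := h.fb_mid hrk (r - 1) (by omega) (by omega)
          rw [show r - 1 + 1 = r by omega] at this
          have h3 := fb_lt (l := l) (show r - 1 < r by omega) hrk
          omega
      omega
  have hmain : l.betaSet k = insert (p - e) ((n.betaSet k).erase p) := by
    ext q
    rw [mem_betaSet, Finset.mem_insert, Finset.mem_erase, mem_betaSet]
    constructor
    · rintro ⟨i, hik, rfl⟩
      rcases Nat.lt_or_ge i a with hia | hia
      · refine Or.inr ⟨?_, i, hik, (hflo i hia).symm⟩
        rw [hflo i hia]
        exact (fb_lt hia hak).ne'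
      rcases Nat.lt_or_ge i r with hir | hir
      · refine Or.inr ⟨?_, i + 1, by omega, (h.fb_mid hrk i hia hir).symm⟩
        rw [h.fb_mid hrk i hia hir]
        exact (fb_lt (show a < i + 1 by omega) (by omega)).ne
      rcases Nat.eq_or_lt_of_le hir with heq | hlt
      · left; rw [← heq]; omega
      · refine Or.inr ⟨?_, i, hik, (hfhi i hlt).symm⟩
        rw [hfhi i hlt]
        exact (fb_lt (lt_of_le_of_lt h.har hlt) hik).ne
    · rintro (rfl | ⟨hqp, i, hik, rfl⟩)
      · exact ⟨r, hrk, by omega⟩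
      rcases Nat.lt_or_ge i a with hia | hia
      · exact ⟨i, hik, hflo i hia⟩
      have hia' : a < i := by
        rcases Nat.eq_or_lt_of_le hia with heq | hlt
        · subst heq; exact absurd rfl hqp
        · exact hlt
      rcases Nat.lt_or_ge r i with hir | hir
      · exact ⟨i, hik, hfhi i hir⟩
      · exact ⟨i - 1, by omega, by
          rw [h.fb_mid hrk (i - 1) (by omega) (by omega), show i - 1 + 1 = i by omega]⟩
  exact ⟨hmain, p, fb_mem_betaSet hak, hep, hnotmem, hmain⟩

end Rows

end YPartition

namespace YPartition

lemma exists_of_move {e k : ℕ} {n : YPartition} (hn : n.length ≤ k) (he : 1 ≤ e) {p : ℕ}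
    (hp : p ∈ n.betaSet k) (hep : e ≤ p) (hpe : p - e ∉ n.betaSet k) :
    ∃ (l : YPartition) (a r : ℕ), Rows e n l a r ∧
      l.betaSet k = insert (p - e) ((n.betaSet k).erase p) := by
  obtain ⟨a, hak, hfa⟩ := mem_betaSet.1 hp
  set S := (Finset.range k).filter (fun i => p - e < n.fb k i) with hS
  have hdcl : ∀ x ∈ S, ∀ y, y ≤ x → y ∈ S := by
    intro x hx y hy
    simp only [hS, Finset.mem_filter, Finset.mem_range] at hx ⊢
    refine ⟨by omega, ?_⟩
    have := fb_add_le (l := n) hy hx.1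
    omega
  have haS : a ∈ S := by
    simp only [hS, Finset.mem_filter, Finset.mem_range]
    exact ⟨hak, by omega⟩
  have hcard : 0 < S.card := Finset.card_pos.2 ⟨a, haS⟩
  set r := S.card - 1 with hr
  have hrS : r ∈ S := (dcl_mem hdcl).2 (by omega)
  have har : a ≤ r := by
    have := (dcl_mem hdcl).1 haS
    omega
  have hrk : r < k := by
    have := (Finset.mem_filter.1 hrS).1
    simpa using this
  have hfa' : n.parts a + (k - 1 - a) = p := hfa
  have hfr' : p - e < n.parts r + (k - 1 - r) := (Finset.mem_filter.1 hrS).2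
  have hS' : ∀ j, j ≤ r → p - e < n.parts j + (k - 1 - j) := by
    intro j hj
    exact (Finset.mem_filter.1 (hdcl r hrS j hj)).2
  have hnext' : ∀ i, r < i → i < k → n.parts i + (k - 1 - i) < p - e := by
    intro i hri hik
    have hiS : i ∉ S := by
      intro hc
      have := (dcl_mem hdcl).1 hc
      omega
    have h1 : ¬ (p - e < n.fb k i) := by
      intro hc
      exact hiS (Finset.mem_filter.2 ⟨Finset.mem_range.2 hik, hc⟩)
    have h2 : n.fb k i ≠ p - e := by
      intro hc
      exact hpe (hc ▸ fb_mem_betaSet hik)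
    have h3 : n.fb k i = n.parts i + (k - 1 - i) := rfl
    omega
  have hlow : k - 1 - r ≤ p - e := by
    rcases Nat.lt_or_ge (r + 1) k with h1 | h1
    · have := hnext' (r + 1) (by omega) h1
      omega
    · omega
  have hmid' : ∀ i, a ≤ i → i < r → 1 ≤ n.parts (i + 1) := by
    intro i hia hir
    have h1 := fb_add_le (l := n) (show i + 1 ≤ r by omega) hrk
    have h2 : n.fb k (i + 1) = n.parts (i + 1) + (k - 1 - (i + 1)) := rfl
    have h3 : n.fb k r = n.parts r + (k - 1 - r) := rfl
    omega
  -- the new partition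
  set f : ℕ → ℕ := fun i =>
    if i < a then n.parts i else if i < r then n.parts (i + 1) - 1
    else if i = r then p - e - (k - 1 - r) else n.parts i with hf
  have hfval_lo : ∀ j, j < a → f j = n.parts j := by
    intro j hj; simp only [hf]; rw [if_pos hj]
  have hfval_mid : ∀ j, a ≤ j → j < r → f j = n.parts (j + 1) - 1 := by
    intro j h1 h2; simp only [hf]; rw [if_neg (by omega), if_pos h2]
  have hfval_r : f r = p - e - (k - 1 - r) := by
    simp only [hf]; rw [if_neg (by omega), if_neg (by omega)]; simp
  have hfval_hi : ∀ j, r < j → f j = n.parts j := by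
    intro j hj; simp only [hf]; rw [if_neg (by omega), if_neg (by omega), if_neg (by omega)]
  have hstep : ∀ i, f (i + 1) ≤ f i := by
    intro i
    rcases Nat.lt_or_ge (i + 1) a with h1 | h1
    · rw [hfval_lo _ h1, hfval_lo _ (by omega)]
      exact n.antitone (by omega)
    rcases Nat.eq_or_lt_of_le h1 with h2 | h2
    · -- a = i + 1
      rw [hfval_lo i (by omega)]
      rcases Nat.lt_or_ge (i + 1) r with h3 | h3
      · rw [hfval_mid (i + 1) (by omega) h3]
        have := n.antitone (show i ≤ i + 1 + 1 by omega)
        omega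
      · have h4 : i + 1 = r := by omega
        rw [h4, hfval_r]
        have h5 := hS' i (by omega)
        omega
    -- a ≤ i
    rcases Nat.lt_or_ge i r with h3 | h3
    · rw [hfval_mid i (by omega) h3]
      rcases Nat.lt_or_ge (i + 1) r with h4 | h4
      · rw [hfval_mid (i + 1) (by omega) h4]
        have := n.antitone (show i + 1 ≤ i + 1 + 1 by omega)
        omega
      · have h5 : i + 1 = r := by omega
        rw [h5, hfval_r]
        omega
    rcases Nat.eq_or_lt_of_le h3 with h4 | h4
    · -- i = r
      have h8 : i = r := h4.symm
      subst h8
      rw [hfval_hi (r + 1) (by omega), hfval_r]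
      rcases Nat.lt_or_ge (r + 1) k with h6 | h6
      · have h7 := hnext' (r + 1) (by omega) h6
        omega
      · rw [parts_eq_zero (show n.length ≤ r + 1 by omega)]
        omega
    · rw [hfval_hi (i + 1) (by omega), hfval_hi i h4]
      exact n.antitone (by omega)
  set l : YPartition :=
    ⟨f, antitone_nat_of_succ_le hstep, ⟨max n.length (r + 1), by
      intro i hi
      rw [hfval_hi i (by omega)]
      exact parts_eq_zero (by omega)⟩⟩ with hl
  have hRows : Rows e n l a r := by
    refine ⟨har, ?_, ?_, ?_, ?_⟩
    · intro i hi
      exact hfval_lo i hi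
    · intro i hi
      exact hfval_hi i hi
    · intro i h1 h2
      have := hmid' i h1 h2
      show f i + 1 = n.parts (i + 1)
      rw [hfval_mid i h1 h2]
      omega
    · show f r + e = n.parts a + (r - a)
      rw [hfval_r]
      omega
  obtain ⟨hbeta, -⟩ := hRows.betaMove he hn
  rw [show n.fb k a = p from hfa] at hbeta
  exact ⟨l, a, r, hRows, hbeta⟩

end YPartition

namespace YPartition

/-- The canonical enumeration of a rim hook, going down-left from the head. -/
def walk (l : YPartition) (x0 : ℕ × ℕ) : ℕ → ℕ × ℕ
  | 0 => x0
  | t + 1 =>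
    let c := walk l x0 t
    if c.2 = l.parts c.1 then (c.1 + 1, c.2) else (c.1, c.2 - 1)

lemma diff_eq_coe {n l : YPartition} {a r : ℕ} (hle : ∀ i, l.parts i ≤ n.parts i)
    (hout : ∀ i, ¬(a ≤ i ∧ i ≤ r) → l.parts i = n.parts i) :
    cells n \ cells l =
      ↑((Finset.Icc a r).biUnion fun i => {i} ×ˢ Finset.Ico (l.parts i) (n.parts i)) := by
  ext x
  simp only [cells, Set.mem_diff, Set.mem_setOf_eq, Finset.coe_biUnion, Finset.mem_coe,
    Finset.mem_Icc, Set.mem_iUnion, Finset.mem_product, Finset.mem_singleton, Finset.mem_Ico]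
  constructor
  · rintro ⟨h1, h2⟩
    refine ⟨x.1, ?_, rfl, by omega, h1⟩
    by_contra hc
    have := hout x.1 hc
    omega
  · rintro ⟨i, _, rfl, h1, h2⟩
    exact ⟨h2, by omega⟩

lemma diff_ncard {n l : YPartition} {a r : ℕ} (hle : ∀ i, l.parts i ≤ n.parts i)
    (hout : ∀ i, ¬(a ≤ i ∧ i ≤ r) → l.parts i = n.parts i) :
    (cells n \ cells l).ncard = ∑ i ∈ Finset.Icc a r, (n.parts i - l.parts i) ∧
    (cells n \ cells l).Finite := by
  rw [diff_eq_coe hle hout]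
  refine ⟨?_, Finset.finite_toSet _⟩
  rw [Set.ncard_coe_finset]
  rw [Finset.card_biUnion]
  · apply Finset.sum_congr rfl
    intro i _
    rw [Finset.card_product, Finset.card_singleton, Nat.card_Ico, one_mul]
  · intro i _ j _ hij
    simp only [Finset.disjoint_left, Finset.mem_product, Finset.mem_singleton]
    rintro x ⟨h1, -⟩ ⟨h2, -⟩
    exact hij (h1 ▸ h2)

namespace Rows

variable {e : ℕ} {n l : YPartition} {a r : ℕ}

lemma sum_sub (h : Rows e n l a r) (he : 1 ≤ e) :
    ∑ i ∈ Finset.Icc a r, (n.parts i - l.parts i) = e := by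
  have hle := h.le he
  have h1 : ∑ i ∈ Finset.Icc a r, (n.parts i - l.parts i) + ∑ i ∈ Finset.Icc a r, l.parts i
      = ∑ i ∈ Finset.Icc a r, n.parts i := by
    rw [← Finset.sum_add_distrib]
    apply Finset.sum_congr rfl
    intro i _
    have := hle i
    omega
  have h2 := h.sum_Icc
  omega

lemma hout (h : Rows e n l a r) : ∀ i, ¬(a ≤ i ∧ i ≤ r) → l.parts i = n.parts i := by
  intro i hi
  rcases Nat.lt_or_ge i a with h1 | h1
  · exact h.lo i h1
  · exact h.hi i (by omega)

/-- The weight of a cell: number of remaining hook cells strictly after it. -/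
noncomputable def W (n l : YPartition) (r : ℕ) (x : ℕ × ℕ) : ℕ :=
  (x.2 - l.parts x.1) + ∑ j ∈ Finset.Icc (x.1 + 1) r, (n.parts j - l.parts j)

lemma W_def (n l : YPartition) (r : ℕ) (x : ℕ × ℕ) :
    W n l r x = (x.2 - l.parts x.1) + ∑ j ∈ Finset.Icc (x.1 + 1) r, (n.parts j - l.parts j) :=
  rfl

lemma invariant (h : Rows e n l a r) (he : 1 ≤ e) :
    ∀ t, t < e → a ≤ (walk l (a, n.parts a - 1) t).1 ∧ (walk l (a, n.parts a - 1) t).1 ≤ r ∧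
      l.parts (walk l (a, n.parts a - 1) t).1 ≤ (walk l (a, n.parts a - 1) t).2 ∧
      (walk l (a, n.parts a - 1) t).2 < n.parts (walk l (a, n.parts a - 1) t).1 ∧
      W n l r (walk l (a, n.parts a - 1) t) + t + 1 = e := by
  have hle := h.le he
  have hsube := h.sum_sub he
  intro t
  induction t with
  | zero =>
    intro _
    have har := h.har
    have hpos := h.row_pos he a le_rfl h.har
    rw [show walk l (a, n.parts a - 1) 0 = (a, n.parts a - 1) from rfl]
    rw [W_def]
    simp only
    refine ⟨le_rfl, h.har, by omega, by omega, ?_⟩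
    have hsplit : ∑ i ∈ Finset.Icc a r, (n.parts i - l.parts i) =
        (n.parts a - l.parts a) + ∑ i ∈ Finset.Icc (a + 1) r, (n.parts i - l.parts i) := by
      rw [show Finset.Icc a r = Finset.Ico a (r + 1) from (Finset.Ico_add_one_right_eq_Icc a r).symm,
        Finset.sum_eq_sum_Ico_succ_bot (by omega),
        show Finset.Ico (a + 1) (r + 1) = Finset.Icc (a + 1) r from Finset.Ico_add_one_right_eq_Icc _ r]
    omega
  | succ t ih =>
    intro ht
    obtain ⟨h1, h2, h3, h4, h5⟩ := ih (by omega)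
    set x := walk l (a, n.parts a - 1) t with hx
    rw [W_def] at h5
    have hstep : walk l (a, n.parts a - 1) (t + 1) =
        if x.2 = l.parts x.1 then (x.1 + 1, x.2) else (x.1, x.2 - 1) := rfl
    rw [hstep]
    by_cases hcase : x.2 = l.parts x.1
    · rw [if_pos hcase]
      -- down step; must have x.1 < r
      have hW : (x.2 - l.parts x.1) + ∑ j ∈ Finset.Icc (x.1 + 1) r, (n.parts j - l.parts j)
          = ∑ j ∈ Finset.Icc (x.1 + 1) r, (n.parts j - l.parts j) := by
        omega
      have hlt : x.1 < r := by
        by_contra hc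
        have hxr : x.1 = r := by omega
        rw [hW, hxr] at h5
        simp at h5
        omega
      have hmid := h.mid x.1 h1 hlt
      have hpos := h.row_pos he (x.1 + 1) (by omega) (by omega)
      refine ⟨by omega, by omega, ?_, ?_, ?_⟩
      · simp only
        have := l.antitone (show x.1 ≤ x.1 + 1 by omega)
        omega
      · simp only
        omega
      · rw [W_def]
        simp only
        have hsplit : ∑ i ∈ Finset.Icc (x.1 + 1) r, (n.parts i - l.parts i) =
            (n.parts (x.1 + 1) - l.parts (x.1 + 1)) +
              ∑ i ∈ Finset.Icc (x.1 + 1 + 1) r, (n.parts i - l.parts i) := by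
          rw [show Finset.Icc (x.1 + 1) r = Finset.Ico (x.1 + 1) (r + 1) from
              (Finset.Ico_add_one_right_eq_Icc _ r).symm,
            Finset.sum_eq_sum_Ico_succ_bot (by omega),
            show Finset.Ico (x.1 + 1 + 1) (r + 1) = Finset.Icc (x.1 + 1 + 1) r from
              Finset.Ico_add_one_right_eq_Icc _ r]
        rw [hW] at h5
        omega
    · rw [if_neg hcase]
      refine ⟨h1, h2, by simp only; omega, by simp only; omega, ?_⟩
      rw [W_def]
      simp only
      omega

lemma removeRibbon (h : Rows e n l a r) (he : 1 ≤ e) : RemoveRibbon e n l := by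
  have hle := h.le he
  have hinv := h.invariant he
  set c := walk l (a, n.parts a - 1) with hc
  have hmemD : ∀ t, t < e → c t ∈ cells n \ cells l := by
    intro t ht
    obtain ⟨h1, h2, h3, h4, h5⟩ := hinv t ht
    simp only [cells, Set.mem_diff, Set.mem_setOf_eq]
    omega
  have hWt : ∀ t, t < e → W n l r (c t) + t + 1 = e := fun t ht => (hinv t ht).2.2.2.2
  have hinj : Set.InjOn c (Set.Iio e) := by
    intro t ht t' ht' hct
    simp only [Set.mem_Iio] at ht ht'
    have := hWt t ht
    have := hWt t' ht'
    rw [hct] at *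
    omega
  have himage : c '' Set.Iio e = cells n \ cells l := by
    apply Set.eq_of_subset_of_ncard_le
    · rintro x ⟨t, ht, rfl⟩
      exact hmemD t ht
    · obtain ⟨hncard, hfin⟩ := diff_ncard hle h.hout
      rw [hncard, h.sum_sub he, Set.ncard_image_of_injOn hinj]
      have : (Set.Iio e).ncard = e := by
        rw [show Set.Iio e = ↑(Finset.Iio e) from (Finset.coe_Iio e).symm,
          Set.ncard_coe_finset, Nat.card_Iio]
      omega
    · exact (diff_ncard hle h.hout).2
  refine ⟨cells_subset_iff.2 hle, c, himage.symm, hinj, ?_⟩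
  -- ribbon steps
  intro t ht
  obtain ⟨h1, h2, h3, h4, h5⟩ := hinv t (by omega)
  have hcstep : c (t + 1) =
      if (c t).2 = l.parts (c t).1 then ((c t).1 + 1, (c t).2)
      else ((c t).1, (c t).2 - 1) := rfl
  rw [hcstep]
  by_cases hcase : (c t).2 = l.parts (c t).1
  · left
    rw [if_pos hcase]
  · right
    rw [if_neg hcase]
    refine ⟨?_, rfl⟩
    simp only
    omega

end Rows

end YPartition

namespace YPartition

lemma telescope' (n l : YPartition) (a : ℕ) :
    ∀ d, (∀ i, a ≤ i → i < a + d → l.parts i + 1 = n.parts (i + 1)) →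
    ∑ i ∈ Finset.Icc a (a + d), n.parts i
      = n.parts a + d + ∑ i ∈ Finset.Ico a (a + d), l.parts i := by
  intro d
  induction d with
  | zero => simp
  | succ d ih =>
    intro hmid
    rw [show a + (d + 1) = (a + d) + 1 by omega, ← Finset.Ico_add_one_right_eq_Icc,
      Finset.sum_Ico_succ_top (by omega), Finset.Ico_add_one_right_eq_Icc,
      ih (fun i h1 h2 => hmid i h1 (by omega)),
      show Finset.Icc a (a + d) = Finset.Ico a (a + d + 1) from (Finset.Ico_add_one_right_eq_Icc a (a+d)).symm,
      Finset.sum_Ico_succ_top (by omega) (f := l.parts),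
      show (a + d) + 1 = a + d + 1 by omega, ← hmid (a + d) (by omega) (by omega)]
    ring

lemma removeRibbon_rows {e : ℕ} {n l : YPartition} (he : 1 ≤ e) (h : RemoveRibbon e n l) :
    ∃ a r, Rows e n l a r := by
  obtain ⟨hsub, c, hR, hinj, hsteps⟩ := h
  have hle : ∀ i, l.parts i ≤ n.parts i := cells_subset_iff.1 hsub
  have hmemD : ∀ t, t < e → l.parts (c t).1 ≤ (c t).2 ∧ (c t).2 < n.parts (c t).1 := by
    intro t ht
    have hx : c t ∈ cells n \ cells l := by rw [hR]; exact ⟨t, ht, rfl⟩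
    simp only [cells, Set.mem_diff, Set.mem_setOf_eq] at hx
    omega
  have hDmem : ∀ x : ℕ × ℕ, l.parts x.1 ≤ x.2 → x.2 < n.parts x.1 → ∃ t, t < e ∧ c t = x := by
    intro x h1 h2
    have hx : x ∈ cells n \ cells l := by
      simp only [cells, Set.mem_diff, Set.mem_setOf_eq]
      omega
    rw [hR] at hx
    obtain ⟨t, ht, hct⟩ := hx
    exact ⟨t, ht, hct⟩
  have hmono1 : ∀ t, t + 1 < e → (c t).1 ≤ (c (t+1)).1 ∧ (c (t+1)).1 ≤ (c t).1 + 1 := by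
    intro t ht
    rcases hsteps t ht with h1 | h2
    · rw [h1]; simp
    · omega
  have hmono : ∀ t t', t ≤ t' → t' < e → (c t).1 ≤ (c t').1 := by
    have key : ∀ d t, t + d < e → (c t).1 ≤ (c (t + d)).1 := by
      intro d
      induction d with
      | zero => intro t _; simp
      | succ d ih =>
        intro t ht
        have h1 := ih t (by omega)
        have h2 := hmono1 (t + d) (by omega)
        rw [show t + (d+1) = (t + d) + 1 by omega]
        omega
    intro t t' h1 h2
    have := key (t' - t) t (by omega)
    rwa [show t + (t' - t) = t' by omega] at this
  have hIVT : ∀ v, (c 0).1 ≤ v → v ≤ (c (e-1)).1 → ∃ t, t < e ∧ (c t).1 = v := by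
    have key : ∀ t, t < e → ∀ v, (c 0).1 ≤ v → v ≤ (c t).1 → ∃ s, s ≤ t ∧ (c s).1 = v := by
      intro t
      induction t with
      | zero => intro _ v h1 h2; exact ⟨0, le_rfl, by omega⟩
      | succ t ih =>
        intro ht v h1 h2
        rcases Nat.lt_or_ge ((c t).1) v with h3 | h3
        · have hb := hmono1 t ht
          exact ⟨t+1, le_rfl, by omega⟩
        · obtain ⟨s, hs1, hs2⟩ := ih (by omega) v h1 h3
          exact ⟨s, by omega, hs2⟩
    intro v h1 h2
    obtain ⟨s, hs1, hs2⟩ := key (e-1) (by omega) v h1 h2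
    exact ⟨s, by omega, hs2⟩
  set a := (c 0).1 with ha
  set b := (c (e-1)).1 with hb
  have hab : a ≤ b := hmono 0 (e-1) (by omega) (by omega)
  have hrange : ∀ t, t < e → a ≤ (c t).1 ∧ (c t).1 ≤ b := fun t ht =>
    ⟨hmono 0 t (by omega) ht, hmono t (e-1) (by omega) (by omega)⟩
  have hleft : ∀ t, t + 1 < e → (c (t+1)).1 = (c t).1 → (c t).2 = (c (t+1)).2 + 1 := by
    intro t ht heq
    rcases hsteps t ht with h1 | h2
    · rw [h1] at heq; simp at heq
    · exact h2.1
  have hcol : ∀ d t, t + d < e → (c t).1 = (c (t+d)).1 → (c t).2 = (c (t+d)).2 + d := by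
    intro d
    induction d with
    | zero => intro t _ _; simp
    | succ d ih =>
      intro t ht hrow
      have h1 : (c t).1 ≤ (c (t+d)).1 := hmono t (t+d) (by omega) (by omega)
      have h2 : (c (t+d)).1 ≤ (c (t+d+1)).1 := hmono (t+d) (t+d+1) (by omega) (by omega)
      rw [show t + (d+1) = t + d + 1 by omega] at hrow ⊢
      have h3 : (c t).1 = (c (t+d)).1 := by omega
      have h4 := ih t (by omega) h3
      have h5 := hleft (t+d) (by omega) (by omega)
      omega
  have rowchar : ∀ i, a ≤ i → i ≤ b → ∃ s m, s < e ∧ m < e ∧ (c s).1 = i ∧ (c m).1 = i ∧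
      (∀ t, t < e → (c t).1 = i → s ≤ t ∧ t ≤ m) ∧
      (c s).2 + 1 = n.parts i ∧ (c m).2 = l.parts i := by
    intro i hia hib
    obtain ⟨t0, ht0, ht0r⟩ := hIVT i hia hib
    set T := (Finset.range e).filter (fun t => (c t).1 = i) with hT
    have hTmem : ∀ t, t ∈ T ↔ (t < e ∧ (c t).1 = i) := by
      intro t
      simp [hT]
    have hTne : T.Nonempty := ⟨t0, (hTmem t0).2 ⟨ht0, ht0r⟩⟩
    set s := T.min' hTne with hs
    set m := T.max' hTne with hm
    obtain ⟨hse, hsr⟩ := (hTmem s).1 (T.min'_mem hTne)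
    obtain ⟨hme, hmr⟩ := (hTmem m).1 (T.max'_mem hTne)
    have hbnd : ∀ t, t < e → (c t).1 = i → s ≤ t ∧ t ≤ m := fun t h1 h2 =>
      ⟨T.min'_le t ((hTmem t).2 ⟨h1, h2⟩), T.le_max' t ((hTmem t).2 ⟨h1, h2⟩)⟩
    have hcol2 : ∀ t, t < e → (c t).1 = i → (c m).2 ≤ (c t).2 ∧ (c t).2 ≤ (c s).2 := by
      intro t h1 h2
      obtain ⟨h3, h4⟩ := hbnd t h1 h2
      have h5 := hcol (t - s) s (by omega) (by rw [show s + (t - s) = t by omega]; omega)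
      rw [show s + (t - s) = t by omega] at h5
      have h6 := hcol (m - t) t (by omega) (by rw [show t + (m - t) = m by omega]; omega)
      rw [show t + (m - t) = m by omega] at h6
      omega
    have hmem_s := hmemD s hse
    have hmem_m := hmemD m hme
    rw [hsr] at hmem_s
    rw [hmr] at hmem_m
    have hni : l.parts i < n.parts i := by omega
    obtain ⟨t1, ht1, hct1⟩ := hDmem (i, n.parts i - 1) (by simp; omega) (by simp; omega)
    have he1 := hcol2 t1 ht1 (by rw [hct1])
    rw [hct1] at he1
    simp only at he1
    obtain ⟨t2, ht2, hct2⟩ := hDmem (i, l.parts i) (by simp) (by simp; omega)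
    have he2 := hcol2 t2 ht2 (by rw [hct2])
    rw [hct2] at he2
    simp only at he2
    exact ⟨s, m, hse, hme, hsr, hmr, hbnd, by omega, by omega⟩
  have hmid : ∀ i, a ≤ i → i < b → l.parts i + 1 = n.parts (i + 1) := by
    intro i hia hib
    obtain ⟨s, m, hse, hme, hsr, hmr, hbnd, hcs, hcm⟩ := rowchar i hia (by omega)
    obtain ⟨s', m', hse', hme', hsr', hmr', hbnd', hcs', hcm'⟩ := rowchar (i+1) (by omega) hib
    have h1 : m < m' := by
      by_contra hcon
      have := hmono m' m (by omega) hme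
      omega
    have hm1e : m + 1 < e := by omega
    have h3 : (c (m+1)).1 ≠ i := by
      intro hcon
      have := (hbnd (m+1) hm1e hcon).2
      omega
    have hb2 := hmono1 m hm1e
    have hrow : (c (m+1)).1 = i + 1 := by omega
    have hcoleq : (c (m+1)).2 = (c m).2 := by
      rcases hsteps m hm1e with hx | hx
      · rw [hx]
      · exfalso
        have := hx.2
        omega
    have h4 := hbnd' (m+1) hm1e hrow
    have h5 : m < s' := by
      by_contra hcon
      have := hmono s' m (by omega) hme
      omega
    have h6 : s' = m + 1 := by omega
    rw [h6] at hcs'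
    omega
  have hout : ∀ i, ¬(a ≤ i ∧ i ≤ b) → l.parts i = n.parts i := by
    intro i hi
    by_contra hne
    have h1 : l.parts i < n.parts i := lt_of_le_of_ne (hle i) hne
    obtain ⟨t, ht, hct⟩ := hDmem (i, l.parts i) (by simp) (by simp [h1])
    have h2 := hrange t ht
    rw [hct] at h2
    simp only at h2
    exact hi h2
  have hcard : ∑ i ∈ Finset.Icc a b, (n.parts i - l.parts i) = e := by
    obtain ⟨h1, h2⟩ := diff_ncard hle hout
    rw [hR, Set.ncard_image_of_injOn hinj] at h1
    have h3 : (Set.Iio e).ncard = e := by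
      rw [show Set.Iio e = ↑(Finset.Iio e) from (Finset.coe_Iio e).symm,
        Set.ncard_coe_finset, Nat.card_Iio]
    omega
  have hsum1 : ∑ i ∈ Finset.Icc a b, n.parts i = e + ∑ i ∈ Finset.Icc a b, l.parts i := by
    have h1 : ∑ i ∈ Finset.Icc a b, (n.parts i - l.parts i) + ∑ i ∈ Finset.Icc a b, l.parts i
        = ∑ i ∈ Finset.Icc a b, n.parts i := by
      rw [← Finset.sum_add_distrib]
      apply Finset.sum_congr rfl
      intro i _
      have := hle i
      omega
    omega
  have htel := telescope' n l a (b - a) (fun i h1 h2 => hmid i h1 (by omega))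
  rw [show a + (b - a) = b by omega] at htel
  have hlsplit : ∑ i ∈ Finset.Icc a b, l.parts i
      = ∑ i ∈ Finset.Ico a b, l.parts i + l.parts b := by
    rw [show Finset.Icc a b = Finset.Ico a (b + 1) from (Finset.Ico_add_one_right_eq_Icc a b).symm,
      Finset.sum_Ico_succ_top (by omega)]
  refine ⟨a, b, hab, fun i hi => hout i (by omega), fun i hi => hout i (by omega), hmid, ?_⟩
  omega

end YPartition

namespace YPartition

lemma KE1 {e k : ℕ} {n l : YPartition} (he : 1 ≤ e) (hn : n.length ≤ k)
    (h : RemoveRibbon e n l) :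
    l.length ≤ k ∧ MoveE e (n.betaSet k) (l.betaSet k) ∧ n.size = l.size + e := by
  obtain ⟨a, r, hrows⟩ := removeRibbon_rows he h
  have hle := hrows.le he
  exact ⟨(length_mono hle).trans hn, (hrows.betaMove he hn).2, hrows.size_add he⟩

lemma KE2 {e k : ℕ} {n : YPartition} (hn : n.length ≤ k) (he : 1 ≤ e) {p : ℕ}
    (hp : p ∈ n.betaSet k) (hep : e ≤ p) (hpe : p - e ∉ n.betaSet k) :
    ∃ l : YPartition, RemoveRibbon e n l ∧
      l.betaSet k = insert (p - e) ((n.betaSet k).erase p) := by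
  obtain ⟨l, a, r, hrows, hbeta⟩ := exists_of_move hn he hp hep hpe
  exact ⟨l, hrows.removeRibbon he, hbeta⟩

lemma chain_beta {e k : ℕ} {n κ : YPartition} (he : 1 ≤ e) (hn : n.length ≤ k)
    (h : Relation.ReflTransGen (RemoveRibbon e) n κ) :
    κ.length ≤ k ∧ (∀ r, cnt e r (n.betaSet k) = cnt e r (κ.betaSet k)) ∧
    n.size + e * Hsum e (κ.betaSet k) = κ.size + e * Hsum e (n.betaSet k) := by
  induction h with
  | refl => exact ⟨hn, fun r => rfl, rfl⟩
  | @tail b κ' hab hbc ih =>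
    obtain ⟨h1, h2, h3⟩ := ih
    obtain ⟨h4, h5, h6⟩ := KE1 he h1 hbc
    refine ⟨h4, fun r => (h2 r).trans (MoveE.cnt h5).symm, ?_⟩
    have h7 := MoveE.hsum he h5
    rw [h7, Nat.mul_add, mul_one] at h3
    omega

lemma core_norm {e k : ℕ} {κ : YPartition} (he : 1 ≤ e) (hk : κ.length ≤ k)
    (h : ¬ ∃ m, RemoveRibbon e κ m) : IsNorm e (κ.betaSet k) := by
  intro p hp hep
  by_contra hc
  obtain ⟨l, hl, -⟩ := KE2 hk he hp hep hc
  exact h ⟨l, hl⟩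

lemma core_exists_aux {e k : ℕ} (he : 1 ≤ e) :
    ∀ h (n : YPartition), Hsum e (n.betaSet k) = h → n.length ≤ k →
    ∃ κ, IsECoreOf e κ n := by
  intro h
  induction h using Nat.strong_induction_on with
  | _ h ih =>
    intro n hH hn
    by_cases hnorm : IsNorm e (n.betaSet k)
    · refine ⟨n, Relation.ReflTransGen.refl, ?_⟩
      rintro ⟨m, hm⟩
      obtain ⟨-, hmove, -⟩ := KE1 he hn hm
      obtain ⟨p, hp, hep, hpe, -⟩ := hmove
      exact hpe (hnorm p hp hep)
    · simp only [IsNorm, not_forall] at hnorm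
      obtain ⟨p, hp, hep, hpe⟩ := hnorm
      obtain ⟨l, hrem, hbeta⟩ := KE2 hn he hp hep hpe
      have hmv : MoveE e (n.betaSet k) (l.betaSet k) := ⟨p, hp, hep, hpe, hbeta⟩
      have hH' := MoveE.hsum he hmv
      have hlk : l.length ≤ k := (KE1 he hn hrem).1
      obtain ⟨κ, hκ1, hκ2⟩ := ih (Hsum e (l.betaSet k)) (by omega) l rfl hlk
      exact ⟨κ, Relation.ReflTransGen.head hrem hκ1, hκ2⟩

lemma core_exists {e k : ℕ} (he : 1 ≤ e) (n : YPartition) (hn : n.length ≤ k) :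
    ∃ κ, IsECoreOf e κ n :=
  core_exists_aux he (Hsum e (n.betaSet k)) n rfl hn

lemma core_spec {e k : ℕ} {n κ : YPartition} (he : 1 ≤ e) (hn : n.length ≤ k)
    (h : IsECoreOf e κ n) :
    κ.length ≤ k ∧ IsNorm e (κ.betaSet k) ∧
    (∀ r, cnt e r (n.betaSet k) = cnt e r (κ.betaSet k)) ∧
    n.size + e * Hsum e (κ.betaSet k) = κ.size + e * Hsum e (n.betaSet k) := by
  obtain ⟨hchain, hnorib⟩ := h
  obtain ⟨h1, h2, h3⟩ := chain_beta he hn hchain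
  exact ⟨h1, core_norm he h1 hnorib, h2, h3⟩

/-- Any two cores of partitions with the same beta-statistics coincide. -/
lemma core_unique {e k : ℕ} {n₁ n₂ κ₁ κ₂ : YPartition} (he : 1 ≤ e)
    (hn₁ : n₁.length ≤ k) (hn₂ : n₂.length ≤ k)
    (h₁ : IsECoreOf e κ₁ n₁) (h₂ : IsECoreOf e κ₂ n₂)
    (hcnt : ∀ r, cnt e r (n₁.betaSet k) = cnt e r (n₂.betaSet k)) : κ₁ = κ₂ := by
  obtain ⟨ha1, ha2, ha3, -⟩ := core_spec he hn₁ h₁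
  obtain ⟨hb1, hb2, hb3, -⟩ := core_spec he hn₂ h₂
  have : κ₁.betaSet k = κ₂.betaSet k :=
    norm_unique (by omega) ha2 hb2 (fun r => (ha3 r).symm.trans ((hcnt r).trans (hb3 r)))
  exact betaSet_injOn ha1 hb1 this

end YPartition

namespace YPartition

lemma insRunner_eq {e α p : ℕ} :
    insRunner e α p = p / e * (e+1) + (p % e + (if p % e < α then 0 else 1)) := by
  unfold insRunner
  rw [add_assoc]

lemma insRunner_div_mod {e α : ℕ} (p : ℕ) (he : 1 ≤ e) (hα : α ≤ e) :
    insRunner e α p / (e+1) = p / e ∧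
    insRunner e α p % (e+1) = p % e + (if p % e < α then 0 else 1) := by
  have hr : p % e < e := Nat.mod_lt _ (by omega)
  have hlt : p % e + (if p % e < α then 0 else 1) < e + 1 := by split_ifs <;> omega
  have h := mul_add_div_mod (e := e+1) (y := p/e)
    (r := p % e + (if p % e < α then 0 else 1)) (by omega) hlt
  rw [insRunner_eq]
  exact h

lemma insRunner_inj {e α : ℕ} (he : 1 ≤ e) (hα : α ≤ e) :
    Function.Injective (insRunner e α) := by
  intro p q hpq
  obtain ⟨hd1, hm1⟩ := insRunner_div_mod (e := e) (α := α) p he hα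
  obtain ⟨hd2, hm2⟩ := insRunner_div_mod (e := e) (α := α) q he hα
  rw [hpq] at hd1 hm1
  rw [hd2] at hd1
  rw [hm2] at hm1
  have hpe : p % e < e := Nat.mod_lt _ (by omega)
  have hqe : q % e < e := Nat.mod_lt _ (by omega)
  have hmod : p % e = q % e := by split_ifs at hm1 <;> omega
  calc p = p / e * e + p % e := (Nat.div_add_mod' p e).symm
  _ = q / e * e + q % e := by rw [hd1, hmod]
  _ = q := Nat.div_add_mod' q e

lemma insRunner_val {e α : ℕ} (p : ℕ) (he : 1 ≤ e) :
    insRunner e α p = p + p / e + (if p % e < α then 0 else 1) := by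
  have h1 := Nat.div_add_mod' p e
  have h2 : p / e * (e+1) = p / e * e + p / e := by ring
  unfold insRunner
  omega

lemma insRunner_ge {e α p : ℕ} (he : 1 ≤ e) (hep : e ≤ p) : e + 1 ≤ insRunner e α p := by
  have h1 : 1 ≤ p / e := (Nat.one_le_div_iff (by omega)).2 hep
  rw [insRunner_val p he]
  omega

lemma insRunner_lt_of_lt {e α p : ℕ} (he : 1 ≤ e) (hp : p < e) : insRunner e α p < e + 1 := by
  have hdiv : p / e = 0 := Nat.div_eq_of_lt hp
  have hmod : p % e = p := Nat.mod_eq_of_lt hp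
  rw [insRunner_val p he, hdiv, hmod]
  split_ifs <;> omega

lemma insRunner_sub {e α p : ℕ} (he : 1 ≤ e) (hep : e ≤ p) :
    insRunner e α (p - e) = insRunner e α p - (e + 1) := by
  have hmod := mod_sub_self hep
  have hq : 1 ≤ p / e := (Nat.one_le_div_iff (by omega)).2 hep
  have hdiv : (p - e) / e = p / e - 1 := by
    have h1 := Nat.div_add_mod' p e
    have h3 : (p / e - 1) + 1 = p / e := by omega
    have h2 : (p / e - 1) * e + e = p / e * e := by
      calc (p / e - 1) * e + e = ((p / e - 1) + 1) * e := by ring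
      _ = p / e * e := by rw [h3]
    have h4 : p - e = (p / e - 1) * e + p % e := by omega
    rw [h4, (mul_add_div_mod (by omega) (Nat.mod_lt _ (by omega))).1]
  rw [insRunner_val (p - e) he, insRunner_val p he, hmod, hdiv]
  have h5 : 1 ≤ p / e := hq
  split_ifs <;> omega

lemma insRunner_norm {e α : ℕ} (he : 1 ≤ e) (hα : α ≤ e) {B : Finset ℕ}
    (h : IsNorm e B) : IsNorm (e+1) (B.image (insRunner e α)) := by
  intro q hq hgeq
  obtain ⟨p, hp, rfl⟩ := Finset.mem_image.1 hq
  have hpe : e ≤ p := by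
    by_contra hc
    have := insRunner_lt_of_lt (α := α) he (show p < e by omega)
    omega
  rw [← insRunner_sub he hpe]
  exact Finset.mem_image_of_mem _ (h p hp hpe)

lemma insRunner_move {e α : ℕ} (he : 1 ≤ e) (hα : α ≤ e) {B B' : Finset ℕ}
    (h : MoveE e B B') :
    MoveE (e+1) (B.image (insRunner e α)) (B'.image (insRunner e α)) := by
  obtain ⟨p, hp, hep, hpe, rfl⟩ := h
  refine ⟨insRunner e α p, Finset.mem_image_of_mem _ hp, insRunner_ge he hep, ?_, ?_⟩
  · rw [← insRunner_sub he hep]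
    intro hc
    obtain ⟨q, hq, hqe⟩ := Finset.mem_image.1 hc
    exact hpe ((insRunner_inj he hα hqe) ▸ hq)
  · rw [Finset.image_insert, ← insRunner_sub he hep,
      Finset.image_erase (insRunner_inj he hα)]

lemma insRunner_hsum {e α : ℕ} (he : 1 ≤ e) (hα : α ≤ e) (B : Finset ℕ) :
    Hsum (e+1) (B.image (insRunner e α)) = Hsum e B := by
  unfold Hsum
  rw [Finset.sum_image (fun p _ q _ h => insRunner_inj he hα h)]
  apply Finset.sum_congr rfl
  intro p _
  exact (insRunner_div_mod p he hα).1

lemma insRunner_sum {e α : ℕ} (he : 1 ≤ e) (hα : α ≤ e) (B : Finset ℕ) :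
    ∑ q ∈ B.image (insRunner e α), q
      = ∑ p ∈ B, p + Hsum e B + (B.filter fun p => ¬ p % e < α).card := by
  rw [Finset.sum_image (fun p _ q _ h => insRunner_inj he hα h)]
  unfold Hsum
  rw [Finset.sum_congr rfl (fun p _ => insRunner_val p he), Finset.sum_add_distrib,
    Finset.sum_add_distrib]
  congr 1
  rw [Finset.sum_ite, Finset.sum_const, Finset.sum_const]
  simp

lemma insRunner_cnt_congr {e α : ℕ} (he : 1 ≤ e) (hα : α ≤ e) {B C : Finset ℕ}
    (h : ∀ r, cnt e r B = cnt e r C) (s : ℕ) :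
    cnt (e+1) s (B.image (insRunner e α)) = cnt (e+1) s (C.image (insRunner e α)) := by
  unfold cnt
  have key : ∀ (D : Finset ℕ),
      ((D.image (insRunner e α)).filter fun q => q % (e+1) = s).card
      = ∑ r ∈ (Finset.range e).filter (fun r => r + (if r < α then 0 else 1) = s),
          cnt e r D := by
    intro D
    have h1 : (D.image (insRunner e α)).filter (fun q => q % (e+1) = s)
        = (D.filter fun p => p % e + (if p % e < α then 0 else 1) = s).image
            (insRunner e α) := by
      ext q
      simp only [Finset.mem_filter, Finset.mem_image]
      constructor
      · rintro ⟨⟨p, hp, rfl⟩, h2⟩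
        exact ⟨p, ⟨hp, by rw [← (insRunner_div_mod p he hα).2]; exact h2⟩, rfl⟩
      · rintro ⟨p, ⟨hp, h2⟩, rfl⟩
        exact ⟨⟨p, hp, rfl⟩, by rw [(insRunner_div_mod p he hα).2]; exact h2⟩
    rw [h1, Finset.card_image_of_injective _ (insRunner_inj he hα)]
    exact card_filter_mod (e := e) (P := fun r => r + (if r < α then 0 else 1) = s)
      (by omega) D
  rw [key B, key C]
  exact Finset.sum_congr rfl (fun r _ => h r)

end YPartition


open YPartition
/-- the `(e+1)`-weight of `λ⁺` equals the `e`-weight of `λ`; and if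
`λ, μ` are partitions of `n` of length `≤ k` with the same `e`-core, then `λ⁺`
and `μ⁺` are partitions of the same number with the same `(e+1)`-core and the
same `(e+1)`-weight. -/
theorem plus_weight_eq (e α k n : ℕ) (he : 2 ≤ e) (hα : α ≤ e)
    (l m lp mp : YPartition) (hl : l.length ≤ k) (hm : m.length ≤ k)
    (hln : l.size = n) (hmn : m.size = n)
    (hlp : IsPlus e α k l lp) (hmp : IsPlus e α k m mp)
    (hcore : ∃ κ, IsECoreOf e κ l ∧ IsECoreOf e κ m) :
    (∀ w, EWeight e l w → EWeight (e + 1) lp w) ∧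
    lp.size = mp.size ∧
    (∃ κ, IsECoreOf (e + 1) κ lp ∧ IsECoreOf (e + 1) κ mp) ∧
    (∀ w, EWeight (e + 1) lp w ↔ EWeight (e + 1) mp w) := by
  obtain ⟨hlpk, hlpbeta⟩ := hlp
  obtain ⟨hmpk, hmpbeta⟩ := hmp
  obtain ⟨κ, hκl, hκm⟩ := hcore
  have he1 : 1 ≤ e := by omega
  have he2 : (1:ℕ) ≤ e + 1 := by omega
  obtain ⟨hκk, hκnorm, hκcntl, hκsizel⟩ := core_spec he1 hl hκl
  obtain ⟨-, -, hκcntm, hκsizem⟩ := core_spec he1 hm hκm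
  have hcntlm : ∀ r, cnt e r (l.betaSet k) = cnt e r (m.betaSet k) :=
    fun r => (hκcntl r).trans (hκcntm r).symm
  have hHS : Hsum e (l.betaSet k) = Hsum e (m.betaSet k) := by
    have h1 : e * Hsum e (l.betaSet k) = e * Hsum e (m.betaSet k) := by omega
    exact Nat.eq_of_mul_eq_mul_left (by omega) h1
  have hlpsize : lp.size + ∑ i ∈ Finset.range k, (k - 1 - i)
      = l.size + ∑ i ∈ Finset.range k, (k - 1 - i) + Hsum e (l.betaSet k)
        + ((l.betaSet k).filter fun p => ¬ p % e < α).card := by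
    have h1 := sum_betaSet hlpk
    rw [hlpbeta, insRunner_sum he1 hα, sum_betaSet hl] at h1
    omega
  have hmpsize : mp.size + ∑ i ∈ Finset.range k, (k - 1 - i)
      = m.size + ∑ i ∈ Finset.range k, (k - 1 - i) + Hsum e (m.betaSet k)
        + ((m.betaSet k).filter fun p => ¬ p % e < α).card := by
    have h1 := sum_betaSet hmpk
    rw [hmpbeta, insRunner_sum he1 hα, sum_betaSet hm] at h1
    omega
  have hcge : ((l.betaSet k).filter fun p => ¬ p % e < α).card
      = ((m.betaSet k).filter fun p => ¬ p % e < α).card := by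
    rw [card_filter_mod (e := e) (P := fun r => ¬ r < α) (by omega) _,
      card_filter_mod (e := e) (P := fun r => ¬ r < α) (by omega) _]
    exact Finset.sum_congr rfl fun r _ => hcntlm r
  have hsize_eq : lp.size = mp.size := by omega
  obtain ⟨κ', hκ'⟩ := core_exists (k := k) he2 lp hlpk
  obtain ⟨κ'', hκ''⟩ := core_exists (k := k) he2 mp hmpk
  have hcnt_pm : ∀ s, cnt (e+1) s (lp.betaSet k) = cnt (e+1) s (mp.betaSet k) := by
    intro s
    rw [hlpbeta, hmpbeta]
    exact insRunner_cnt_congr he1 hα hcntlm s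
  have hcceq : κ' = κ'' := core_unique he2 hlpk hmpk hκ' hκ'' hcnt_pm
  obtain ⟨hκ'k, hκ'norm, hκ'cnt, hκ'size⟩ := core_spec he2 hlpk hκ'
  have hchar : ∀ (x : YPartition), x.length ≤ k → ∀ (κx : YPartition), IsECoreOf (e+1) κx x →
      (∀ w, EWeight (e+1) x w ↔ x.size = κx.size + w * (e+1)) := by
    intro x hx κx hκx w
    constructor
    · rintro ⟨κ₁, h₁, hsz₁⟩
      have heq : κ₁ = κx := core_unique he2 hx hx h₁ hκx (fun r => rfl)
      rwa [heq] at hsz₁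
    · intro hsz
      exact ⟨κx, hκx, hsz⟩
  refine ⟨?_, hsize_eq, ⟨κ', hκ', by rw [hcceq]; exact hκ''⟩, ?_⟩
  · intro w hw
    obtain ⟨κ₀, hκ₀, hsz₀⟩ := hw
    obtain ⟨hκ₀k, hκ₀norm, hκ₀cnt, hκ₀size⟩ := core_spec he1 hl hκ₀
    rw [mul_comm] at hsz₀
    have hw1 : e * (w + Hsum e (κ₀.betaSet k)) = e * Hsum e (l.betaSet k) := by
      rw [Nat.mul_add]
      omega
    have hw2 : w + Hsum e (κ₀.betaSet k) = Hsum e (l.betaSet k) :=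
      Nat.eq_of_mul_eq_mul_left (by omega) hw1
    have hid : κ'.betaSet k = (κ₀.betaSet k).image (insRunner e α) := by
      apply norm_unique (show 0 < e + 1 by omega) hκ'norm (insRunner_norm he1 hα hκ₀norm)
      intro s
      have h1 : cnt (e+1) s (lp.betaSet k)
          = cnt (e+1) s ((κ₀.betaSet k).image (insRunner e α)) := by
        rw [hlpbeta]
        exact insRunner_cnt_congr he1 hα hκ₀cnt s
      exact (hκ'cnt s).symm.trans h1
    have hH1 : Hsum (e+1) (lp.betaSet k) = Hsum e (l.betaSet k) := by
      rw [hlpbeta]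
      exact insRunner_hsum he1 hα _
    have hH2 : Hsum (e+1) (κ'.betaSet k) = Hsum e (κ₀.betaSet k) := by
      rw [hid]
      exact insRunner_hsum he1 hα _
    rw [hchar lp hlpk κ' hκ' w]
    have hκ'size2 := hκ'size
    rw [hH1, hH2, ← hw2, Nat.mul_add] at hκ'size2
    rw [mul_comm]
    omega
  · intro w
    rw [hchar lp hlpk κ' hκ' w, hchar mp hmpk κ'' hκ'' w, hsize_eq, hcceq]
end
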